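/- arXiv:1411.4086 — 4 statements merged into one kernel-verified Lean document; each statement's English description precedes it below -/
import Mathlib

section
/- Under the Dawid–Skene model with a decomposable aggregation rule: for every ε ∈ (0,1), if t̄ ≥ sqrt(2·ln((L−1)/ε)), then with probability at least 1 − exp(−N·D(ε ‖ (L−1)·φ(t̄))) the error rate satisfies E_N ≤ ε. -/
open MeasureTheory ProbabilityTheory Real

noncomputable section

namespace CrowdDS

/-- Conditional law of the label `Z i j` (valued in `Fin (L+1)`, `0` = missing) given the
true label `y j = k`, under the general Dawid–Skene model with assignment probabilities `q`
and confusion matrices `p` (where `p i k h` is the probability of reporting label `h.succ`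
given true label `k`). -/
def condLaw {M N L : ℕ} (q : Fin M → Fin N → ℝ) (p : Fin M → Fin L → Fin L → ℝ)
    (i : Fin M) (j : Fin N) (k : Fin L) (h : Fin (L + 1)) : ℝ :=
  if hz : h = 0 then 1 - q i j else q i j * p i k (h.pred hz)

/-- The normalizing quantity `N̄`. -/
def nbar {M L : ℕ} (f : Fin M → Fin L → Fin (L + 1) → ℝ) : ℝ :=
  Real.sqrt (∑ i, (sSup {x : ℝ | ∃ k l h : Fin L, k ≠ l ∧
    x = |f i k h.succ - f i l h.succ|}) ^ 2)

/-- Expected gap `Δ_j(k,l)` of the aggregated scores. -/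
def gap {M N L : ℕ} (f : Fin M → Fin L → Fin (L + 1) → ℝ) (a : Fin L → ℝ)
    (q : Fin M → Fin N → ℝ) (p : Fin M → Fin L → Fin L → ℝ)
    (j : Fin N) (k l : Fin L) : ℝ :=
  (∑ i, ∑ h : Fin L, q i j * (f i k h.succ - f i l h.succ) * p i k h) + (a k - a l)

/-- `τ_j^min`. -/
def tauMin {M N L : ℕ} (f : Fin M → Fin L → Fin (L + 1) → ℝ) (a : Fin L → ℝ)
    (q : Fin M → Fin N → ℝ) (p : Fin M → Fin L → Fin L → ℝ) (j : Fin N) : ℝ :=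
  sInf {x : ℝ | ∃ k l : Fin L, k ≠ l ∧ x = gap f a q p j k l / nbar f}

/-- `τ_j^max`. -/
def tauMax {M N L : ℕ} (f : Fin M → Fin L → Fin (L + 1) → ℝ) (a : Fin L → ℝ)
    (q : Fin M → Fin N → ℝ) (p : Fin M → Fin L → Fin L → ℝ) (j : Fin N) : ℝ :=
  sSup {x : ℝ | ∃ k l : Fin L, k ≠ l ∧ x = gap f a q p j k l / nbar f}

/-- `t̄ = min_j τ_j^min`. -/
def tbar {M N L : ℕ} (f : Fin M → Fin L → Fin (L + 1) → ℝ) (a : Fin L → ℝ)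
    (q : Fin M → Fin N → ℝ) (p : Fin M → Fin L → Fin L → ℝ) : ℝ :=
  sInf {x : ℝ | ∃ j : Fin N, x = tauMin f a q p j}

/-- `t̃ = max_j τ_j^max`. -/
def ttil {M N L : ℕ} (f : Fin M → Fin L → Fin (L + 1) → ℝ) (a : Fin L → ℝ)
    (q : Fin M → Fin N → ℝ) (p : Fin M → Fin L → Fin L → ℝ) : ℝ :=
  sSup {x : ℝ | ∃ j : Fin N, x = tauMax f a q p j}

/-- The constant `c`. -/
def cConst {M L : ℕ} (f : Fin M → Fin L → Fin (L + 1) → ℝ) : ℝ :=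
  (1 / nbar f) * sSup {x : ℝ | ∃ (i : Fin M) (k l h : Fin L), k ≠ l ∧
    x = |f i k h.succ - f i l h.succ|}

/-- The variance proxy `σ²`. -/
def sigmaSq {M N L : ℕ} (f : Fin M → Fin L → Fin (L + 1) → ℝ)
    (q : Fin M → Fin N → ℝ) (p : Fin M → Fin L → Fin L → ℝ) : ℝ :=
  (1 / (nbar f) ^ 2) * sSup {x : ℝ | ∃ (j : Fin N) (k l : Fin L), k ≠ l ∧
    x = ∑ i, ∑ h : Fin L, q i j * (f i k h.succ - f i l h.succ) ^ 2 * p i k h}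

/-- The error rate `E_N`. -/
def errRate {Ω : Type*} {N L : ℕ} (y yhat : Fin N → Ω → Fin L) (ω : Ω) : ℝ :=
  (N : ℝ)⁻¹ * ∑ j, if yhat j ω ≠ y j ω then (1 : ℝ) else 0

/-- `φ(x) = exp(−x²/2)`. -/
def phi (x : ℝ) : ℝ := Real.exp (-x ^ 2 / 2)

/-- Kullback–Leibler divergence between Bernoulli distributions. -/
def klBer (x y : ℝ) : ℝ := x * Real.log (x / y) + (1 - x) * Real.log ((1 - x) / (1 - y))

end CrowdDS

namespace CrowdHelper
open Real Finset

lemma den_pos {p : ℝ} (hp0 : 0 ≤ p) (hp1 : p ≤ 1) (s : ℝ) :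
    0 < 1 - p + p * exp s := by
  rcases lt_or_eq_of_le hp1 with h | h
  · have : 0 ≤ p * exp s := mul_nonneg hp0 (exp_pos s).le
    linarith
  · subst h; simpa using exp_pos s

lemma hoeff_core {p : ℝ} (hp0 : 0 ≤ p) (hp1 : p ≤ 1) (s : ℝ) :
    1 - p + p * exp s ≤ exp (p * s + s ^ 2 / 8) := by
  set d : ℝ → ℝ := fun s => 1 - p + p * exp s with hd_def
  have hd : ∀ s, 0 < d s := fun s => den_pos hp0 hp1 s
  set r : ℝ → ℝ := fun s => p * exp s / d s with hr_def
  have hr0 : ∀ s, 0 ≤ r s := fun s =>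
    div_nonneg (mul_nonneg hp0 (exp_pos s).le) (hd s).le
  have hr1 : ∀ s, r s ≤ 1 := by
    intro s
    rw [hr_def, div_le_one (hd s)]
    have : 0 ≤ 1 - p := by linarith
    simp only [hd_def]; linarith
  -- derivative of d
  have hdd : ∀ s, HasDerivAt d (p * exp s) s := by
    intro s
    exact ((Real.hasDerivAt_exp s).const_mul p).const_add (1 - p)
  -- derivative of r
  have hrd : ∀ s, HasDerivAt r (r s * (1 - r s)) s := by
    intro s
    have h1 : HasDerivAt (fun s => p * exp s) (p * exp s) s :=
      (Real.hasDerivAt_exp s).const_mul p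
    have h2 := h1.div (hdd s) (hd s).ne'
    refine h2.congr_deriv ?_
    rw [hr_def]
    have hds := (hd s).ne'
    simp only [hd_def] at hds ⊢
    field_simp
  set G : ℝ → ℝ := fun s => p * s + s ^ 2 / 8 - log (d s) with hG_def
  set φ : ℝ → ℝ := fun s => p + s / 4 - r s with hφ_def
  have hGd : ∀ s, HasDerivAt G (φ s) s := by
    intro s
    have h1 : HasDerivAt (fun s : ℝ => p * s) p s := by
      simpa using (hasDerivAt_id s).const_mul p
    have h2 : HasDerivAt (fun s : ℝ => s ^ 2 / 8) (s / 4) s := by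
      have := (hasDerivAt_pow 2 s).div_const 8
      exact this.congr_deriv (by norm_num; ring)
    have h3 : HasDerivAt (fun s => log (d s)) (p * exp s / d s) s :=
      (hdd s).log (hd s).ne'
    have := (h1.add h2).sub h3
    exact this
  have hφmono : Monotone φ := by
    apply monotone_of_hasDerivAt_nonneg (f' := fun s => 1 / 4 - r s * (1 - r s))
    · intro s
      have h1 : HasDerivAt (fun s : ℝ => p + s / 4) (1 / 4) s := by
        simpa using ((hasDerivAt_id s).div_const 4).const_add p
      exact h1.sub (hrd s)
    · intro s
      have h0 := hr0 s
      have h1 := hr1 s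
      show (0:ℝ) ≤ 1 / 4 - r s * (1 - r s)
      nlinarith [sq_nonneg (r s - 1 / 2)]
  have hφ0 : φ 0 = 0 := by
    simp only [hφ_def, hr_def, hd_def]
    norm_num
  have hG0 : G 0 = 0 := by
    simp only [hG_def, hd_def]
    norm_num
  have hGnonneg : 0 ≤ G s := by
    rcases le_total 0 s with hs | hs
    · have hmono : MonotoneOn G (Set.Ici 0) := by
        apply monotoneOn_of_hasDerivWithinAt_nonneg (convex_Ici 0)
          (f' := φ)
        · exact fun x _ => (hGd x).continuousAt.continuousWithinAt
        · exact fun x hx => (hGd x).hasDerivWithinAt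
        · intro x hx
          rw [interior_Ici] at hx
          have := hφmono (le_of_lt hx)
          rw [hφ0] at this; exact this
      have := hmono (Set.self_mem_Ici) (Set.mem_Ici.2 hs) hs
      rwa [hG0] at this
    · have hanti : AntitoneOn G (Set.Iic 0) := by
        apply antitoneOn_of_hasDerivWithinAt_nonpos (convex_Iic 0)
          (f' := φ)
        · exact fun x _ => (hGd x).continuousAt.continuousWithinAt
        · exact fun x hx => (hGd x).hasDerivWithinAt
        · intro x hx
          rw [interior_Iic] at hx
          have := hφmono (le_of_lt hx)
          rw [hφ0] at this; exact this
      have := hanti (Set.mem_Iic.2 hs) Set.self_mem_Iic hs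
      rwa [hG0] at this
  have : log (d s) ≤ p * s + s ^ 2 / 8 := by
    simp only [hG_def] at hGnonneg; linarith
  calc d s = exp (log (d s)) := (exp_log (hd s)).symm
    _ ≤ exp (p * s + s ^ 2 / 8) := exp_le_exp.2 this

lemma mgf_bound {S : ℕ} (w g : Fin S → ℝ) (hw0 : ∀ s, 0 ≤ w s)
    (hw1 : ∑ s, w s = 1) (c : ℝ) (hg : ∀ s, |g s| ≤ c) (t : ℝ) :
    ∑ s, w s * exp (t * g s) ≤ exp (t * (∑ s, w s * g s) + t ^ 2 * c ^ 2 / 2) := by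
  rcases Nat.eq_zero_or_pos S with hS | hS
  · subst hS; simp at hw1
  have hc : 0 ≤ c := le_trans (abs_nonneg _) (hg ⟨0, hS⟩)
  rcases eq_or_lt_of_le hc with hc0 | hc0
  · -- c = 0, all g s = 0
    have hg0 : ∀ s, g s = 0 := fun s => abs_eq_zero.1
      (le_antisymm (hc0 ▸ hg s) (abs_nonneg _))
    simp only [hg0, mul_zero, exp_zero, mul_one, Finset.sum_const_zero]
    rw [hw1]
    exact one_le_exp (by positivity)
  · -- chord bound
    set m := ∑ s, w s * g s with hm_def
    have hmle : |m| ≤ c := by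
      calc |m| ≤ ∑ s, |w s * g s| := Finset.abs_sum_le_sum_abs _ _
        _ ≤ ∑ s, w s * c := by
            apply Finset.sum_le_sum
            intro s _
            rw [abs_mul, abs_of_nonneg (hw0 s)]
            exact mul_le_mul_of_nonneg_left (hg s) (hw0 s)
        _ = c := by rw [← Finset.sum_mul, hw1, one_mul]
    have key : ∀ s, exp (t * g s)
        ≤ (c - g s) / (2 * c) * exp (t * (-c)) + (g s + c) / (2 * c) * exp (t * c) := by
      intro s
      have h1 : |g s| ≤ c := hg s
      have ha : (0:ℝ) ≤ (c - g s) / (2 * c) := by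
        apply div_nonneg _ (by linarith)
        have := abs_le.1 h1; linarith
      have hb : (0:ℝ) ≤ (g s + c) / (2 * c) := by
        apply div_nonneg _ (by linarith)
        have := abs_le.1 h1; linarith
      have hab : (c - g s) / (2 * c) + (g s + c) / (2 * c) = 1 := by
        field_simp
        ring
      have := convexOn_exp.2 (Set.mem_univ (t * (-c))) (Set.mem_univ (t * c)) ha hb hab
      simp only [smul_eq_mul] at this
      calc exp (t * g s)
          = exp ((c - g s) / (2 * c) * (t * (-c)) + (g s + c) / (2 * c) * (t * c)) := by
            congr 1
            rw [div_mul_eq_mul_div, div_mul_eq_mul_div, ← add_div,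
              eq_div_iff (by positivity)]
            ring
        _ ≤ _ := this
    calc ∑ s, w s * exp (t * g s)
        ≤ ∑ s, w s * ((c - g s) / (2 * c) * exp (t * (-c)) + (g s + c) / (2 * c) * exp (t * c)) :=
          Finset.sum_le_sum fun s _ => mul_le_mul_of_nonneg_left (key s) (hw0 s)
      _ = (c - m) / (2 * c) * exp (t * (-c)) + (m + c) / (2 * c) * exp (t * c) := by
          rw [hm_def]
          rw [Finset.sum_congr rfl (fun s _ => by ring :
            ∀ s ∈ univ, w s * ((c - g s) / (2 * c) * exp (t * (-c)) + (g s + c) / (2 * c) * exp (t * c))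
              = (w s * c - w s * g s) / (2 * c) * exp (t * (-c))
                + (w s * g s + w s * c) / (2 * c) * exp (t * c))]
          rw [Finset.sum_add_distrib, ← Finset.sum_mul, ← Finset.sum_mul]
          rw [← Finset.sum_div, ← Finset.sum_div, Finset.sum_sub_distrib, Finset.sum_add_distrib]
          rw [← Finset.sum_mul, hw1, one_mul]
      _ ≤ exp (t * m + t ^ 2 * c ^ 2 / 2) := by
          set p := (m + c) / (2 * c) with hp_def
          have hp0 : 0 ≤ p := by
            apply div_nonneg _ (by linarith)
            have := abs_le.1 hmle; linarith
          have hp1 : p ≤ 1 := by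
            rw [hp_def, div_le_one (by linarith)]
            have := abs_le.1 hmle; linarith
          have h1p : (c - m) / (2 * c) = 1 - p := by
            rw [hp_def]; field_simp; ring
          have hcore := hoeff_core hp0 hp1 (2 * t * c)
          calc (c - m) / (2 * c) * exp (t * (-c)) + (m + c) / (2 * c) * exp (t * c)
              = exp (t * (-c)) * (1 - p + p * exp (2 * t * c)) := by
                rw [h1p, ← hp_def]
                rw [show t * c = t * (-c) + 2 * t * c by ring, exp_add]
                ring
            _ ≤ exp (t * (-c)) * exp (p * (2 * t * c) + (2 * t * c) ^ 2 / 8) :=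
                mul_le_mul_of_nonneg_left hcore (exp_pos _).le
            _ = exp (t * (-c) + p * (2 * t * c) + (2 * t * c) ^ 2 / 8) := by
                rw [← exp_add]; ring_nf
            _ = exp (t * m + t ^ 2 * c ^ 2 / 2) := by
                congr 1
                rw [hp_def]
                field_simp
                ring

lemma chernoff_tail {M S : ℕ} (w g : Fin M → Fin S → ℝ)
    (c : Fin M → ℝ) (hw0 : ∀ i s, 0 ≤ w i s) (hw1 : ∀ i, ∑ s, w i s = 1)
    (hg : ∀ i s, |g i s| ≤ c i) (Δ : ℝ) (hΔ : 0 ≤ Δ) (hV : 0 < ∑ i, c i ^ 2) :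
    ∑ h ∈ Finset.univ.filter
        (fun h : Fin M → Fin S => (∑ i, ∑ s, w i s * g i s) + Δ ≤ ∑ i, g i (h i)),
      ∏ i, w i (h i) ≤ exp (-Δ ^ 2 / (2 * ∑ i, c i ^ 2)) := by
  set V := ∑ i, c i ^ 2 with hV_def
  set t := Δ / V with ht_def
  set m := fun i => ∑ s, w i s * g i s with hm_def
  have ht : 0 ≤ t := div_nonneg hΔ hV.le
  have hprod_nonneg : ∀ h : Fin M → Fin S, (0:ℝ) ≤ ∏ i, w i (h i) :=
    fun h => Finset.prod_nonneg fun i _ => hw0 i (h i)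
  calc ∑ h ∈ Finset.univ.filter
        (fun h : Fin M → Fin S => (∑ i, m i) + Δ ≤ ∑ i, g i (h i)), ∏ i, w i (h i)
      ≤ ∑ h ∈ Finset.univ.filter
        (fun h : Fin M → Fin S => (∑ i, m i) + Δ ≤ ∑ i, g i (h i)),
          (∏ i, w i (h i)) * exp (t * (∑ i, g i (h i) - ((∑ i, m i) + Δ))) := by
        apply Finset.sum_le_sum
        intro h hh
        rw [Finset.mem_filter] at hh
        have h1 : (0:ℝ) ≤ t * (∑ i, g i (h i) - ((∑ i, m i) + Δ)) :=
          mul_nonneg ht (by linarith [hh.2])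
        nlinarith [hprod_nonneg h, one_le_exp h1]
    _ ≤ ∑ h : Fin M → Fin S,
          (∏ i, w i (h i)) * exp (t * (∑ i, g i (h i) - ((∑ i, m i) + Δ))) := by
        apply Finset.sum_le_sum_of_subset_of_nonneg (Finset.filter_subset _ _)
        intro h _ _
        exact mul_nonneg (hprod_nonneg h) (exp_pos _).le
    _ = exp (-(t * ((∑ i, m i) + Δ))) * ∑ h : Fin M → Fin S,
          ∏ i, (w i (h i) * exp (t * g i (h i))) := by
        rw [Finset.mul_sum]
        apply Finset.sum_congr rfl
        intro h _
        rw [mul_sub, exp_sub, Finset.mul_sum]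
        rw [exp_sum]
        rw [Finset.prod_mul_distrib]
        rw [div_eq_mul_inv, ← exp_neg]
        ring
    _ = exp (-(t * ((∑ i, m i) + Δ))) * ∏ i, ∑ s, w i s * exp (t * g i s) := by
        congr 1
        rw [Finset.prod_univ_sum]
        rw [Fintype.piFinset_univ]
    _ ≤ exp (-(t * ((∑ i, m i) + Δ))) * ∏ i, exp (t * m i + t ^ 2 * c i ^ 2 / 2) := by
        apply mul_le_mul_of_nonneg_left _ (exp_pos _).le
        apply Finset.prod_le_prod
        · intro i _
          exact Finset.sum_nonneg fun s _ => mul_nonneg (hw0 i s) (exp_pos _).le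
        · intro i _
          exact mgf_bound (w i) (g i) (hw0 i) (hw1 i) (c i) (hg i) t
    _ = exp (-Δ ^ 2 / (2 * V)) := by
        rw [← exp_sum, ← exp_add]
        congr 1
        rw [Finset.sum_add_distrib, ← Finset.mul_sum]
        have h2 : (∑ x : Fin M, t ^ 2 * c x ^ 2 / 2) = t ^ 2 / 2 * V := by
          rw [hV_def, Finset.mul_sum]
          exact Finset.sum_congr rfl fun x _ => by ring
        rw [h2, ht_def]
        field_simp
        ring

lemma chernoff_count {N : ℕ} (m : Fin N → ℝ) (ρ ε : ℝ)
    (hm0 : ∀ j, 0 ≤ m j) (hmρ : ∀ j, m j ≤ ρ) (hρ0 : 0 < ρ) (hρε : ρ ≤ ε)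
    (hε1 : ε < 1) :
    ∑ b ∈ Finset.univ.filter
        (fun b : Fin N → Bool => (N : ℝ) * ε < ∑ j, (if b j then (1:ℝ) else 0)),
      ∏ j, (if b j then m j else 1 - m j)
      ≤ exp (-(N : ℝ) * (ε * log (ε / ρ) + (1 - ε) * log ((1 - ε) / (1 - ρ)))) := by
  have hε0 : 0 < ε := lt_of_lt_of_le hρ0 hρε
  have hρ1 : ρ < 1 := lt_of_le_of_lt hρε hε1
  have h1ε : 0 < 1 - ε := by linarith
  have h1ρ : 0 < 1 - ρ := by linarith
  set t := log (ε * (1 - ρ) / ((1 - ε) * ρ)) with ht_def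
  have hargpos : 0 < ε * (1 - ρ) / ((1 - ε) * ρ) := by positivity
  have harg1 : 1 ≤ ε * (1 - ρ) / ((1 - ε) * ρ) := by
    rw [le_div_iff₀ (by positivity)]
    nlinarith
  have ht0 : 0 ≤ t := log_nonneg harg1
  have het : exp t = ε * (1 - ρ) / ((1 - ε) * ρ) := exp_log hargpos
  have het1 : 1 ≤ exp t := one_le_exp ht0
  have hind : ∀ b : Fin N → Bool, (0:ℝ) ≤ ∏ j, (if b j then m j else 1 - m j) := by
    intro b
    apply Finset.prod_nonneg
    intro j _
    split_ifs with h
    · exact hm0 j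
    · linarith [hmρ j]
  have key : ∀ j : Fin N, ∀ v : Bool,
      (if v then m j * exp t else 1 - m j) = (if v then m j else 1 - m j) * exp (t * (if v then (1:ℝ) else 0)) := by
    intro j v; cases v <;> simp
  calc ∑ b ∈ Finset.univ.filter
        (fun b : Fin N → Bool => (N : ℝ) * ε < ∑ j, (if b j then (1:ℝ) else 0)),
      ∏ j, (if b j then m j else 1 - m j)
      ≤ ∑ b ∈ Finset.univ.filter
        (fun b : Fin N → Bool => (N : ℝ) * ε < ∑ j, (if b j then (1:ℝ) else 0)),
        (∏ j, (if b j then m j else 1 - m j))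
          * exp (t * ((∑ j, (if b j then (1:ℝ) else 0)) - (N : ℝ) * ε)) := by
        apply Finset.sum_le_sum
        intro b hb
        rw [Finset.mem_filter] at hb
        have h1 : (0:ℝ) ≤ t * ((∑ j, (if b j then (1:ℝ) else 0)) - (N : ℝ) * ε) :=
          mul_nonneg ht0 (by linarith [hb.2])
        nlinarith [hind b, one_le_exp h1]
    _ ≤ ∑ b : Fin N → Bool,
        (∏ j, (if b j then m j else 1 - m j))
          * exp (t * ((∑ j, (if b j then (1:ℝ) else 0)) - (N : ℝ) * ε)) := by
        apply Finset.sum_le_sum_of_subset_of_nonneg (Finset.filter_subset _ _)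
        intro b _ _
        exact mul_nonneg (hind b) (exp_pos _).le
    _ = exp (-(t * ((N : ℝ) * ε))) * ∑ b : Fin N → Bool,
          ∏ j, (if b j then m j * exp t else 1 - m j) := by
        rw [Finset.mul_sum]
        apply Finset.sum_congr rfl
        intro b _
        rw [mul_sub, exp_sub, Finset.mul_sum, exp_sum]
        have : (∏ j, (if b j then m j * exp t else 1 - m j))
            = ∏ j, ((if b j then m j else 1 - m j) * exp (t * (if b j then (1:ℝ) else 0))) := by
          apply Finset.prod_congr rfl
          intro j _
          exact key j (b j)
        rw [this, Finset.prod_mul_distrib]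
        rw [div_eq_mul_inv, ← exp_neg]
        ring
    _ = exp (-(t * ((N : ℝ) * ε))) * ∏ j : Fin N, ((1 - m j) + m j * exp t) := by
        congr 1
        have hps := Fintype.prod_sum (κ := fun _ : Fin N => Bool)
          (f := fun (j : Fin N) (v : Bool) => if v then m j * exp t else 1 - m j)
        rw [← hps]
        apply Finset.prod_congr rfl
        intro j _
        rw [Fintype.sum_bool]
        simp only [if_true, Bool.false_eq_true, if_false]
        ring
    _ ≤ exp (-(t * ((N : ℝ) * ε))) * ∏ j : Fin N, ((1 - ρ) / (1 - ε)) := by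
        apply mul_le_mul_of_nonneg_left _ (exp_pos _).le
        apply Finset.prod_le_prod
        · intro j _
          have := hm0 j; have := hmρ j
          nlinarith
        · intro j _
          have h2 : (1 - m j) + m j * exp t ≤ (1 - ρ) + ρ * exp t := by
            have := hmρ j
            nlinarith
          have h3 : (1 - ρ) + ρ * exp t = (1 - ρ) / (1 - ε) := by
            rw [het]
            field_simp
            ring
          linarith
    _ = exp (-(N : ℝ) * (ε * log (ε / ρ) + (1 - ε) * log ((1 - ε) / (1 - ρ)))) := by
        rw [Finset.prod_const, Finset.card_univ, Fintype.card_fin]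
        rw [show (1 - ρ) / (1 - ε) = exp (log ((1 - ρ) / (1 - ε))) by
          rw [exp_log (by positivity)]]
        rw [← Real.exp_nat_mul, ← exp_add]
        congr 1
        have e1 : log (ε / ρ) = log ε - log ρ := log_div hε0.ne' hρ0.ne'
        have e2 : log ((1 - ε) / (1 - ρ)) = log (1 - ε) - log (1 - ρ) :=
          log_div h1ε.ne' h1ρ.ne'
        have e3 : log ((1 - ρ) / (1 - ε)) = log (1 - ρ) - log (1 - ε) :=
          log_div h1ρ.ne' h1ε.ne'
        have e4 : t = log ε + log (1 - ρ) - (log (1 - ε) + log ρ) := by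
          rw [ht_def, log_div (by positivity) (by positivity),
            log_mul hε0.ne' h1ρ.ne', log_mul h1ε.ne' hρ0.ne']
        rw [e3, e2, e1, e4]
        ring

end CrowdHelper

/-- Under the general Dawid–Skene model with a decomposable aggregation
rule: for every `ε ∈ (0,1)`, if `t̄ ≥ sqrt(2 ln((L−1)/ε))`, then with probability at least
`1 − exp(−N · D(ε ‖ (L−1) φ(t̄)))` the error rate satisfies `E_N ≤ ε`. -/
theorem error_rate_upper_bound_high_prob
    {Ω : Type*} [MeasurableSpace Ω] (μ : Measure Ω) [IsProbabilityMeasure μ]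
    {M N L : ℕ} (hM : 0 < M) (hN : 0 < N) (hL : 2 ≤ L)
    (y : Fin N → Ω → Fin L) (Z : Fin M → Fin N → Ω → Fin (L + 1))
    (hym : ∀ j, Measurable (y j)) (hZm : ∀ i j, Measurable (Z i j))
    (pri : Fin L → ℝ) (q : Fin M → Fin N → ℝ) (p : Fin M → Fin L → Fin L → ℝ)
    (hpri : ∀ k, 0 ≤ pri k) (hq0 : ∀ i j, 0 ≤ q i j) (hq1 : ∀ i j, q i j ≤ 1)
    (hp0 : ∀ i k h, 0 ≤ p i k h) (hp1 : ∀ i k, ∑ h, p i k h = 1)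
    (hprior : ∀ (j : Fin N) (k : Fin L), (μ {ω | y j ω = k}).toReal = pri k)
    (hlaw : ∀ (j : Fin N) (k : Fin L) (h : Fin M → Fin (L + 1)),
      (μ {ω | y j ω = k ∧ ∀ i, Z i j ω = h i}).toReal
        = pri k * ∏ i, CrowdDS.condLaw q p i j k (h i))
    (hindep : iIndepFun (fun j ω => (y j ω, fun i => Z i j ω)) μ)
    (f : Fin M → Fin L → Fin (L + 1) → ℝ) (hf0 : ∀ i k k', f i k 0 = f i k' 0)
    (a : Fin L → ℝ)
    (yhat : Fin N → Ω → Fin L) (hyhatm : ∀ j, Measurable (yhat j))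
    (hyhat : ∀ (j : Fin N) (ω : Ω) (k : Fin L),
      (∑ i, f i k (Z i j ω)) + a k ≤ (∑ i, f i (yhat j ω) (Z i j ω)) + a (yhat j ω))
    {ε : ℝ} (hε0 : 0 < ε) (hε1 : ε < 1)
    (ht : Real.sqrt (2 * Real.log (((L : ℝ) - 1) / ε)) ≤ CrowdDS.tbar f a q p) :
    1 - Real.exp (-(N : ℝ) *
        CrowdDS.klBer ε (((L : ℝ) - 1) * CrowdDS.phi (CrowdDS.tbar f a q p)))
      ≤ (μ {ω | CrowdDS.errRate y yhat ω ≤ ε}).toReal := by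
  classical
  set T := CrowdDS.tbar f a q p with hT_def
  have hL2 : (2:ℝ) ≤ (L:ℝ) := by exact_mod_cast hL
  have hLr : (0:ℝ) < (L:ℝ) - 1 := by linarith
  have hlogpos : 0 < Real.log (((L:ℝ) - 1) / ε) := by
    apply Real.log_pos
    rw [lt_div_iff₀ hε0]
    nlinarith
  have hTpos : 0 < T := lt_of_lt_of_le (Real.sqrt_pos.2 (by linarith)) ht
  have hT2 : 2 * Real.log (((L:ℝ) - 1) / ε) ≤ T ^ 2 := by
    have h1 : Real.sqrt (2 * Real.log (((L:ℝ) - 1) / ε)) ^ 2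
        = 2 * Real.log (((L:ℝ) - 1) / ε) := Real.sq_sqrt (by linarith)
    nlinarith [Real.sqrt_nonneg (2 * Real.log (((L:ℝ) - 1) / ε))]
  set ρ := ((L:ℝ) - 1) * CrowdDS.phi T with hρ_def
  have hφpos : 0 < CrowdDS.phi T := Real.exp_pos _
  have hρ0 : 0 < ρ := mul_pos hLr hφpos
  have hρε : ρ ≤ ε := by
    have h1 : CrowdDS.phi T ≤ ε / ((L:ℝ) - 1) := by
      simp only [CrowdDS.phi]
      have h2 : -T ^ 2 / 2 ≤ -Real.log (((L:ℝ) - 1) / ε) := by linarith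
      calc Real.exp (-T ^ 2 / 2) ≤ Real.exp (-Real.log (((L:ℝ) - 1) / ε)) :=
            Real.exp_le_exp.2 h2
        _ = (((L:ℝ) - 1) / ε)⁻¹ := by rw [Real.exp_neg, Real.exp_log (by positivity)]
        _ = ε / ((L:ℝ) - 1) := by rw [inv_div]
    calc ρ = ((L:ℝ) - 1) * CrowdDS.phi T := hρ_def
      _ ≤ ((L:ℝ) - 1) * (ε / ((L:ℝ) - 1)) := mul_le_mul_of_nonneg_left h1 hLr.le
      _ = ε := by field_simp
  -- the constants `c i`
  set c : Fin M → ℝ := fun i => sSup {x : ℝ | ∃ k l h : Fin L, k ≠ l ∧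
    x = |f i k h.succ - f i l h.succ|} with hc_def
  have hnbar : CrowdDS.nbar f = Real.sqrt (∑ i, c i ^ 2) := rfl
  have hk01 : (⟨0, by omega⟩ : Fin L) ≠ (⟨1, by omega⟩ : Fin L) := by
    simp [Fin.ext_iff]
  have hSfin : ∀ i : Fin M, ({x : ℝ | ∃ k l h : Fin L, k ≠ l ∧
      x = |f i k h.succ - f i l h.succ|}).Finite := by
    intro i
    apply Set.Finite.subset (Set.finite_range
      (fun t : Fin L × Fin L × Fin L => |f i t.1 t.2.2.succ - f i t.2.1 t.2.2.succ|))
    rintro x ⟨k, l, h, _, rfl⟩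
    exact ⟨(k, l, h), rfl⟩
  have hcel : ∀ (i : Fin M) (k l h : Fin L), k ≠ l →
      |f i k h.succ - f i l h.succ| ≤ c i := by
    intro i k l h hkl
    exact le_csSup (hSfin i).bddAbove ⟨k, l, h, hkl, rfl⟩
  have hc0 : ∀ i, 0 ≤ c i := fun i =>
    le_trans (abs_nonneg _) (hcel i _ _ ⟨0, by omega⟩ hk01)
  have hV0 : (0:ℝ) ≤ ∑ i, c i ^ 2 := Finset.sum_nonneg fun i _ => sq_nonneg _
  have hnbarpos : 0 < CrowdDS.nbar f := by
    rcases lt_or_eq_of_le (Real.sqrt_nonneg (∑ i, c i ^ 2)) with h | h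
    · rw [hnbar]; exact h
    · exfalso
      have hzero : CrowdDS.nbar f = 0 := by rw [hnbar, ← h]
      have htau : ∀ j : Fin N, CrowdDS.tauMin f a q p j = 0 := by
        intro j
        have hset : {x : ℝ | ∃ k l : Fin L, k ≠ l ∧
            x = CrowdDS.gap f a q p j k l / CrowdDS.nbar f} = {0} := by
          ext x
          simp only [Set.mem_setOf_eq, Set.mem_singleton_iff]
          constructor
          · rintro ⟨k, l, hkl, rfl⟩
            rw [hzero, div_zero]
          · rintro rfl
            exact ⟨⟨0, by omega⟩, ⟨1, by omega⟩, hk01, by rw [hzero, div_zero]⟩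
        rw [CrowdDS.tauMin, hset, csInf_singleton]
      have htbar0 : T = 0 := by
        rw [hT_def, CrowdDS.tbar]
        have hset : {x : ℝ | ∃ j : Fin N, x = CrowdDS.tauMin f a q p j} = {0} := by
          ext x
          simp only [Set.mem_setOf_eq, Set.mem_singleton_iff]
          constructor
          · rintro ⟨j, rfl⟩; exact htau j
          · rintro rfl; exact ⟨⟨0, hN⟩, (htau _).symm⟩
        rw [hset, csInf_singleton]
      rw [htbar0] at hTpos
      exact lt_irrefl 0 hTpos
  have hVpos : 0 < ∑ i, c i ^ 2 := Real.sqrt_pos.1 (by rw [← hnbar]; exact hnbarpos)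
  have hSq : (∑ i, c i ^ 2) = CrowdDS.nbar f ^ 2 := by
    rw [hnbar, Real.sq_sqrt hV0]
  -- gap lower bound
  have hτbdd : ∀ j : Fin N, BddBelow {x : ℝ | ∃ k l : Fin L, k ≠ l ∧
      x = CrowdDS.gap f a q p j k l / CrowdDS.nbar f} := by
    intro j
    apply Set.Finite.bddBelow
    apply Set.Finite.subset (Set.finite_range
      (fun t : Fin L × Fin L => CrowdDS.gap f a q p j t.1 t.2 / CrowdDS.nbar f))
    rintro x ⟨k, l, _, rfl⟩
    exact ⟨(k, l), rfl⟩
  have htbar_le : ∀ j : Fin N, T ≤ CrowdDS.tauMin f a q p j := by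
    intro j
    rw [hT_def, CrowdDS.tbar]
    apply csInf_le
    · apply Set.Finite.bddBelow
      apply Set.Finite.subset (Set.finite_range (fun j : Fin N => CrowdDS.tauMin f a q p j))
      rintro x ⟨j, rfl⟩
      exact ⟨j, rfl⟩
    · exact ⟨j, rfl⟩
  have hgap : ∀ (j : Fin N) (k l : Fin L), k ≠ l →
      T * CrowdDS.nbar f ≤ CrowdDS.gap f a q p j k l := by
    intro j k l hkl
    have h1 : CrowdDS.tauMin f a q p j ≤ CrowdDS.gap f a q p j k l / CrowdDS.nbar f := by
      rw [CrowdDS.tauMin]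
      exact csInf_le (hτbdd j) ⟨k, l, hkl, rfl⟩
    have h2 := le_trans (htbar_le j) h1
    calc T * CrowdDS.nbar f
        ≤ (CrowdDS.gap f a q p j k l / CrowdDS.nbar f) * CrowdDS.nbar f :=
          mul_le_mul_of_nonneg_right h2 hnbarpos.le
      _ = CrowdDS.gap f a q p j k l := div_mul_cancel₀ _ hnbarpos.ne'
  have hgap0 : ∀ (j : Fin N) (k l : Fin L), k ≠ l → 0 ≤ CrowdDS.gap f a q p j k l :=
    fun j k l hkl => le_trans (by positivity) (hgap j k l hkl)
  -- condLaw facts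
  have hcond0 : ∀ (i : Fin M) (j : Fin N) (k : Fin L),
      CrowdDS.condLaw q p i j k 0 = 1 - q i j := by
    intro i j k
    simp [CrowdDS.condLaw]
  have hconds : ∀ (i : Fin M) (j : Fin N) (k : Fin L) (s : Fin L),
      CrowdDS.condLaw q p i j k s.succ = q i j * p i k s := by
    intro i j k s
    simp only [CrowdDS.condLaw, dif_neg (Fin.succ_ne_zero s), Fin.pred_succ]
  have hw0 : ∀ (i : Fin M) (j : Fin N) (k : Fin L) (s : Fin (L+1)),
      0 ≤ CrowdDS.condLaw q p i j k s := by
    intro i j k s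
    unfold CrowdDS.condLaw
    split
    · linarith [hq1 i j]
    · exact mul_nonneg (hq0 i j) (hp0 i k _)
  have hw1 : ∀ (i : Fin M) (j : Fin N) (k : Fin L),
      ∑ s, CrowdDS.condLaw q p i j k s = 1 := by
    intro i j k
    rw [Fin.sum_univ_succ, hcond0]
    rw [Finset.sum_congr rfl (fun s _ => hconds i j k s), ← Finset.mul_sum, hp1 i k]
    ring
  have hprodnn : ∀ (j : Fin N) (k : Fin L) (h : Fin M → Fin (L+1)),
      (0:ℝ) ≤ ∏ i, CrowdDS.condLaw q p i j k (h i) :=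
    fun j k h => Finset.prod_nonneg fun i _ => hw0 i j k (h i)
  -- the per-pair tail bound
  have hpair : ∀ (j : Fin N) (k l : Fin L), k ≠ l →
      (∑ h ∈ Finset.univ.filter (fun h : Fin M → Fin (L+1) =>
          (∑ i, f i k (h i)) + a k ≤ (∑ i, f i l (h i)) + a l),
        ∏ i, CrowdDS.condLaw q p i j k (h i)) ≤ CrowdDS.phi T := by
    intro j k l hkl
    have hg_abs : ∀ (i : Fin M) (s : Fin (L+1)), |f i l s - f i k s| ≤ c i := by
      intro i s
      induction s using Fin.cases with
      | zero =>
          rw [hf0 i l k, sub_self, abs_zero]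
          exact hc0 i
      | succ s => exact hcel i l k s (Ne.symm hkl)
    have hmean : ∀ i : Fin M,
        (∑ s, CrowdDS.condLaw q p i j k s * (f i l s - f i k s))
          = -(∑ s : Fin L, q i j * (f i k s.succ - f i l s.succ) * p i k s) := by
      intro i
      rw [Fin.sum_univ_succ, hcond0, hf0 i l k, sub_self, mul_zero, zero_add]
      rw [Finset.sum_congr rfl (fun s _ => by rw [hconds i j k s])]
      rw [← Finset.sum_neg_distrib]
      exact Finset.sum_congr rfl fun s _ => by ring
    have hmeansum :
        (∑ i, ∑ s, CrowdDS.condLaw q p i j k s * (f i l s - f i k s))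
          = (a k - a l) - CrowdDS.gap f a q p j k l := by
      rw [Finset.sum_congr rfl (fun i _ => hmean i), CrowdDS.gap]
      rw [Finset.sum_neg_distrib]
      ring
    have htail := CrowdHelper.chernoff_tail
      (fun i s => CrowdDS.condLaw q p i j k s)
      (fun i s => f i l s - f i k s) c
      (fun i s => hw0 i j k s) (fun i => hw1 i j k) (fun i s => hg_abs i s)
      (CrowdDS.gap f a q p j k l) (hgap0 j k l hkl) hVpos
    have hfeq : Finset.univ.filter (fun h : Fin M → Fin (L+1) =>
          (∑ i, f i k (h i)) + a k ≤ (∑ i, f i l (h i)) + a l)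
        = Finset.univ.filter (fun h : Fin M → Fin (L+1) =>
          (∑ i, ∑ s, CrowdDS.condLaw q p i j k s * (f i l s - f i k s))
            + CrowdDS.gap f a q p j k l ≤ ∑ i, (f i l (h i) - f i k (h i))) := by
      apply Finset.filter_congr
      intro h _
      rw [hmeansum, Finset.sum_sub_distrib]
      constructor
      · intro hh; linarith
      · intro hh; linarith
    have hexp : Real.exp (-(CrowdDS.gap f a q p j k l) ^ 2 / (2 * ∑ i, c i ^ 2))
        ≤ CrowdDS.phi T := by
      simp only [CrowdDS.phi]
      apply Real.exp_le_exp.2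
      rw [hSq]
      have hga := hgap j k l hkl
      have h4 : 0 ≤ T * CrowdDS.nbar f := by positivity
      have h3 : (T * CrowdDS.nbar f) ^ 2 ≤ CrowdDS.gap f a q p j k l ^ 2 :=
        pow_le_pow_left₀ h4 hga 2
      rw [div_le_div_iff₀ (by positivity) (by norm_num)]
      nlinarith [h3, sq_nonneg (CrowdDS.nbar f)]
    rw [hfeq]
    exact le_trans htail hexp
  -- value-space and events
  set W : Fin N → Ω → Fin L × (Fin M → Fin (L + 1)) :=
    fun j ω => (y j ω, fun i => Z i j ω) with hW_def
  have hWm : ∀ j, Measurable (W j) :=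
    fun j => (hym j).prodMk (measurable_pi_lambda _ fun i => hZm i j)
  have hmeasV : ∀ s : Set (Fin L × (Fin M → Fin (L + 1))), MeasurableSet s :=
    fun s => (Set.to_countable s).measurableSet
  set bad : Fin N → Set (Fin L × (Fin M → Fin (L + 1))) := fun _ =>
    {v | ∃ l, l ≠ v.1 ∧ (∑ i, f i v.1 (v.2 i)) + a v.1 ≤ (∑ i, f i l (v.2 i)) + a l}
    with hbad_def
  set m : Fin N → ℝ := fun j => (μ (W j ⁻¹' bad j)).toReal with hm_def
  have hm0 : ∀ j, 0 ≤ m j := fun j => ENNReal.toReal_nonneg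
  have hsingle : ∀ (j : Fin N) (k : Fin L) (h : Fin M → Fin (L + 1)),
      (μ (W j ⁻¹' {(k, h)})).toReal = pri k * ∏ i, CrowdDS.condLaw q p i j k (h i) := by
    intro j k h
    rw [← hlaw j k h]
    congr 2
    ext ω
    simp only [hW_def, Set.mem_preimage, Set.mem_singleton_iff, Prod.mk.injEq,
      Set.mem_setOf_eq]
    constructor
    · rintro ⟨h1, h2⟩
      exact ⟨h1, fun i => congrFun h2 i⟩
    · rintro ⟨h1, h2⟩
      exact ⟨h1, funext h2⟩
  have hset_meas : ∀ (j : Fin N) (s : Set (Fin L × (Fin M → Fin (L + 1)))),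
      (μ (W j ⁻¹' s)).toReal = ∑ v ∈ Finset.univ.filter (· ∈ s),
        pri v.1 * ∏ i, CrowdDS.condLaw q p i j v.1 (v.2 i) := by
    intro j s
    have hdecomp : W j ⁻¹' s = ⋃ v ∈ Finset.univ.filter (· ∈ s), W j ⁻¹' {v} := by
      ext ω
      simp only [Set.mem_preimage, Set.mem_iUnion, Finset.mem_filter, Finset.mem_univ,
        true_and, Set.mem_singleton_iff]
      constructor
      · intro hs
        exact ⟨W j ω, hs, rfl⟩
      · rintro ⟨v, hv, rfl⟩
        exact hv
    rw [hdecomp, measure_biUnion_finset ?_ fun v _ => (hWm j) (hmeasV _)]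
    · rw [ENNReal.toReal_sum fun v _ => measure_ne_top μ _]
      exact Finset.sum_congr rfl fun v _ => hsingle j v.1 v.2
    · intro v1 _ v2 _ hne
      exact Disjoint.preimage _ (Set.disjoint_singleton.2 hne)
  have hpri_sum : ∑ k, pri k = 1 := by
    have hone : μ (⋃ k ∈ (Finset.univ : Finset (Fin L)), y ⟨0, hN⟩ ⁻¹' {k}) = 1 := by
      have : (⋃ k ∈ (Finset.univ : Finset (Fin L)), y ⟨0, hN⟩ ⁻¹' {k}) = Set.univ := by
        ext ω
        simp
      rw [this]
      exact measure_univ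
    rw [measure_biUnion_finset ?_ fun k _ => (hym _) (measurableSet_singleton k)] at hone
    · have h2 := congrArg ENNReal.toReal hone
      rw [ENNReal.toReal_sum (fun k _ => measure_ne_top μ _), ENNReal.toReal_one] at h2
      rw [← h2]
      apply Finset.sum_congr rfl
      intro k _
      rw [← hprior ⟨0, hN⟩ k]
      congr 1
    · intro k1 _ k2 _ hne
      exact Disjoint.preimage _ (Set.disjoint_singleton.2 hne)
  -- per-item bound
  have hmle : ∀ j, m j ≤ ρ := by
    intro j
    letI : DecidablePred (· ∈ bad j) := fun v => Classical.propDecidable _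
    have hmj : m j = ∑ v ∈ Finset.univ.filter (· ∈ bad j),
        pri v.1 * ∏ i, CrowdDS.condLaw q p i j v.1 (v.2 i) := by
      rw [hm_def]
      exact hset_meas j (bad j)
    rw [hmj, Finset.sum_filter, Fintype.sum_prod_type]
    have hbound : ∀ k : Fin L,
        (∑ h : Fin M → Fin (L+1), if (k, h) ∈ bad j then
            pri k * ∏ i, CrowdDS.condLaw q p i j k (h i) else 0)
          ≤ pri k * (((L:ℝ) - 1) * CrowdDS.phi T) := by
      intro k
      have step1 : ∀ h : Fin M → Fin (L+1),
          (if (k, h) ∈ bad j then ∏ i, CrowdDS.condLaw q p i j k (h i) else 0)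
          ≤ ∑ l ∈ Finset.univ.erase k,
              (if (∑ i, f i k (h i)) + a k ≤ (∑ i, f i l (h i)) + a l
                then ∏ i, CrowdDS.condLaw q p i j k (h i) else 0) := by
        intro h
        by_cases hb : (k, h) ∈ bad j
        · rw [if_pos hb]
          simp only [hbad_def, Set.mem_setOf_eq] at hb
          obtain ⟨l, hlk, hle⟩ := hb
          have hlmem : l ∈ Finset.univ.erase k :=
            Finset.mem_erase.2 ⟨hlk, Finset.mem_univ l⟩
          have hsingle_le := Finset.single_le_sum
            (f := fun l => if (∑ i, f i k (h i)) + a k ≤ (∑ i, f i l (h i)) + a l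
              then ∏ i, CrowdDS.condLaw q p i j k (h i) else 0)
            (fun l _ => by
              split_ifs
              · exact hprodnn j k h
              · exact le_refl 0) hlmem
          rw [if_pos hle] at hsingle_le
          exact hsingle_le
        · rw [if_neg hb]
          apply Finset.sum_nonneg
          intro l _
          split_ifs
          · exact hprodnn j k h
          · exact le_refl 0
      calc (∑ h : Fin M → Fin (L+1), if (k, h) ∈ bad j then
              pri k * ∏ i, CrowdDS.condLaw q p i j k (h i) else 0)
          = pri k * ∑ h : Fin M → Fin (L+1), (if (k, h) ∈ bad j then
              ∏ i, CrowdDS.condLaw q p i j k (h i) else 0) := by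
            rw [Finset.mul_sum]
            apply Finset.sum_congr rfl
            intro h _
            split_ifs
            · rfl
            · ring
        _ ≤ pri k * ∑ h : Fin M → Fin (L+1), ∑ l ∈ Finset.univ.erase k,
              (if (∑ i, f i k (h i)) + a k ≤ (∑ i, f i l (h i)) + a l
                then ∏ i, CrowdDS.condLaw q p i j k (h i) else 0) :=
            mul_le_mul_of_nonneg_left (Finset.sum_le_sum fun h _ => step1 h) (hpri k)
        _ = pri k * ∑ l ∈ Finset.univ.erase k, ∑ h : Fin M → Fin (L+1),
              (if (∑ i, f i k (h i)) + a k ≤ (∑ i, f i l (h i)) + a l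
                then ∏ i, CrowdDS.condLaw q p i j k (h i) else 0) := by
            rw [Finset.sum_comm]
        _ ≤ pri k * ∑ l ∈ Finset.univ.erase k, CrowdDS.phi T := by
            apply mul_le_mul_of_nonneg_left _ (hpri k)
            apply Finset.sum_le_sum
            intro l hl
            rw [← Finset.sum_filter]
            exact hpair j k l (Ne.symm (Finset.mem_erase.1 hl).1)
        _ = pri k * (((L:ℝ) - 1) * CrowdDS.phi T) := by
            rw [Finset.sum_const, Finset.card_erase_of_mem (Finset.mem_univ k),
              Finset.card_univ, Fintype.card_fin, nsmul_eq_mul]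
            have hcast : ((L - 1 : ℕ) : ℝ) = (L:ℝ) - 1 := by
              rw [Nat.cast_sub (by omega), Nat.cast_one]
            rw [hcast]
    calc (∑ k : Fin L, ∑ h : Fin M → Fin (L+1), if (k, h) ∈ bad j then
            pri (k, h).1 * ∏ i, CrowdDS.condLaw q p i j (k, h).1 ((k, h).2 i) else 0)
        ≤ ∑ k : Fin L, pri k * (((L:ℝ) - 1) * CrowdDS.phi T) :=
          Finset.sum_le_sum fun k _ => hbound k
      _ = ((L:ℝ) - 1) * CrowdDS.phi T := by
          rw [← Finset.sum_mul, hpri_sum, one_mul]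
      _ = ρ := hρ_def.symm
  -- pattern events
  set P : (Fin N → Bool) → Set Ω := fun b =>
    ⋂ j, W j ⁻¹' (if b j then bad j else (bad j)ᶜ) with hP_def
  have hPmeas : ∀ b, MeasurableSet (P b) :=
    fun b => MeasurableSet.iInter fun j => (hWm j) (hmeasV _)
  have hPval : ∀ b, (μ (P b)).toReal = ∏ j, (if b j then m j else 1 - m j) := by
    intro b
    have h := hindep.measure_inter_preimage_eq_mul (S := Finset.univ)
      (sets := fun j => if b j then bad j else (bad j)ᶜ) (fun j _ => hmeasV _)
    have h2 : μ (P b) = ∏ j, μ (W j ⁻¹' (if b j then bad j else (bad j)ᶜ)) := by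
      have heq : P b = ⋂ j ∈ Finset.univ,
          W j ⁻¹' (if b j then bad j else (bad j)ᶜ) := by
        rw [hP_def]
        ext ω
        simp
      rw [heq]
      exact h
    rw [h2, ENNReal.toReal_prod]
    apply Finset.prod_congr rfl
    intro j _
    by_cases hbj : b j
    · rw [if_pos hbj, if_pos hbj, hm_def]
    · rw [if_neg hbj, if_neg hbj]
      rw [Set.preimage_compl, prob_compl_eq_one_sub ((hWm j) (hmeasV _))]
      rw [ENNReal.toReal_sub_of_le prob_le_one ENNReal.one_ne_top, ENNReal.toReal_one]
  set Tset : Finset (Fin N → Bool) := Finset.univ.filter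
    (fun b => (N:ℝ) * ε < ∑ j, (if b j then (1:ℝ) else 0)) with hTset_def
  set U : Set Ω := ⋃ b ∈ Tset, P b with hU_def
  have hUmeas : MeasurableSet U :=
    MeasurableSet.biUnion Tset.countable_toSet fun b _ => hPmeas b
  have hPdisj : (↑Tset : Set (Fin N → Bool)).PairwiseDisjoint P := by
    intro b1 _ b2 _ hne
    obtain ⟨j, hj⟩ := Function.ne_iff.1 hne
    apply Set.disjoint_left.2
    intro ω h1 h2
    rw [hP_def] at h1 h2
    have e1 := Set.mem_iInter.1 h1 j
    have e2 := Set.mem_iInter.1 h2 j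
    rw [Set.mem_preimage] at e1 e2
    cases hb1 : b1 j <;> cases hb2 : b2 j
    · exact hj (by rw [hb1, hb2])
    · rw [hb1] at e1
      rw [hb2] at e2
      simp only [Bool.false_eq_true, if_false, if_true] at e1 e2
      exact e1 e2
    · rw [hb1] at e1
      rw [hb2] at e2
      simp only [Bool.false_eq_true, if_false, if_true] at e1 e2
      exact e2 e1
    · exact hj (by rw [hb1, hb2])
  have hUval : (μ U).toReal = ∑ b ∈ Tset, ∏ j, (if b j then m j else 1 - m j) := by
    rw [hU_def, measure_biUnion_finset hPdisj fun b _ => hPmeas b]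
    rw [ENNReal.toReal_sum fun b _ => measure_ne_top μ _]
    exact Finset.sum_congr rfl fun b _ => hPval b
  have hUle : (μ U).toReal ≤ Real.exp (-(N:ℝ) * CrowdDS.klBer ε ρ) := by
    rw [hUval, CrowdDS.klBer]
    exact CrowdHelper.chernoff_count m ρ ε hm0 hmle hρ0 hρε hε1
  -- the good event
  have hsub : Uᶜ ⊆ {ω | CrowdDS.errRate y yhat ω ≤ ε} := by
    intro ω hω
    set b : Fin N → Bool := fun j => decide (W j ω ∈ bad j) with hb_def
    have hbP : ω ∈ P b := by
      rw [hP_def]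
      apply Set.mem_iInter.2
      intro j
      rw [Set.mem_preimage]
      by_cases hj : W j ω ∈ bad j
      · have hbj : b j = true := decide_eq_true hj
        rw [hbj, if_pos rfl]
        exact hj
      · have hbj : b j = false := decide_eq_false hj
        rw [hbj]
        simp only [Bool.false_eq_true, if_false]
        exact hj
    have hbT : b ∉ Tset := fun hbT => hω (Set.mem_biUnion hbT hbP)
    have hcount : ∑ j, (if b j then (1:ℝ) else 0) ≤ (N:ℝ) * ε := by
      by_contra hc
      push_neg at hc
      exact hbT (Finset.mem_filter.2 ⟨Finset.mem_univ _, hc⟩)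
    have hptw : ∀ j, (if yhat j ω ≠ y j ω then (1:ℝ) else 0)
        ≤ (if b j then (1:ℝ) else 0) := by
      intro j
      by_cases hje : yhat j ω ≠ y j ω
      · rw [if_pos hje]
        have hmem : W j ω ∈ bad j := by
          simp only [hbad_def, Set.mem_setOf_eq]
          exact ⟨yhat j ω, hje, hyhat j ω (y j ω)⟩
        have hbj : b j = true := decide_eq_true hmem
        rw [hbj, if_pos rfl]
      · rw [if_neg hje]
        split_ifs
        · norm_num
        · exact le_refl 0
    show CrowdDS.errRate y yhat ω ≤ ε
    have hNpos : (0:ℝ) < (N:ℝ) := by exact_mod_cast hN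
    rw [CrowdDS.errRate]
    calc (N:ℝ)⁻¹ * ∑ j, (if yhat j ω ≠ y j ω then (1:ℝ) else 0)
        ≤ (N:ℝ)⁻¹ * ∑ j, (if b j then (1:ℝ) else 0) :=
          mul_le_mul_of_nonneg_left (Finset.sum_le_sum fun j _ => hptw j)
            (by positivity)
      _ ≤ (N:ℝ)⁻¹ * ((N:ℝ) * ε) :=
          mul_le_mul_of_nonneg_left hcount (by positivity)
      _ = ε := by field_simp
  -- conclusion
  have h1 : (μ Uᶜ).toReal ≤ (μ {ω | CrowdDS.errRate y yhat ω ≤ ε}).toReal :=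
    ENNReal.toReal_mono (measure_ne_top μ _) (measure_mono hsub)
  have h2 : (μ Uᶜ).toReal = 1 - (μ U).toReal := by
    rw [prob_compl_eq_one_sub hUmeas,
      ENNReal.toReal_sub_of_le prob_le_one ENNReal.one_ne_top, ENNReal.toReal_one]
  linarith
end
end

section
/- Under the Dawid–Skene model with a decomposable aggregation rule: for every ε ∈ (0,1), if t̃ ≤ −sqrt(2·ln(1/(1−ε))), then with probability at least 1 − exp(−N·D(ε ‖ 1 − φ(t̃))) the error rate satisfies E_N ≥ ε. -/
open MeasureTheory ProbabilityTheory Real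

noncomputable section

/-! ### Auxiliary lemmas for the proof -/

namespace CrowdDSAux

/-- Core inequality behind Hoeffding's lemma. -/
lemma hoeff_core {p : ℝ} (hp0 : 0 ≤ p) (hp1 : p ≤ 1) (u : ℝ) :
    1 - p + p * Real.exp u ≤ Real.exp (p * u + u ^ 2 / 8) := by
  set D : ℝ → ℝ := fun x => 1 - p + p * Real.exp x with hDdef
  have hD : ∀ x, 0 < D x := by
    intro x
    rcases eq_or_lt_of_le hp0 with h | h
    · simp [hDdef, ← h]
    · have := mul_pos h (Real.exp_pos x)
      simp only [hDdef]; linarith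
  set h1 : ℝ → ℝ := fun x => p + x / 4 - p * Real.exp x / D x with h1def
  set h : ℝ → ℝ := fun x => p * x + x ^ 2 / 8 - Real.log (D x) with hdef
  have hDer : ∀ x, HasDerivAt h (h1 x) x := by
    intro x
    have hDd : HasDerivAt D (p * Real.exp x) x := by
      exact ((Real.hasDerivAt_exp x).const_mul p).const_add (1 - p)
    have hlog : HasDerivAt (fun x => Real.log (D x)) (p * Real.exp x / D x) x :=
      hDd.log (hD x).ne'
    have h2 : HasDerivAt (fun x : ℝ => p * x + x ^ 2 / 8) (p + x / 4) x := by
      have := (hasDerivAt_id x).const_mul p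
      have hpow := (hasDerivAt_pow 2 x).div_const 8
      exact (this.add hpow).congr_deriv (by norm_num; ring)
    exact h2.sub hlog
  have hDer1 : ∀ x, HasDerivAt h1
      (1 / 4 - (p * Real.exp x * D x - p * Real.exp x * (p * Real.exp x)) / (D x) ^ 2) x := by
    intro x
    have hDd : HasDerivAt D (p * Real.exp x) x := by
      exact ((Real.hasDerivAt_exp x).const_mul p).const_add (1 - p)
    have hn : HasDerivAt (fun x => p * Real.exp x) (p * Real.exp x) x :=
      (Real.hasDerivAt_exp x).const_mul p
    have hq := hn.div hDd (hD x).ne'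
    have hlin : HasDerivAt (fun x : ℝ => p + x / 4) (1 / 4) x := by
      simpa using ((hasDerivAt_id x).div_const 4).const_add p
    exact hlin.sub hq
  have h1nonneg : ∀ x, 0 ≤ 1 / 4 -
      (p * Real.exp x * D x - p * Real.exp x * (p * Real.exp x)) / (D x) ^ 2 := by
    intro x
    have hDx := hD x
    rw [sub_nonneg, div_le_iff₀ (by positivity)]
    have hDeq : D x = 1 - p + p * Real.exp x := rfl
    nlinarith [sq_nonneg (1 - p - p * Real.exp x), Real.exp_pos x]
  have h1mono : Monotone h1 := by
    apply monotone_of_deriv_nonneg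
    · exact fun x => (hDer1 x).differentiableAt
    · intro x
      rw [(hDer1 x).deriv]
      exact h1nonneg x
  have h10 : h1 0 = 0 := by
    simp [h1def, hDdef]
  have hkey : ∀ u, 0 ≤ h u := by
    intro u
    have h0 : h 0 = 0 := by simp [hdef, hDdef]
    rcases le_total 0 u with hu | hu
    · have := monotoneOn_of_deriv_nonneg (convex_Ici 0)
        (Continuous.continuousOn
          ((Differentiable.continuous (fun x => (hDer x).differentiableAt))))
        (fun x _ => ((hDer x).differentiableAt).differentiableWithinAt)
        (fun x hx => by
          rw [(hDer x).deriv]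
          rw [interior_Ici] at hx
          have : (0:ℝ) ≤ h1 x := h10 ▸ h1mono (le_of_lt hx)
          exact this)
        (Set.self_mem_Ici) (Set.mem_Ici.mpr hu) hu
      linarith [h0 ▸ this]
    · have := antitoneOn_of_deriv_nonpos (convex_Iic 0)
        (Continuous.continuousOn
          ((Differentiable.continuous (fun x => (hDer x).differentiableAt))))
        (fun x _ => ((hDer x).differentiableAt).differentiableWithinAt)
        (fun x hx => by
          rw [(hDer x).deriv]
          rw [interior_Iic] at hx
          have : h1 x ≤ 0 := h10 ▸ h1mono (le_of_lt hx)
          exact this)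
        (Set.mem_Iic.mpr hu) (Set.self_mem_Iic) hu
      linarith [h0 ▸ this]
  have := hkey u
  have hlog : Real.log (D u) ≤ p * u + u ^ 2 / 8 := by
    simp only [hdef] at this; linarith
  calc 1 - p + p * Real.exp u = D u := rfl
    _ ≤ Real.exp (p * u + u ^ 2 / 8) := by
        rw [← Real.exp_log (hD u)]
        exact Real.exp_le_exp.mpr hlog

/-- Finite Hoeffding lemma: mgf bound for a finitely supported distribution. -/
lemma hoeff_mgf {ι : Type*} [Fintype ι] [Nonempty ι] (ν g : ι → ℝ)
    (hν0 : ∀ x, 0 ≤ ν x) (hν1 : ∑ x, ν x = 1) (c t : ℝ) (hc : ∀ x, |g x| ≤ c) :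
    ∑ x, ν x * Real.exp (t * g x)
      ≤ Real.exp (t * (∑ x, ν x * g x) + t ^ 2 * c ^ 2 / 2) := by
  have hc0 : 0 ≤ c := le_trans (abs_nonneg _) (hc (Classical.arbitrary ι))
  set m : ℝ := ∑ x, ν x * g x with hm
  have hmabs : |m| ≤ c := by
    calc |m| ≤ ∑ x, |ν x * g x| := Finset.abs_sum_le_sum_abs _ _
      _ ≤ ∑ x, ν x * c := by
          apply Finset.sum_le_sum
          intro x _
          rw [abs_mul, abs_of_nonneg (hν0 x)]
          exact mul_le_mul_of_nonneg_left (hc x) (hν0 x)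
      _ = c := by rw [← Finset.sum_mul, hν1, one_mul]
  rcases eq_or_lt_of_le hc0 with hc0' | hcpos
  · have hg : ∀ x, g x = 0 := fun x => abs_eq_zero.mp
      (le_antisymm (hc0' ▸ hc x) (abs_nonneg _))
    have hm0 : m = 0 := by simp [hm, hg]
    simp [hg, hm0, ← hc0', hν1]
  · have step1 : ∀ x, Real.exp (t * g x) ≤
        ((c - g x) * Real.exp (-(t * c)) + (g x + c) * Real.exp (t * c)) / (2 * c) := by
      intro x
      have hgx1 : g x ≤ c := (abs_le.mp (hc x)).2
      have hgx2 : -c ≤ g x := (abs_le.mp (hc x)).1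
      have θ1 : (0:ℝ) ≤ (c - g x) / (2 * c) := by
        apply div_nonneg (by linarith) (by linarith)
      have θ2 : (0:ℝ) ≤ (g x + c) / (2 * c) := by
        apply div_nonneg (by linarith) (by linarith)
      have θs : (c - g x) / (2 * c) + (g x + c) / (2 * c) = 1 := by
        field_simp; ring
      have hcv := convexOn_exp.2 (Set.mem_univ (-(t * c))) (Set.mem_univ (t * c)) θ1 θ2 θs
      have h2c : (2 * c) ≠ 0 := by positivity
      simp only [smul_eq_mul] at hcv
      have harg : (c - g x) / (2 * c) * (-(t * c)) + (g x + c) / (2 * c) * (t * c)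
          = t * g x := by
        rw [div_mul_eq_mul_div, div_mul_eq_mul_div, ← add_div, div_eq_iff h2c]
        ring
      rw [harg] at hcv
      calc Real.exp (t * g x) ≤ (c - g x) / (2 * c) * Real.exp (-(t * c))
            + (g x + c) / (2 * c) * Real.exp (t * c) := hcv
        _ = ((c - g x) * Real.exp (-(t * c)) + (g x + c) * Real.exp (t * c)) / (2 * c) := by
            ring
    have step2 : ∑ x, ν x * Real.exp (t * g x)
        ≤ ((c - m) * Real.exp (-(t * c)) + (m + c) * Real.exp (t * c)) / (2 * c) := by
      calc ∑ x, ν x * Real.exp (t * g x)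
          ≤ ∑ x, ν x * (((c - g x) * Real.exp (-(t * c)) + (g x + c) * Real.exp (t * c)) / (2 * c)) :=
            Finset.sum_le_sum fun x _ => mul_le_mul_of_nonneg_left (step1 x) (hν0 x)
        _ = ∑ x, ((ν x * c - ν x * g x) * (Real.exp (-(t * c)) / (2 * c))
              + (ν x * g x + ν x * c) * (Real.exp (t * c) / (2 * c))) := by
            apply Finset.sum_congr rfl; intro x _; ring
        _ = (c - m) * Real.exp (-(t * c)) / (2 * c) + (m + c) * Real.exp (t * c) / (2 * c) := by
            rw [Finset.sum_add_distrib, ← Finset.sum_mul, ← Finset.sum_mul,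
              Finset.sum_sub_distrib, Finset.sum_add_distrib, ← Finset.sum_mul, ← hm, hν1]
            ring
        _ = ((c - m) * Real.exp (-(t * c)) + (m + c) * Real.exp (t * c)) / (2 * c) := by
            ring
    set pp : ℝ := (m + c) / (2 * c) with hpp
    have hpp0 : 0 ≤ pp := by
      apply div_nonneg (by linarith [(abs_le.mp hmabs).1]) (by linarith)
    have hpp1 : pp ≤ 1 := by
      rw [hpp, div_le_one (by linarith)]
      linarith [(abs_le.mp hmabs).2]
    have hcore := hoeff_core hpp0 hpp1 (2 * t * c)
    have hmul := mul_le_mul_of_nonneg_right hcore (le_of_lt (Real.exp_pos (-(t * c))))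
    have hEE : Real.exp (2 * t * c) * Real.exp (-(t * c)) = Real.exp (t * c) := by
      rw [← Real.exp_add]; congr 1; ring
    have hL : (1 - pp + pp * Real.exp (2 * t * c)) * Real.exp (-(t * c))
        = (1 - pp) * Real.exp (-(t * c)) + pp * Real.exp (t * c) := by
      rw [← hEE]; ring
    have hR : Real.exp (pp * (2 * t * c) + (2 * t * c) ^ 2 / 8) * Real.exp (-(t * c))
        = Real.exp (t * m + t ^ 2 * c ^ 2 / 2) := by
      rw [← Real.exp_add]
      congr 1
      have : pp * (2 * c) = m + c := by
        rw [hpp]; field_simp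
      linear_combination t * this
    rw [hL, hR] at hmul
    have hfin : ((c - m) * Real.exp (-(t * c)) + (m + c) * Real.exp (t * c)) / (2 * c)
        = (1 - pp) * Real.exp (-(t * c)) + pp * Real.exp (t * c) := by
      rw [hpp]
      field_simp
      ring
    calc ∑ x, ν x * Real.exp (t * g x)
        ≤ ((c - m) * Real.exp (-(t * c)) + (m + c) * Real.exp (t * c)) / (2 * c) := step2
      _ = (1 - pp) * Real.exp (-(t * c)) + pp * Real.exp (t * c) := hfin
      _ ≤ Real.exp (t * m + t ^ 2 * c ^ 2 / 2) := hmul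

/-- Chernoff bound for a finite product distribution. -/
lemma chernoff_prod {Mn : ℕ} {ι : Type*} [Fintype ι] [Nonempty ι]
    (ν g : Fin Mn → ι → ℝ) (C : Fin Mn → ℝ)
    (hν0 : ∀ i x, 0 ≤ ν i x) (hν1 : ∀ i, ∑ x, ν i x = 1)
    (hC : ∀ i x, |g i x| ≤ C i) (A t : ℝ) (ht : 0 ≤ t) :
    ∑ z : Fin Mn → ι, (if 0 ≤ (∑ i, g i (z i)) + A then ∏ i, ν i (z i) else 0)
      ≤ Real.exp (t * ((∑ i, ∑ x, ν i x * g i x) + A)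
          + t ^ 2 * (∑ i, (C i) ^ 2) / 2) := by
  have step0 : ∑ z : Fin Mn → ι, (if 0 ≤ (∑ i, g i (z i)) + A then ∏ i, ν i (z i) else 0)
      ≤ ∑ z : Fin Mn → ι, (∏ i, ν i (z i)) * Real.exp (t * ((∑ i, g i (z i)) + A)) := by
    apply Finset.sum_le_sum
    intro z _
    have hprod : 0 ≤ ∏ i, ν i (z i) := Finset.prod_nonneg fun i _ => hν0 i (z i)
    by_cases hz : 0 ≤ (∑ i, g i (z i)) + A
    · rw [if_pos hz]
      nth_rewrite 1 [← mul_one (∏ i, ν i (z i))]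
      exact mul_le_mul_of_nonneg_left (Real.one_le_exp (mul_nonneg ht hz)) hprod
    · rw [if_neg hz]
      positivity
  have step1 : ∀ z : Fin Mn → ι,
      (∏ i, ν i (z i)) * Real.exp (t * ((∑ i, g i (z i)) + A))
        = Real.exp (t * A) * ∏ i, (ν i (z i) * Real.exp (t * g i (z i))) := by
    intro z
    rw [Finset.prod_mul_distrib]
    have : Real.exp (t * ((∑ i, g i (z i)) + A))
        = Real.exp (t * A) * ∏ i, Real.exp (t * g i (z i)) := by
      rw [← Real.exp_sum, ← Real.exp_add]
      congr 1
      rw [← Finset.mul_sum]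
      ring
    rw [this]; ring
  have step2 : ∑ z : Fin Mn → ι, ∏ i, (ν i (z i) * Real.exp (t * g i (z i)))
      = ∏ i, ∑ x, (ν i x * Real.exp (t * g i x)) := by
    rw [Finset.prod_univ_sum]
    rw [← Fintype.piFinset_univ]
  have step3 : ∏ i, ∑ x, (ν i x * Real.exp (t * g i x))
      ≤ ∏ i : Fin Mn, Real.exp (t * (∑ x, ν i x * g i x) + t ^ 2 * (C i) ^ 2 / 2) := by
    apply Finset.prod_le_prod
    · intro i _
      exact Finset.sum_nonneg fun x _ =>
        mul_nonneg (hν0 i x) (le_of_lt (Real.exp_pos _))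
    · intro i _
      exact hoeff_mgf (ν i) (g i) (hν0 i) (hν1 i) (C i) t (hC i)
  calc ∑ z : Fin Mn → ι, (if 0 ≤ (∑ i, g i (z i)) + A then ∏ i, ν i (z i) else 0)
      ≤ ∑ z : Fin Mn → ι, (∏ i, ν i (z i)) * Real.exp (t * ((∑ i, g i (z i)) + A)) := step0
    _ = Real.exp (t * A) * ∑ z : Fin Mn → ι, ∏ i, (ν i (z i) * Real.exp (t * g i (z i))) := by
        rw [Finset.mul_sum]
        exact Finset.sum_congr rfl fun z _ => step1 z
    _ = Real.exp (t * A) * ∏ i, ∑ x, (ν i x * Real.exp (t * g i x)) := by rw [step2]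
    _ ≤ Real.exp (t * A)
          * ∏ i : Fin Mn, Real.exp (t * (∑ x, ν i x * g i x) + t ^ 2 * (C i) ^ 2 / 2) := by
        apply mul_le_mul_of_nonneg_left step3 (le_of_lt (Real.exp_pos _))
    _ = Real.exp (t * ((∑ i, ∑ x, ν i x * g i x) + A) + t ^ 2 * (∑ i, (C i) ^ 2) / 2) := by
        rw [← Real.exp_sum, ← Real.exp_add]
        congr 1
        rw [Finset.sum_add_distrib, ← Finset.mul_sum]
        rw [show ∑ i : Fin Mn, t ^ 2 * (C i) ^ 2 / 2 = t ^ 2 * (∑ i, (C i) ^ 2) / 2 by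
          rw [Finset.mul_sum, Finset.sum_div]]
        ring

/-- Measure of a preimage under a map to a finite discrete space, as a finite sum. -/
lemma meas_preimage_eq_sum {α : Type*} [Fintype α] [MeasurableSpace α]
    [MeasurableSingletonClass α] {Ω : Type*} [MeasurableSpace Ω] (μ : Measure Ω)
    [IsProbabilityMeasure μ] (W : Ω → α) (hW : Measurable W) (S : Set α) :
    (μ (W ⁻¹' S)).toReal
      = ∑ c : α, (open Classical in if c ∈ S then (μ (W ⁻¹' {c})).toReal else 0) := by
  classical
  have hU : W ⁻¹' S = ⋃ c ∈ S.toFinset, W ⁻¹' {c} := by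
    ext ω
    simp [Set.mem_toFinset, eq_comm]
  rw [hU, measure_biUnion_finset ?hd fun c _ => hW (measurableSet_singleton c)]
  case hd =>
    intro c _ d _ hcd
    exact Set.disjoint_iff_forall_ne.mpr (by
      rintro ω hω ω' hω' rfl
      exact hcd (hω.symm.trans hω'))
  rw [ENNReal.toReal_sum (fun c _ => measure_ne_top μ _)]
  simp only [← Set.mem_toFinset, Finset.sum_ite_mem, Finset.univ_inter]

end CrowdDSAux


set_option maxHeartbeats 2000000 in
/-- Under the general Dawid–Skene model with a decomposable aggregation
rule: for every `ε ∈ (0,1)`, if `t̃ ≤ −sqrt(2 ln(1/(1−ε)))`, then with probability at least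
`1 − exp(−N · D(ε ‖ 1 − φ(t̃)))` the error rate satisfies `E_N ≥ ε`. -/
theorem error_rate_lower_bound_high_prob
    {Ω : Type*} [MeasurableSpace Ω] (μ : Measure Ω) [IsProbabilityMeasure μ]
    {M N L : ℕ} (hM : 0 < M) (hN : 0 < N) (hL : 2 ≤ L)
    (y : Fin N → Ω → Fin L) (Z : Fin M → Fin N → Ω → Fin (L + 1))
    (hym : ∀ j, Measurable (y j)) (hZm : ∀ i j, Measurable (Z i j))
    (pri : Fin L → ℝ) (q : Fin M → Fin N → ℝ) (p : Fin M → Fin L → Fin L → ℝ)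
    (hpri : ∀ k, 0 ≤ pri k) (hq0 : ∀ i j, 0 ≤ q i j) (hq1 : ∀ i j, q i j ≤ 1)
    (hp0 : ∀ i k h, 0 ≤ p i k h) (hp1 : ∀ i k, ∑ h, p i k h = 1)
    (hprior : ∀ (j : Fin N) (k : Fin L), (μ {ω | y j ω = k}).toReal = pri k)
    (hlaw : ∀ (j : Fin N) (k : Fin L) (h : Fin M → Fin (L + 1)),
      (μ {ω | y j ω = k ∧ ∀ i, Z i j ω = h i}).toReal
        = pri k * ∏ i, CrowdDS.condLaw q p i j k (h i))
    (hindep : iIndepFun (fun j ω => (y j ω, fun i => Z i j ω)) μ)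
    (f : Fin M → Fin L → Fin (L + 1) → ℝ) (hf0 : ∀ i k k', f i k 0 = f i k' 0)
    (a : Fin L → ℝ)
    (yhat : Fin N → Ω → Fin L) (hyhatm : ∀ j, Measurable (yhat j))
    (hyhat : ∀ (j : Fin N) (ω : Ω) (k : Fin L),
      (∑ i, f i k (Z i j ω)) + a k ≤ (∑ i, f i (yhat j ω) (Z i j ω)) + a (yhat j ω))
    {ε : ℝ} (hε0 : 0 < ε) (hε1 : ε < 1)
    (ht : CrowdDS.ttil f a q p ≤ -Real.sqrt (2 * Real.log (1 / (1 - ε)))) :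
    1 - Real.exp (-(N : ℝ) *
        CrowdDS.klBer ε (1 - CrowdDS.phi (CrowdDS.ttil f a q p)))
      ≤ (μ {ω | ε ≤ CrowdDS.errRate y yhat ω}).toReal := by
  classical
  set tt := CrowdDS.ttil f a q p with htt
  -- basic facts about ε and tt
  have h1ε : 0 < 1 - ε := by linarith
  have hlogpos : 0 < Real.log (1 / (1 - ε)) := by
    apply Real.log_pos
    rw [lt_div_iff₀ h1ε]; linarith
  have hs0 : (0:ℝ) ≤ 2 * Real.log (1 / (1 - ε)) := by linarith
  have hspos : 0 < Real.sqrt (2 * Real.log (1 / (1 - ε))) :=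
    Real.sqrt_pos.mpr (by linarith)
  have httneg : tt < 0 := lt_of_le_of_lt ht (by linarith)
  have htt2 : 2 * Real.log (1 / (1 - ε)) ≤ tt ^ 2 := by
    have hs := Real.sq_sqrt hs0
    nlinarith [ht, hspos, Real.sqrt_nonneg (2 * Real.log (1 / (1 - ε)))]
  have hφ : CrowdDS.phi tt ≤ 1 - ε := by
    rw [CrowdDS.phi]
    have h1 : Real.exp (-tt ^ 2 / 2) ≤ Real.exp (-(Real.log (1 / (1 - ε)))) := by
      apply Real.exp_le_exp.mpr; linarith
    have h2 : Real.exp (-(Real.log (1 / (1 - ε)))) = 1 - ε := by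
      rw [one_div, Real.log_inv, neg_neg, Real.exp_log h1ε]
    linarith
  have hφpos : 0 < CrowdDS.phi tt := Real.exp_pos _
  set ρ : ℝ := 1 - CrowdDS.phi tt with hρdef
  have hρε : ε ≤ ρ := by rw [hρdef]; linarith
  have hρ1 : ρ < 1 := by rw [hρdef]; linarith
  have hρ0 : 0 < ρ := lt_of_lt_of_le hε0 hρε
  -- the constants C i and N̄
  set Cf : Fin M → ℝ := fun i =>
    sSup {x : ℝ | ∃ k l h : Fin L, k ≠ l ∧ x = |f i k h.succ - f i l h.succ|} with hCf
  have hL0 : 0 < L := by omega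
  have hL1 : 1 < L := by omega
  set k₀ : Fin L := ⟨0, hL0⟩ with hk₀
  set k₁ : Fin L := ⟨1, hL1⟩ with hk₁
  have hk01 : k₀ ≠ k₁ := by simp [hk₀, hk₁, Fin.ext_iff]
  set other : Fin L → Fin L := fun k => if k = k₀ then k₁ else k₀ with hotherdef
  have hother : ∀ k, k ≠ other k := by
    intro k
    by_cases h : k = k₀
    · rw [h]; simpa [hotherdef] using hk01
    · simpa [hotherdef, h] using h
  have hbddC : ∀ i, BddAbove
      {x : ℝ | ∃ k l h : Fin L, k ≠ l ∧ x = |f i k h.succ - f i l h.succ|} := by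
    intro i
    apply Set.Finite.bddAbove
    apply Set.Finite.subset (Set.finite_range
      (fun c : Fin L × Fin L × Fin L => |f i c.1 c.2.2.succ - f i c.2.1 c.2.2.succ|))
    rintro x ⟨k, l, h, _, rfl⟩
    exact ⟨(k, l, h), rfl⟩
  have hCf0 : ∀ i, 0 ≤ Cf i := by
    intro i
    exact le_trans (abs_nonneg _) (le_csSup (hbddC i) ⟨k₀, k₁, k₀, hk01, rfl⟩)
  have hCbound : ∀ (i : Fin M) (k l : Fin L), k ≠ l →
      ∀ x : Fin (L + 1), |f i k x - f i l x| ≤ Cf i := by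
    intro i k l hkl x
    refine Fin.cases ?_ ?_ x
    · rw [hf0 i k l, sub_self, abs_zero]; exact hCf0 i
    · intro h
      exact le_csSup (hbddC i) ⟨k, l, h, hkl, rfl⟩
  -- the case N̄ = 0 is impossible
  by_cases hnb : CrowdDS.nbar f = 0
  · exfalso
    have hτ : ∀ j' : Fin N, CrowdDS.tauMax f a q p j' = 0 := by
      intro j'
      rw [CrowdDS.tauMax]
      have : {x : ℝ | ∃ k l : Fin L, k ≠ l ∧
          x = CrowdDS.gap f a q p j' k l / CrowdDS.nbar f} = {0} := by
        ext x
        simp only [Set.mem_setOf_eq, Set.mem_singleton_iff]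
        constructor
        · rintro ⟨k, l, hkl, rfl⟩; rw [hnb, div_zero]
        · rintro rfl; exact ⟨k₀, k₁, hk01, by rw [hnb, div_zero]⟩
      rw [this, csSup_singleton]
    have hT : tt = 0 := by
      rw [htt, CrowdDS.ttil]
      have : {x : ℝ | ∃ j : Fin N, x = CrowdDS.tauMax f a q p j} = {0} := by
        ext x
        simp only [Set.mem_setOf_eq, Set.mem_singleton_iff]
        constructor
        · rintro ⟨j', rfl⟩; exact hτ j'
        · rintro rfl; exact ⟨⟨0, hN⟩, (hτ _).symm⟩
      rw [this, csSup_singleton]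
    linarith
  have hnbpos : 0 < CrowdDS.nbar f :=
    lt_of_le_of_ne (Real.sqrt_nonneg _) (Ne.symm hnb)
  have hnbsq : CrowdDS.nbar f ^ 2 = ∑ i, Cf i ^ 2 := by
    rw [CrowdDS.nbar]
    exact Real.sq_sqrt (Finset.sum_nonneg fun i _ => sq_nonneg _)
  -- the random vector per item and the bad event
  set W : Fin N → Ω → Fin L × (Fin M → Fin (L + 1)) :=
    fun j ω => (y j ω, fun i => Z i j ω) with hWdef
  have hWm : ∀ j, Measurable (W j) := fun j =>
    (hym j).prodMk (measurable_pi_lambda _ fun i => hZm i j)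
  set score : (Fin M → Fin (L + 1)) → Fin L → ℝ :=
    fun z k => (∑ i, f i k (z i)) + a k with hscore
  set Abad : Set (Fin L × (Fin M → Fin (L + 1))) :=
    {c | ∃ k', score c.2 c.1 < score c.2 k'} with hAbad
  set B : Fin N → Set Ω := fun j => W j ⁻¹' Abad with hBdef
  have hBm : ∀ j, MeasurableSet (B j) := fun j =>
    hWm j (Abad.to_countable.measurableSet)
  -- ∑ pri = 1
  have hpri_sum : ∑ k, pri k = 1 := by
    have j0 : Fin N := ⟨0, hN⟩
    have h1 := CrowdDSAux.meas_preimage_eq_sum μ (y j0) (hym j0) Set.univ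
    have h2 : (μ (y j0 ⁻¹' Set.univ)).toReal = 1 := by
      rw [Set.preimage_univ, measure_univ, ENNReal.toReal_one]
    rw [h2] at h1
    have h3 : ∀ k : Fin L, (μ (y j0 ⁻¹' {k})).toReal = pri k := by
      intro k
      have hset : y j0 ⁻¹' {k} = {ω | y j0 ω = k} := rfl
      rw [hset, hprior j0 k]
    rw [h1]
    simp [h3]
  -- singleton probabilities
  have hsing : ∀ (j : Fin N) (k : Fin L) (z : Fin M → Fin (L + 1)),
      (μ (W j ⁻¹' {(k, z)})).toReal = pri k * ∏ i, CrowdDS.condLaw q p i j k (z i) := by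
    intro j k z
    have hset : W j ⁻¹' {(k, z)} = {ω | y j ω = k ∧ ∀ i, Z i j ω = z i} := by
      ext ω
      simp [hWdef, Prod.ext_iff, funext_iff]
    rw [hset, hlaw j k z]
  -- bddAbove facts for the tau sets
  have hbddτ : ∀ j' : Fin N, BddAbove {x : ℝ | ∃ k l : Fin L, k ≠ l ∧
      x = CrowdDS.gap f a q p j' k l / CrowdDS.nbar f} := by
    intro j'
    apply Set.Finite.bddAbove
    apply Set.Finite.subset (Set.finite_range
      (fun c : Fin L × Fin L => CrowdDS.gap f a q p j' c.1 c.2 / CrowdDS.nbar f))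
    rintro x ⟨k, l, _, rfl⟩
    exact ⟨(k, l), rfl⟩
  have hbddT : BddAbove {x : ℝ | ∃ j : Fin N, x = CrowdDS.tauMax f a q p j} := by
    apply Set.Finite.bddAbove
    apply Set.Finite.subset (Set.finite_range (fun j : Fin N => CrowdDS.tauMax f a q p j))
    rintro x ⟨j, rfl⟩
    exact ⟨j, rfl⟩
  have hgaple : ∀ (j : Fin N) (k : Fin L),
      CrowdDS.gap f a q p j k (other k) ≤ tt * CrowdDS.nbar f := by
    intro j k
    have h1 : CrowdDS.gap f a q p j k (other k) / CrowdDS.nbar f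
        ≤ CrowdDS.tauMax f a q p j := by
      rw [CrowdDS.tauMax]
      exact le_csSup (hbddτ j) ⟨k, other k, hother k, rfl⟩
    have h2 : CrowdDS.tauMax f a q p j ≤ tt := by
      rw [htt, CrowdDS.ttil]
      exact le_csSup hbddT ⟨j, rfl⟩
    have := (div_le_iff₀ hnbpos).mp (h1.trans h2)
    linarith
  -- the per-item lower bound on μ (B j)
  have hBlow : ∀ j : Fin N, ρ ≤ (μ (B j)).toReal := by
    intro j
    have hstep : ∀ (k : Fin L) (F : (Fin M → Fin (L + 1)) → ℝ),
        (∀ z : Fin M → Fin (L + 1), F z ≤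
          (if 0 ≤ (∑ i, (f i k (z i) - f i (other k) (z i))) + (a k - a (other k))
            then pri k * ∏ i, CrowdDS.condLaw q p i j k (z i) else 0)) →
        (∑ z : Fin M → Fin (L + 1), F z) ≤ pri k * CrowdDS.phi tt := by
      intro k F hF
      set l : Fin L := other k with hl
      set νk : Fin M → Fin (L + 1) → ℝ := fun i x => CrowdDS.condLaw q p i j k x with hνk
      set gk : Fin M → Fin (L + 1) → ℝ := fun i x => f i k x - f i l x with hgk
      set Ak : ℝ := a k - a l with hAk
      have hν0 : ∀ i x, 0 ≤ νk i x := by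
        intro i x
        rw [hνk]
        simp only [CrowdDS.condLaw]
        split
        · linarith [hq1 i j]
        · exact mul_nonneg (hq0 i j) (hp0 i k _)
      have hν1 : ∀ i, ∑ x, νk i x = 1 := by
        intro i
        rw [Fin.sum_univ_succ]
        have h0 : νk i 0 = 1 - q i j := by simp [hνk, CrowdDS.condLaw]
        have hsucc : ∀ h : Fin L, νk i h.succ = q i j * p i k h := by
          intro h
          simp [hνk, CrowdDS.condLaw, Fin.succ_ne_zero h, Fin.pred_succ]
        rw [h0]
        rw [Finset.sum_congr rfl fun h _ => hsucc h, ← Finset.mul_sum, hp1 i k]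
        ring
      have hCb : ∀ i x, |gk i x| ≤ Cf i := fun i x => hCbound i k l (hother k) x
      have hgapeq : (∑ i, ∑ x, νk i x * gk i x) + Ak = CrowdDS.gap f a q p j k l := by
        rw [CrowdDS.gap]
        congr 1
        apply Finset.sum_congr rfl
        intro i _
        rw [Fin.sum_univ_succ]
        have h0 : gk i 0 = 0 := by rw [hgk]; simp [hf0 i k l]
        rw [h0, mul_zero, zero_add]
        apply Finset.sum_congr rfl
        intro h _
        have : νk i h.succ = q i j * p i k h := by
          simp [hνk, CrowdDS.condLaw, Fin.succ_ne_zero h, Fin.pred_succ]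
        rw [this, hgk]
        ring
      set Δ : ℝ := CrowdDS.gap f a q p j k l with hΔ
      have hΔle : Δ ≤ tt * CrowdDS.nbar f := hgaple j k
      have hΔneg : Δ < 0 :=
        lt_of_le_of_lt hΔle (mul_neg_of_neg_of_pos httneg hnbpos)
      set tk : ℝ := -Δ / (CrowdDS.nbar f ^ 2) with htk
      have htk0 : 0 ≤ tk := by
        rw [htk]
        apply div_nonneg (by linarith) (by positivity)
      have hexp : tk * Δ + tk ^ 2 * (CrowdDS.nbar f ^ 2) / 2
          = -(Δ ^ 2) / (2 * CrowdDS.nbar f ^ 2) := by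
        rw [htk]
        field_simp
        ring
      have hΔsq : tt ^ 2 * CrowdDS.nbar f ^ 2 ≤ Δ ^ 2 := by
        have h1 : 0 ≤ -(tt * CrowdDS.nbar f) := by
          have := mul_neg_of_neg_of_pos httneg hnbpos
          linarith
        have h2 : -(tt * CrowdDS.nbar f) ≤ -Δ := by linarith
        have h3 := mul_self_le_mul_self h1 h2
        calc tt ^ 2 * CrowdDS.nbar f ^ 2
            = -(tt * CrowdDS.nbar f) * -(tt * CrowdDS.nbar f) := by ring
          _ ≤ -Δ * -Δ := h3
          _ = Δ ^ 2 := by ring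
      have hexple : tk * Δ + tk ^ 2 * (CrowdDS.nbar f ^ 2) / 2 ≤ -tt ^ 2 / 2 := by
        rw [hexp]
        have h2nb : (0:ℝ) < 2 * CrowdDS.nbar f ^ 2 :=
          mul_pos two_pos (pow_pos hnbpos 2)
        have hmain : tt ^ 2 / 2 ≤ Δ ^ 2 / (2 * CrowdDS.nbar f ^ 2) := by
          rw [div_le_div_iff₀ two_pos h2nb]
          linear_combination 2 * hΔsq
        rw [neg_div, neg_div]
        linarith
      calc ∑ z : Fin M → Fin (L + 1), F z
          ≤ ∑ z : Fin M → Fin (L + 1), (if 0 ≤ (∑ i, gk i (z i)) + Ak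
            then pri k * ∏ i, νk i (z i) else 0) := Finset.sum_le_sum fun z _ => hF z
        _ = pri k * ∑ z : Fin M → Fin (L + 1), (if 0 ≤ (∑ i, gk i (z i)) + Ak
            then ∏ i, νk i (z i) else 0) := by
            rw [Finset.mul_sum]
            apply Finset.sum_congr rfl
            intro z _
            rw [mul_ite, mul_zero]
        _ ≤ pri k * Real.exp (tk * ((∑ i, ∑ x, νk i x * gk i x) + Ak)
              + tk ^ 2 * (∑ i, (Cf i) ^ 2) / 2) :=
            mul_le_mul_of_nonneg_left
              (CrowdDSAux.chernoff_prod νk gk Cf hν0 hν1 hCb Ak tk htk0) (hpri k)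
        _ ≤ pri k * CrowdDS.phi tt := by
            apply mul_le_mul_of_nonneg_left _ (hpri k)
            rw [hgapeq, ← hnbsq, CrowdDS.phi]
            exact Real.exp_le_exp.mpr hexple
    have hcompl : (μ ((B j)ᶜ)).toReal ≤ CrowdDS.phi tt := by
      have hpre : (B j)ᶜ = W j ⁻¹' (Abadᶜ) := rfl
      rw [hpre, CrowdDSAux.meas_preimage_eq_sum μ (W j) (hWm j) _, Fintype.sum_prod_type]
      refine le_trans (Finset.sum_le_sum (fun k (_ : k ∈ Finset.univ) =>
          hstep k _ (fun z => ?_)))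
        (le_of_eq (by rw [← Finset.sum_mul, hpri_sum, one_mul]))
      rw [hsing j k z]
      split_ifs with h1 h2
      · exact le_rfl
      · exfalso
        apply h2
        have h1' : ¬ ∃ k', score z k < score z k' := h1
        push_neg at h1'
        have hsl := h1' (other k)
        have hG : (∑ i, (f i k (z i) - f i (other k) (z i))) + (a k - a (other k))
            = score z k - score z (other k) := by
          rw [hscore]
          simp only []
          rw [Finset.sum_sub_distrib]
          ring
        rw [hG]
        linarith
      · refine mul_nonneg (hpri k) (Finset.prod_nonneg fun i _ => ?_)
        rw [CrowdDS.condLaw]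
        split
        · linarith [hq1 i j]
        · exact mul_nonneg (hq0 i j) (hp0 i k _)
      · exact le_rfl
    have heq : (μ (B j)).toReal = 1 - (μ ((B j)ᶜ)).toReal := by
      rw [prob_compl_eq_one_sub (hBm j),
        ENNReal.toReal_sub_of_le prob_le_one ENNReal.one_ne_top, ENNReal.toReal_one]
      ring
    rw [hρdef]
    have := heq
    linarith [hcompl, this]
  -- Part B: KL Chernoff bound for the sum of independent indicators
  set g0 : (Fin L × (Fin M → Fin (L + 1))) → ℝ := fun c => if c ∈ Abad then 1 else 0 with hg0
  have hg0m : Measurable g0 := measurable_of_countable g0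
  set X : Fin N → Ω → ℝ := fun j => g0 ∘ W j with hX
  have hXind : iIndepFun X μ :=
    hindep.comp (fun _ => g0) (fun _ => hg0m)
  have hXm : ∀ j, Measurable (X j) := fun j => hg0m.comp (hWm j)
  have hX01 : ∀ j ω, X j ω = 0 ∨ X j ω = 1 := by
    intro j ω
    rw [hX]
    by_cases h : W j ω ∈ Abad
    · right; simp [hg0, Function.comp, h]
    · left; simp [hg0, Function.comp, h]
  have hX0 : ∀ j ω, 0 ≤ X j ω := by
    intro j ω
    rcases hX01 j ω with h | h <;> rw [h] <;> norm_num
  set S : Ω → ℝ := fun ω => ∑ j, X j ω with hS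
  have hSm : Measurable S := Finset.measurable_sum _ fun j _ => hXm j
  have hS0 : ∀ ω, 0 ≤ S ω := fun ω => Finset.sum_nonneg fun j _ => hX0 j ω
  -- the tilt parameter
  set η : ℝ := ε * (1 - ρ) / (ρ * (1 - ε)) with hη
  have hη0 : 0 < η := by
    apply div_pos (mul_pos hε0 (by linarith)) (mul_pos hρ0 (by linarith))
  have hη1 : η ≤ 1 := by
    rw [hη, div_le_one (mul_pos hρ0 (by linarith))]
    nlinarith
  set lam : ℝ := -Real.log η with hlam
  have hlam0 : 0 ≤ lam := by
    rw [hlam]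
    have := Real.log_nonpos (le_of_lt hη0) hη1
    linarith
  have hexplam : Real.exp (-lam) = η := by
    rw [hlam, neg_neg, Real.exp_log hη0]
  -- mgf of each indicator
  have hmgf : ∀ j, mgf (X j) μ (-lam) = 1 + (Real.exp (-lam) - 1) * (μ (B j)).toReal := by
    intro j
    have hfun : (fun ω => Real.exp (-lam * X j ω))
        = fun ω => (B j).indicator (fun _ => Real.exp (-lam) - 1) ω + 1 := by
      funext ω
      by_cases h : ω ∈ B j
      · have hx : X j ω = 1 := by
          rw [hX]; simp [hg0, Function.comp]
          exact h
        rw [hx, Set.indicator_of_mem h, mul_one]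
        ring
      · have hx : X j ω = 0 := by
          rw [hX]; simp [hg0, Function.comp]
          exact h
        rw [hx, Set.indicator_of_notMem h, mul_zero, Real.exp_zero]
        ring
    rw [mgf, hfun, integral_add ((integrable_const _).indicator (hBm j)) (integrable_const 1),
      integral_indicator_const _ (hBm j), integral_const]
    simp only [measureReal_def, measure_univ, ENNReal.toReal_one, smul_eq_mul]
    ring
  have hmgfle : ∀ j, mgf (X j) μ (-lam) ≤ (1 - ρ) / (1 - ε) := by
    intro j
    have h1 : (η - 1) * (μ (B j)).toReal ≤ (η - 1) * ρ := by
      apply mul_le_mul_of_nonpos_left (hBlow j) (by linarith)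
    have h2 : 1 + (η - 1) * ρ = (1 - ρ) / (1 - ε) := by
      rw [hη]
      field_simp
      ring
    rw [hmgf j, hexplam, ← h2]
    exact add_le_add_right h1 1
  -- integrability for the Chernoff bound
  have hint : Integrable (fun ω => Real.exp (-lam * S ω)) μ := by
    apply Integrable.mono' (integrable_const (1:ℝ))
      ((hSm.const_mul (-lam)).exp.aestronglyMeasurable)
    apply Filter.Eventually.of_forall
    intro ω
    rw [Real.norm_eq_abs, abs_of_pos (Real.exp_pos _)]
    apply Real.exp_le_one_iff.mpr
    have h1 := mul_nonneg hlam0 (hS0 ω)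
    linarith
  -- Chernoff
  have hSsum : S = ∑ j, X j := by
    funext ω
    rw [hS, Finset.sum_apply]
  have hcher := measure_le_le_exp_mul_mgf (μ := μ) (X := S) (ε * N)
    (neg_nonpos.mpr hlam0) hint
  have hmgfS : mgf S μ (-lam) = ∏ j, mgf (X j) μ (-lam) := by
    rw [hSsum]
    exact hXind.mgf_sum hXm Finset.univ
  have hprod : ∏ j : Fin N, mgf (X j) μ (-lam) ≤ ((1 - ρ) / (1 - ε)) ^ N := by
    have h1 : ∏ j : Fin N, mgf (X j) μ (-lam) ≤ ∏ j : Fin N, (1 - ρ) / (1 - ε) :=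
      Finset.prod_le_prod (fun j _ => mgf_nonneg) (fun j _ => hmgfle j)
    rwa [Finset.prod_const, Finset.card_univ, Fintype.card_fin] at h1
  have hfr0 : (0:ℝ) < (1 - ρ) / (1 - ε) := div_pos (by linarith) (by linarith)
  have hklid : Real.exp (-(-lam) * (ε * N)) * ((1 - ρ) / (1 - ε)) ^ N
      = Real.exp (-(N : ℝ) * CrowdDS.klBer ε ρ) := by
    rw [neg_neg]
    rw [show ((1 - ρ) / (1 - ε)) ^ N = Real.exp ((N:ℝ) * Real.log ((1 - ρ) / (1 - ε))) by
      rw [← Real.exp_log hfr0, ← Real.exp_nat_mul, Real.exp_log hfr0]]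
    rw [← Real.exp_add]
    congr 1
    have hne1 : ((1:ℝ) - ρ) ≠ 0 := ne_of_gt (by linarith)
    have hne2 : ((1:ℝ) - ε) ≠ 0 := ne_of_gt (by linarith)
    have hne3 : (ε:ℝ) ≠ 0 := ne_of_gt hε0
    have hne4 : (ρ:ℝ) ≠ 0 := ne_of_gt hρ0
    rw [CrowdDS.klBer, hlam, hη,
      Real.log_div (mul_ne_zero hne3 hne1) (mul_ne_zero hne4 hne2),
      Real.log_mul hne3 hne1, Real.log_mul hne4 hne2,
      Real.log_div hne3 hne4, Real.log_div hne2 hne1, Real.log_div hne1 hne2]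
    ring
  have hchern2 : (μ {ω | S ω ≤ ε * N}).toReal ≤ Real.exp (-(N : ℝ) * CrowdDS.klBer ε ρ) := by
    calc (μ {ω | S ω ≤ ε * N}).toReal
        ≤ Real.exp (-(-lam) * (ε * N)) * mgf S μ (-lam) := hcher
      _ ≤ Real.exp (-(-lam) * (ε * N)) * ((1 - ρ) / (1 - ε)) ^ N := by
          apply mul_le_mul_of_nonneg_left _ (le_of_lt (Real.exp_pos _))
          rw [hmgfS]
          exact hprod
      _ = Real.exp (-(N : ℝ) * CrowdDS.klBer ε ρ) := hklid
  -- relating the events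
  have hsub : {ω | S ω ≤ ε * N}ᶜ ⊆ {ω | ε ≤ CrowdDS.errRate y yhat ω} := by
    intro ω hω
    have hω' : ε * N < S ω := lt_of_not_ge hω
    have hle : S ω ≤ ∑ j, (if yhat j ω ≠ y j ω then (1:ℝ) else 0) := by
      rw [hS]
      apply Finset.sum_le_sum
      intro j _
      by_cases h : W j ω ∈ Abad
      · have hx : X j ω = 1 := by
          rw [hX]; simp [hg0, Function.comp]; exact h
        obtain ⟨k', hk'⟩ := h
        have hy : yhat j ω ≠ y j ω := by
          intro heq
          have h2 := hyhat j ω k'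
          rw [heq] at h2
          rw [hscore] at hk'
          simp only [hWdef] at hk'
          exact absurd h2 (not_le.mpr hk')
        rw [hx, if_pos hy]
      · have hx : X j ω = 0 := by
          rw [hX]; simp [hg0, Function.comp]; exact h
        rw [hx]
        split_ifs <;> norm_num
    have hNpos : (0:ℝ) < N := Nat.cast_pos.mpr hN
    show ε ≤ CrowdDS.errRate y yhat ω
    rw [CrowdDS.errRate]
    have hfin : ε * N < ∑ j, (if yhat j ω ≠ y j ω then (1:ℝ) else 0) :=
      lt_of_lt_of_le hω' hle
    rw [show ε = (N:ℝ)⁻¹ * (ε * N) by field_simp]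
    apply mul_le_mul_of_nonneg_left (le_of_lt hfin) (by positivity)
  -- final chain
  have hms : MeasurableSet {ω | S ω ≤ ε * N} := measurableSet_le hSm measurable_const
  have hcompl2 : (μ ({ω | S ω ≤ ε * N}ᶜ)).toReal = 1 - (μ {ω | S ω ≤ ε * N}).toReal := by
    rw [prob_compl_eq_one_sub hms,
      ENNReal.toReal_sub_of_le prob_le_one ENNReal.one_ne_top, ENNReal.toReal_one]
  have hmono : (μ ({ω | S ω ≤ ε * N}ᶜ)).toReal ≤ (μ {ω | ε ≤ CrowdDS.errRate y yhat ω}).toReal :=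
    ENNReal.toReal_mono (measure_ne_top μ _) (measure_mono hsub)
  calc 1 - Real.exp (-(N : ℝ) * CrowdDS.klBer ε ρ)
      ≤ 1 - (μ {ω | S ω ≤ ε * N}).toReal := by linarith [hchern2]
    _ = (μ ({ω | S ω ≤ ε * N}ᶜ)).toReal := hcompl2.symm
    _ ≤ (μ {ω | ε ≤ CrowdDS.errRate y yhat ω}).toReal := hmono
end
end

section
/- Under the Dawid–Skene model with a decomposable aggregation rule: for all ε, δ ∈ (0,1), setting A = H(ε) + (1/N)·ln(1/δ) with H(ε) = −ε·ln ε − (1−ε)·ln(1−ε), and C = 1 + exp(A/ε), if t̄ ≥ sqrt(2·ln((L−1)·C)), then the error rate satisfies E_N ≤ ε with probability at least 1 − δ. -/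
open MeasureTheory ProbabilityTheory Real

noncomputable section

section Helpers
open Real


lemma hoeffding_core {p : ℝ} (hp0 : 0 ≤ p) (hp1 : p ≤ 1) (h : ℝ) :
    1 - p + p * Real.exp h ≤ Real.exp (p * h + h ^ 2 / 8) := by
  set F : ℝ → ℝ := fun x => 1 - p + p * Real.exp x with hFdef
  have hF : ∀ x, 0 < F x := by
    intro x
    simp only [F]
    rcases le_total (Real.exp x) 1 with he | he
    · nlinarith [exp_pos x, mul_nonneg (sub_nonneg.mpr hp1) (sub_nonneg.mpr he)]
    · nlinarith [mul_nonneg hp0 (sub_nonneg.mpr he)]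
  set G : ℝ → ℝ := fun x => p * x + x ^ 2 / 8 - Real.log (F x) with hGdef
  set G' : ℝ → ℝ := fun x => p + x / 4 - p * Real.exp x / F x with hG'def
  have hFd : ∀ x, HasDerivAt F (p * Real.exp x) x := by
    intro x
    exact ((Real.hasDerivAt_exp x).const_mul p).const_add (1 - p)
  have hGd : ∀ x, HasDerivAt G (G' x) x := by
    intro x
    have hlog : HasDerivAt (fun x => Real.log (F x)) (p * Real.exp x / F x) x :=
      (hFd x).log (hF x).ne'
    have h2 : HasDerivAt (fun x : ℝ => p * x) p x := by
      simpa using (hasDerivAt_id x).const_mul p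
    have h1 : HasDerivAt (fun x : ℝ => p * x + x ^ 2 / 8) (p + 2 * x / 8) x := by
      have h3 := h2.add ((hasDerivAt_pow 2 x).div_const 8)
      norm_num at h3
      exact h3
    have := h1.sub hlog
    refine this.congr_deriv ?_
    simp only [G']
    ring
  have hG'd : ∀ x, HasDerivAt G' (1 / 4 - p * Real.exp x * (1 - p) / (F x) ^ 2) x := by
    intro x
    have hquot : HasDerivAt (fun x => p * Real.exp x / F x)
        ((p * Real.exp x * F x - p * Real.exp x * (p * Real.exp x)) / (F x) ^ 2) x :=
      ((Real.hasDerivAt_exp x).const_mul p).div (hFd x) (hF x).ne'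
    have h1 : HasDerivAt (fun x : ℝ => p + x / 4) (1 / 4) x := by
      simpa using ((hasDerivAt_id x).div_const 4).const_add p
    have := h1.sub hquot
    refine this.congr_deriv ?_
    simp only [F]
    ring
  have hG'' : ∀ x, 0 ≤ 1 / 4 - p * Real.exp x * (1 - p) / (F x) ^ 2 := by
    intro x
    have hab : (1 - p) * (p * Real.exp x) ≤ ((1 - p) + p * Real.exp x) ^ 2 / 4 := by
      nlinarith [sq_nonneg ((1 - p) - p * Real.exp x)]
    have hF2 : (0:ℝ) < (F x) ^ 2 := pow_pos (hF x) 2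
    rw [sub_nonneg, div_le_iff₀ hF2]
    have hFe : ((1 - p) + p * Real.exp x) = F x := by simp only [F]
    rw [← hFe]
    nlinarith [hab]
  have hmono : Monotone G' := by
    apply monotone_of_deriv_nonneg
    · exact fun x => (hG'd x).differentiableAt
    · intro x; rw [(hG'd x).deriv]; exact hG'' x
  have hG'0 : G' 0 = 0 := by
    have : F 0 = 1 := by simp [F]
    simp [G', this]
  have hG0 : G 0 = 0 := by
    have : F 0 = 1 := by simp [F]
    simp [G, this]
  have hGcont : Continuous G := by
    have : ∀ x, DifferentiableAt ℝ G x := fun x => (hGd x).differentiableAt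
    exact Differentiable.continuous this
  have hGnonneg : 0 ≤ G h := by
    rcases le_or_gt 0 h with hh | hh
    · have hm : MonotoneOn G (Set.Ici 0) := by
        refine monotoneOn_of_deriv_nonneg (convex_Ici 0) hGcont.continuousOn
          (fun x _ => (hGd x).differentiableAt.differentiableWithinAt) ?_
        intro x hx
        rw [(hGd x).deriv, ← hG'0]
        exact hmono (le_of_lt (by simpa using hx))
      have := hm Set.self_mem_Ici (Set.mem_Ici.mpr hh) hh
      rwa [hG0] at this
    · have hm : AntitoneOn G (Set.Iic 0) := by
        refine antitoneOn_of_deriv_nonpos (convex_Iic 0) hGcont.continuousOn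
          (fun x _ => (hGd x).differentiableAt.differentiableWithinAt) ?_
        intro x hx
        rw [(hGd x).deriv, ← hG'0]
        exact hmono (le_of_lt (by simpa using hx))
      have := hm (Set.mem_Iic.mpr hh.le) Set.self_mem_Iic hh.le
      rwa [hG0] at this
  have hkey : Real.log (F h) ≤ p * h + h ^ 2 / 8 := by
    simp only [G] at hGnonneg; linarith
  have : F h ≤ Real.exp (p * h + h ^ 2 / 8) := by
    calc F h = Real.exp (Real.log (F h)) := (Real.exp_log (hF h)).symm
      _ ≤ _ := Real.exp_le_exp.mpr hkey
  simpa [F] using this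

lemma hoeffding_fin {α : Type*} [Fintype α] (w g : α → ℝ) (hw0 : ∀ x, 0 ≤ w x)
    (hw1 : ∑ x, w x = 1) {b : ℝ} (hb : ∀ x, |g x| ≤ b) (t : ℝ) :
    ∑ x, w x * Real.exp (t * g x)
      ≤ Real.exp (t * (∑ x, w x * g x) + t ^ 2 * b ^ 2 / 2) := by
  rcases isEmpty_or_nonempty α with hα | hα
  · simp at hw1
  have hbnn : 0 ≤ b := (abs_nonneg _).trans (hb (Classical.arbitrary α))
  rcases eq_or_lt_of_le hbnn with hb0 | hb0
  · have hg : ∀ x, g x = 0 := by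
      intro x; have := hb x; rw [← hb0] at this
      exact abs_nonpos_iff.mp this
    simp [hg, ← hb0, hw1]
  · set m : ℝ := ∑ x, w x * g x with hm
    have hmb : |m| ≤ b := by
      calc |m| ≤ ∑ x, |w x * g x| := Finset.abs_sum_le_sum_abs _ _
        _ ≤ ∑ x, w x * b := by
          refine Finset.sum_le_sum fun x _ => ?_
          rw [abs_mul, abs_of_nonneg (hw0 x)]
          exact mul_le_mul_of_nonneg_left (hb x) (hw0 x)
        _ = b := by rw [← Finset.sum_mul, hw1, one_mul]
    have hconv : ∀ x, Real.exp (t * g x)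
        ≤ ((b - g x) / (2 * b)) * Real.exp (-(t * b))
          + ((b + g x) / (2 * b)) * Real.exp (t * b) := by
      intro x
      have h1 : 0 ≤ (b - g x) / (2 * b) := by
        apply div_nonneg _ (by linarith)
        have := (abs_le.mp (hb x)).2; linarith
      have h2 : 0 ≤ (b + g x) / (2 * b) := by
        apply div_nonneg _ (by linarith)
        have := (abs_le.mp (hb x)).1; linarith
      have h3 : (b - g x) / (2 * b) + (b + g x) / (2 * b) = 1 := by
        field_simp; ring
      have := convexOn_exp.2 (Set.mem_univ (-(t * b))) (Set.mem_univ (t * b)) h1 h2 h3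
      simp only [smul_eq_mul] at this
      have harg : (b - g x) / (2 * b) * (-(t * b)) + (b + g x) / (2 * b) * (t * b)
          = t * g x := by field_simp; ring
      rwa [harg] at this
    calc ∑ x, w x * Real.exp (t * g x)
        ≤ ∑ x, w x * (((b - g x) / (2 * b)) * Real.exp (-(t * b))
            + ((b + g x) / (2 * b)) * Real.exp (t * b)) := by
          exact Finset.sum_le_sum fun x _ =>
            mul_le_mul_of_nonneg_left (hconv x) (hw0 x)
      _ = ((b - m) / (2 * b)) * Real.exp (-(t * b))
            + ((b + m) / (2 * b)) * Real.exp (t * b) := by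
          have hbne : (2 * b) ≠ 0 := by positivity
          have key : ∀ c E : ℝ, ∑ x, w x * ((b + c * g x) / (2 * b) * E)
              = (b + c * m) / (2 * b) * E := by
            intro c E
            have hterm : ∀ x, w x * ((b + c * g x) / (2 * b) * E)
                = (w x * b + c * (w x * g x)) * (E / (2 * b)) := by
              intro x; field_simp
            rw [Finset.sum_congr rfl (fun x _ => hterm x), ← Finset.sum_mul,
              Finset.sum_add_distrib, ← Finset.sum_mul, hw1, ← Finset.mul_sum, ← hm]
            field_simp
          simp only [mul_add, Finset.sum_add_distrib]
          congr 1
          · simpa [sub_eq_add_neg] using key (-1) (Real.exp (-(t * b)))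
          · simpa using key 1 (Real.exp (t * b))
      _ ≤ Real.exp (t * m + t ^ 2 * b ^ 2 / 2) := by
          set P : ℝ := (b + m) / (2 * b) with hP
          have hP0 : 0 ≤ P := by
            apply div_nonneg _ (by linarith)
            have := (abs_le.mp hmb).1; linarith
          have hP1 : P ≤ 1 := by
            rw [div_le_one (by linarith)]
            have := (abs_le.mp hmb).2; linarith
          have h1mP : (b - m) / (2 * b) = 1 - P := by
            rw [hP, eq_sub_iff_add_eq, ← add_div,
              show b - m + (b + m) = 2 * b by ring]
            exact div_self (by positivity)
          have hcore := hoeffding_core hP0 hP1 (2 * (t * b))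
          calc (b - m) / (2 * b) * Real.exp (-(t * b)) + P * Real.exp (t * b)
              = Real.exp (-(t * b)) * (1 - P + P * Real.exp (2 * (t * b))) := by
                rw [h1mP]
                rw [show (2:ℝ) * (t * b) = t * b + t * b by ring, Real.exp_add]
                rw [show t * b = -(-(t*b)) by ring]
                rw [Real.exp_neg (-(t*b))]
                field_simp
            _ ≤ Real.exp (-(t * b)) * Real.exp (P * (2 * (t * b)) + (2 * (t * b)) ^ 2 / 8) :=
                mul_le_mul_of_nonneg_left hcore (Real.exp_pos _).le
            _ = Real.exp (-(t * b) + P * (2 * (t * b)) + (2 * (t * b)) ^ 2 / 8) := by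
                rw [← Real.exp_add]; ring_nf
            _ = Real.exp (t * m + t ^ 2 * b ^ 2 / 2) := by
                congr 1
                have : P * (2 * (t * b)) = t * (b + m) := by
                  rw [hP]; field_simp
                rw [this]; ring

lemma inner_bound {M n : ℕ} (w g : Fin M → Fin (n + 1) → ℝ) (b : Fin M → ℝ)
    (hw0 : ∀ i x, 0 ≤ w i x) (hw1 : ∀ i, ∑ x, w i x = 1)
    (hb : ∀ i x, |g i x| ≤ b i) (c Δ : ℝ)
    (hΔ : Δ = -(∑ i, ∑ x, w i x * g i x) - c)
    (hΔ0 : 0 ≤ Δ) {S2 : ℝ} (hS2 : ∑ i, b i ^ 2 ≤ S2) (hS2pos : 0 < S2) :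
    ∑ η : Fin M → Fin (n + 1), (∏ i, w i (η i)) *
        (if 0 ≤ (∑ i, g i (η i)) + c then 1 else 0)
      ≤ Real.exp (-(Δ ^ 2) / (2 * S2)) := by
  classical
  set t : ℝ := Δ / S2 with htdef
  have ht0 : 0 ≤ t := div_nonneg hΔ0 hS2pos.le
  have hprodnn : ∀ η : Fin M → Fin (n + 1), 0 ≤ ∏ i, w i (η i) := fun η =>
    Finset.prod_nonneg fun i _ => hw0 i (η i)
  have step1 : ∑ η : Fin M → Fin (n + 1), (∏ i, w i (η i)) *
        (if 0 ≤ (∑ i, g i (η i)) + c then 1 else 0)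
      ≤ ∑ η : Fin M → Fin (n + 1), (∏ i, w i (η i)) *
        Real.exp (t * ((∑ i, g i (η i)) + c)) := by
    refine Finset.sum_le_sum fun η _ => mul_le_mul_of_nonneg_left ?_ (hprodnn η)
    split_ifs with hcase
    · exact Real.one_le_exp (mul_nonneg ht0 hcase)
    · exact (Real.exp_pos _).le
  have step2 : ∑ η : Fin M → Fin (n + 1), (∏ i, w i (η i)) *
        Real.exp (t * ((∑ i, g i (η i)) + c))
      = Real.exp (t * c) * ∏ i, ∑ x, w i x * Real.exp (t * g i x) := by
    have hterm : ∀ η : Fin M → Fin (n + 1), (∏ i, w i (η i)) *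
        Real.exp (t * ((∑ i, g i (η i)) + c))
        = Real.exp (t * c) * ∏ i, (w i (η i) * Real.exp (t * g i (η i))) := by
      intro η
      rw [mul_add, Real.exp_add, Finset.mul_sum, Real.exp_sum, Finset.prod_mul_distrib]
      ring
    rw [Finset.sum_congr rfl fun η _ => hterm η, ← Finset.mul_sum]
    congr 1
    rw [Finset.prod_univ_sum]
    rw [Fintype.piFinset_univ]
  have step3 : ∏ i, ∑ x, w i x * Real.exp (t * g i x)
      ≤ ∏ i, Real.exp (t * (∑ x, w i x * g i x) + t ^ 2 * (b i) ^ 2 / 2) := by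
    refine Finset.prod_le_prod (fun i _ => ?_) (fun i _ => ?_)
    · exact Finset.sum_nonneg fun x _ =>
        mul_nonneg (hw0 i x) (Real.exp_pos _).le
    · exact hoeffding_fin (w i) (g i) (hw0 i) (hw1 i) (hb i) t
  have step4 : Real.exp (t * c) *
        ∏ i, Real.exp (t * (∑ x, w i x * g i x) + t ^ 2 * (b i) ^ 2 / 2)
      ≤ Real.exp (-(Δ ^ 2) / (2 * S2)) := by
    rw [← Real.exp_sum, ← Real.exp_add]
    apply Real.exp_le_exp.mpr
    have hsum : ∑ i, (t * (∑ x, w i x * g i x) + t ^ 2 * (b i) ^ 2 / 2)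
        = t * (∑ i, ∑ x, w i x * g i x) + t ^ 2 * (∑ i, (b i) ^ 2) / 2 := by
      rw [Finset.sum_add_distrib, ← Finset.mul_sum, ← Finset.sum_div, ← Finset.mul_sum]
    rw [hsum]
    have h1 : t * c + (t * (∑ i, ∑ x, w i x * g i x)
        + t ^ 2 * (∑ i, (b i) ^ 2) / 2)
        = -t * Δ + t ^ 2 * (∑ i, (b i) ^ 2) / 2 := by
      rw [hΔ]; ring
    rw [h1]
    have h2 : -t * Δ + t ^ 2 * (∑ i, (b i) ^ 2) / 2 ≤ -t * Δ + t ^ 2 * S2 / 2 := by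
      have := sq_nonneg t
      nlinarith [hS2]
    refine h2.trans ?_
    have : -t * Δ + t ^ 2 * S2 / 2 = -(Δ ^ 2) / (2 * S2) := by
      rw [htdef]; field_simp; ring
    rw [this]
  calc _ ≤ _ := step1
    _ = _ := step2
    _ ≤ Real.exp (t * c) * ∏ i, Real.exp (t * (∑ x, w i x * g i x) + t ^ 2 * (b i) ^ 2 / 2) :=
        mul_le_mul_of_nonneg_left step3 (Real.exp_pos _).le
    _ ≤ _ := step4

lemma ite_one_zero_nonneg {c : Prop} [Decidable c] : (0:ℝ) ≤ if c then (1:ℝ) else 0 := by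
  split_ifs <;> norm_num

end Helpers


set_option maxHeartbeats 1000000 in
/-- Under the general Dawid–Skene model with a decomposable aggregation
rule: for all `ε, δ ∈ (0,1)`, with `A = H(ε) + (1/N)·ln(1/δ)` and `C = 1 + exp(A/ε)`,
if `t̄ ≥ sqrt(2 ln((L−1)·C))`, then `E_N ≤ ε` with probability at least `1 − δ`. -/
theorem error_rate_upper_bound_prob_delta
    {Ω : Type*} [MeasurableSpace Ω] (μ : Measure Ω) [IsProbabilityMeasure μ]
    {M N L : ℕ} (hM : 0 < M) (hN : 0 < N) (hL : 2 ≤ L)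
    (y : Fin N → Ω → Fin L) (Z : Fin M → Fin N → Ω → Fin (L + 1))
    (hym : ∀ j, Measurable (y j)) (hZm : ∀ i j, Measurable (Z i j))
    (pri : Fin L → ℝ) (q : Fin M → Fin N → ℝ) (p : Fin M → Fin L → Fin L → ℝ)
    (hpri : ∀ k, 0 ≤ pri k) (hq0 : ∀ i j, 0 ≤ q i j) (hq1 : ∀ i j, q i j ≤ 1)
    (hp0 : ∀ i k h, 0 ≤ p i k h) (hp1 : ∀ i k, ∑ h, p i k h = 1)
    (hprior : ∀ (j : Fin N) (k : Fin L), (μ {ω | y j ω = k}).toReal = pri k)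
    (hlaw : ∀ (j : Fin N) (k : Fin L) (h : Fin M → Fin (L + 1)),
      (μ {ω | y j ω = k ∧ ∀ i, Z i j ω = h i}).toReal
        = pri k * ∏ i, CrowdDS.condLaw q p i j k (h i))
    (hindep : iIndepFun (fun j ω => (y j ω, fun i => Z i j ω)) μ)
    (f : Fin M → Fin L → Fin (L + 1) → ℝ) (hf0 : ∀ i k k', f i k 0 = f i k' 0)
    (a : Fin L → ℝ)
    (yhat : Fin N → Ω → Fin L) (hyhatm : ∀ j, Measurable (yhat j))
    (hyhat : ∀ (j : Fin N) (ω : Ω) (k : Fin L),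
      (∑ i, f i k (Z i j ω)) + a k ≤ (∑ i, f i (yhat j ω) (Z i j ω)) + a (yhat j ω))
    {ε δ : ℝ} (hε0 : 0 < ε) (hε1 : ε < 1) (hδ0 : 0 < δ) (hδ1 : δ < 1)
    (ht : Real.sqrt (2 * Real.log (((L : ℝ) - 1) *
        (1 + Real.exp (((-ε * Real.log ε - (1 - ε) * Real.log (1 - ε))
          + (N : ℝ)⁻¹ * Real.log (1 / δ)) / ε))))
      ≤ CrowdDS.tbar f a q p) :
    1 - δ ≤ (μ {ω | CrowdDS.errRate y yhat ω ≤ ε}).toReal := by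
  classical
  -- ## Setup: constants
  set A : ℝ := (-ε * Real.log ε - (1 - ε) * Real.log (1 - ε)) + (N : ℝ)⁻¹ * Real.log (1 / δ)
    with hA
  set C : ℝ := 1 + Real.exp (A / ε) with hCdef
  have hC1 : 1 < C := by
    have := Real.exp_pos (A / ε); rw [hCdef]; linarith
  have hC0 : (0:ℝ) < C := by linarith
  set P0 : ℝ := 1 / C with hP0def
  have hP00 : 0 < P0 := by rw [hP0def]; positivity
  have h1ε : 0 < 1 - ε := by linarith
  have hNpos : (0:ℝ) < N := by exact_mod_cast hN
  have hlog1δ : 0 ≤ Real.log (1 / δ) := Real.log_nonneg (by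
    rw [le_div_iff₀ hδ0]; linarith)
  have hAε : -Real.log ε ≤ A / ε := by
    rw [le_div_iff₀ hε0]
    have h2 : 0 ≤ -(1 - ε) * Real.log (1 - ε) := by
      have h5 : Real.log (1 - ε) ≤ 0 := Real.log_nonpos (by linarith) (by linarith)
      have h6 := mul_nonneg (by linarith : (0:ℝ) ≤ 1 - ε) (neg_nonneg.mpr h5)
      linarith [h6]
    have h3 : 0 ≤ (N : ℝ)⁻¹ * Real.log (1 / δ) := by positivity
    have h4 : -Real.log ε * ε = -ε * Real.log ε := by ring
    rw [hA]; linarith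
  have hP0ε : P0 < ε := by
    have h1 : Real.exp (-Real.log ε) ≤ Real.exp (A / ε) := Real.exp_le_exp.mpr hAε
    rw [Real.exp_neg, Real.exp_log hε0] at h1
    rw [hP0def, div_lt_iff₀ hC0]
    have h2 : ε * ε⁻¹ = 1 := mul_inv_cancel₀ hε0.ne'
    have h3 : ε * ε⁻¹ ≤ ε * Real.exp (A / ε) := mul_le_mul_of_nonneg_left h1 hε0.le
    have h4 : ε * (1 + Real.exp (A / ε)) = ε + ε * Real.exp (A / ε) := by ring
    rw [hCdef]; linarith
  have h1P0 : 0 < 1 - P0 := by linarith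
  -- ## Setup: the quantities b, nbar, tbar and their basic properties
  set b : Fin M → ℝ := fun i => sSup {x : ℝ | ∃ k l h : Fin L, k ≠ l ∧
    x = |f i k h.succ - f i l h.succ|} with hbdef
  have hk0 : (0 : ℕ) < L := by omega
  have hk1 : (1 : ℕ) < L := by omega
  set k0 : Fin L := ⟨0, hk0⟩
  set l0 : Fin L := ⟨1, hk1⟩
  have hk0l0 : k0 ≠ l0 := by simp [k0, l0, Fin.ext_iff]
  have hSfin : ∀ i : Fin M, {x : ℝ | ∃ k l h : Fin L, k ≠ l ∧
      x = |f i k h.succ - f i l h.succ|}.Finite := by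
    intro i
    apply Set.Finite.subset (Set.finite_range
      (fun klh : Fin L × Fin L × Fin L => |f i klh.1 klh.2.1.succ - f i klh.2.2 klh.2.1.succ|))
    rintro x ⟨k, l, h, _, rfl⟩
    exact ⟨(k, h, l), rfl⟩
  have hSne : ∀ i : Fin M, {x : ℝ | ∃ k l h : Fin L, k ≠ l ∧
      x = |f i k h.succ - f i l h.succ|}.Nonempty := by
    intro i
    exact ⟨|f i k0 (⟨0, hk0⟩ : Fin L).succ - f i l0 (⟨0, hk0⟩ : Fin L).succ|,
      k0, l0, ⟨0, hk0⟩, hk0l0, rfl⟩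
  have hble : ∀ (i : Fin M) (k l : Fin L) (h : Fin L), k ≠ l →
      |f i k h.succ - f i l h.succ| ≤ b i := by
    intro i k l h hkl
    exact le_csSup (hSfin i).bddAbove ⟨k, l, h, hkl, rfl⟩
  have hb0 : ∀ i, 0 ≤ b i := fun i =>
    (abs_nonneg _).trans (hble i k0 l0 ⟨0, hk0⟩ hk0l0)
  have hnbar : CrowdDS.nbar f = Real.sqrt (∑ i, b i ^ 2) := by
    rw [CrowdDS.nbar]
  have hnb0 : 0 ≤ CrowdDS.nbar f := by rw [hnbar]; exact Real.sqrt_nonneg _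
  have hnbsq : (CrowdDS.nbar f) ^ 2 = ∑ i, b i ^ 2 := by
    rw [hnbar, Real.sq_sqrt (Finset.sum_nonneg fun i _ => sq_nonneg (b i))]
  -- L1C
  have hL1 : (1:ℝ) ≤ (L:ℝ) - 1 := by
    have : (2:ℝ) ≤ (L:ℝ) := by exact_mod_cast hL
    linarith
  have hL1C1 : 1 < ((L:ℝ) - 1) * C := by
    have h1 : 1 * C ≤ ((L:ℝ) - 1) * C := mul_le_mul_of_nonneg_right hL1 hC0.le
    linarith
  have hL1C0 : 0 < ((L:ℝ) - 1) * C := by linarith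
  have hsqrt0 : 0 ≤ Real.sqrt (2 * Real.log (((L:ℝ) - 1) * C)) := Real.sqrt_nonneg _
  have htb0 : 0 ≤ CrowdDS.tbar f a q p := le_trans hsqrt0 ht
  have hlogL1C : 0 < Real.log (((L:ℝ) - 1) * C) := Real.log_pos hL1C1
  have htbsq : 2 * Real.log (((L:ℝ) - 1) * C) ≤ (CrowdDS.tbar f a q p) ^ 2 := by
    have h1 : Real.sqrt (2 * Real.log (((L:ℝ) - 1) * C)) ^ 2
        = 2 * Real.log (((L:ℝ) - 1) * C) := Real.sq_sqrt (by linarith)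
    calc 2 * Real.log (((L:ℝ) - 1) * C)
        = Real.sqrt (2 * Real.log (((L:ℝ) - 1) * C)) ^ 2 := h1.symm
      _ ≤ (CrowdDS.tbar f a q p) ^ 2 := by
          apply pow_le_pow_left₀ hsqrt0 ht
  set E0 : ℝ := Real.exp (-(CrowdDS.tbar f a q p ^ 2) / 2) with hE0def
  have hE00 : 0 < E0 := Real.exp_pos _
  have hE0le : E0 ≤ 1 / (((L:ℝ) - 1) * C) := by
    rw [hE0def]
    have h1 : -(CrowdDS.tbar f a q p ^ 2) / 2 ≤ -Real.log (((L:ℝ) - 1) * C) := by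
      linarith
    calc Real.exp (-(CrowdDS.tbar f a q p ^ 2) / 2)
        ≤ Real.exp (-Real.log (((L:ℝ) - 1) * C)) := Real.exp_le_exp.mpr h1
      _ = 1 / (((L:ℝ) - 1) * C) := by
          rw [Real.exp_neg, Real.exp_log hL1C0, one_div]
  have hLE : ((L:ℝ) - 1) * E0 ≤ P0 := by
    have h1 := mul_le_mul_of_nonneg_left hE0le (by linarith : (0:ℝ) ≤ (L:ℝ) - 1)
    have h2 : ((L:ℝ) - 1) * (1 / (((L:ℝ) - 1) * C)) = 1 / C := by
      field_simp
    rw [h2] at h1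
    rw [hP0def]; exact h1
  -- ## nbar > 0
  have hnbpos : 0 < CrowdDS.nbar f := by
    rcases eq_or_lt_of_le hnb0 with h0 | h; swap
    · exact h
    exfalso
    have htau : ∀ j : Fin N, CrowdDS.tauMin f a q p j = 0 := by
      intro j
      have hset : {x : ℝ | ∃ k l : Fin L, k ≠ l ∧
          x = CrowdDS.gap f a q p j k l / CrowdDS.nbar f} = {0} := by
        ext x
        simp only [Set.mem_setOf_eq, Set.mem_singleton_iff]
        constructor
        · rintro ⟨k, l, hkl, rfl⟩; rw [← h0, div_zero]
        · rintro rfl; exact ⟨k0, l0, hk0l0, by rw [← h0, div_zero]⟩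
      rw [CrowdDS.tauMin, hset, csInf_singleton]
    have htbar_eq : CrowdDS.tbar f a q p = 0 := by
      have hset : {x : ℝ | ∃ j : Fin N, x = CrowdDS.tauMin f a q p j} = {0} := by
        ext x
        simp only [Set.mem_setOf_eq, Set.mem_singleton_iff]
        constructor
        · rintro ⟨j, rfl⟩; exact htau j
        · rintro rfl; exact ⟨⟨0, hN⟩, (htau _).symm⟩
      rw [CrowdDS.tbar, hset, csInf_singleton]
    rw [htbar_eq] at ht
    have : 0 < Real.sqrt (2 * Real.log (((L:ℝ) - 1) * C)) :=
      Real.sqrt_pos.mpr (by linarith)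
    linarith
  -- ## tbar * nbar ≤ gap
  have hgapge : ∀ (j : Fin N) (k l : Fin L), k ≠ l →
      CrowdDS.tbar f a q p * CrowdDS.nbar f ≤ CrowdDS.gap f a q p j k l := by
    intro j k l hkl
    have hfin1 : {x : ℝ | ∃ k l : Fin L, k ≠ l ∧
        x = CrowdDS.gap f a q p j k l / CrowdDS.nbar f}.Finite := by
      apply Set.Finite.subset (Set.finite_range
        (fun kl : Fin L × Fin L => CrowdDS.gap f a q p j kl.1 kl.2 / CrowdDS.nbar f))
      rintro x ⟨k, l, _, rfl⟩; exact ⟨(k, l), rfl⟩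
    have h1 : CrowdDS.tauMin f a q p j
        ≤ CrowdDS.gap f a q p j k l / CrowdDS.nbar f :=
      csInf_le hfin1.bddBelow ⟨k, l, hkl, rfl⟩
    have hfin2 : {x : ℝ | ∃ j : Fin N, x = CrowdDS.tauMin f a q p j}.Finite := by
      apply Set.Finite.subset (Set.finite_range (fun j : Fin N => CrowdDS.tauMin f a q p j))
      rintro x ⟨j, rfl⟩; exact ⟨j, rfl⟩
    have h2 : CrowdDS.tbar f a q p ≤ CrowdDS.tauMin f a q p j :=
      csInf_le hfin2.bddBelow ⟨j, rfl⟩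
    have h3 : CrowdDS.tbar f a q p ≤ CrowdDS.gap f a q p j k l / CrowdDS.nbar f :=
      h2.trans h1
    rwa [le_div_iff₀ hnbpos] at h3
  -- ## per-pair inner bound
  have hinner : ∀ (j : Fin N) (k l : Fin L), k ≠ l →
      ∑ η : Fin M → Fin (L + 1), (∏ i, CrowdDS.condLaw q p i j k (η i)) *
        (if 0 ≤ (∑ i, (f i l (η i) - f i k (η i))) + (a l - a k) then 1 else 0)
      ≤ E0 := by
    intro j k l hkl
    have hw0 : ∀ (i : Fin M) (x : Fin (L + 1)), 0 ≤ CrowdDS.condLaw q p i j k x := by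
      intro i x
      rw [CrowdDS.condLaw]
      split
      · linarith [hq1 i j]
      · exact mul_nonneg (hq0 i j) (hp0 i k _)
    have hwsucc : ∀ (i : Fin M) (x : Fin L),
        CrowdDS.condLaw q p i j k x.succ = q i j * p i k x := by
      intro i x
      rw [CrowdDS.condLaw, dif_neg (Fin.succ_ne_zero x), Fin.pred_succ]
    have hw1 : ∀ i : Fin M, ∑ x, CrowdDS.condLaw q p i j k x = 1 := by
      intro i
      rw [Fin.sum_univ_succ]
      rw [CrowdDS.condLaw, dif_pos rfl]
      rw [Finset.sum_congr rfl fun x _ => hwsucc i x]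
      rw [← Finset.mul_sum, hp1 i k]
      ring
    have hbnd : ∀ (i : Fin M) (x : Fin (L + 1)), |f i l x - f i k x| ≤ b i := by
      intro i x
      induction x using Fin.cases with
      | zero => rw [hf0 i l k]; simpa using hb0 i
      | succ x => exact hble i l k x hkl.symm
    have hmean : CrowdDS.gap f a q p j k l
        = -(∑ i, ∑ x, CrowdDS.condLaw q p i j k x * (f i l x - f i k x)) - (a l - a k) := by
      rw [CrowdDS.gap]
      have hin : ∀ i : Fin M, ∑ x, CrowdDS.condLaw q p i j k x * (f i l x - f i k x)
          = -∑ h : Fin L, q i j * (f i k h.succ - f i l h.succ) * p i k h := by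
        intro i
        rw [Fin.sum_univ_succ]
        rw [CrowdDS.condLaw, dif_pos rfl, hf0 i l k, sub_self, mul_zero, zero_add]
        rw [← Finset.sum_neg_distrib]
        refine Finset.sum_congr rfl fun x _ => ?_
        rw [hwsucc i x]; ring
      rw [Finset.sum_congr rfl fun i _ => hin i]
      rw [Finset.sum_neg_distrib]
      ring
    have hΔ0 : 0 ≤ CrowdDS.gap f a q p j k l :=
      le_trans (mul_nonneg htb0 hnb0) (hgapge j k l hkl)
    have hbound := inner_bound (fun i => CrowdDS.condLaw q p i j k)
      (fun i x => f i l x - f i k x) b hw0 hw1 hbnd (a l - a k)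
      (CrowdDS.gap f a q p j k l) hmean hΔ0 (le_of_eq hnbsq.symm) (pow_pos hnbpos 2)
    refine hbound.trans ?_
    rw [hE0def]
    apply Real.exp_le_exp.mpr
    have hsq : (CrowdDS.tbar f a q p) ^ 2 * (CrowdDS.nbar f) ^ 2
        ≤ (CrowdDS.gap f a q p j k l) ^ 2 := by
      have h1 : (CrowdDS.tbar f a q p * CrowdDS.nbar f) ^ 2
          ≤ (CrowdDS.gap f a q p j k l) ^ 2 :=
        pow_le_pow_left₀ (mul_nonneg htb0 hnb0) (hgapge j k l hkl) 2
      calc (CrowdDS.tbar f a q p) ^ 2 * (CrowdDS.nbar f) ^ 2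
          = (CrowdDS.tbar f a q p * CrowdDS.nbar f) ^ 2 := by ring
        _ ≤ _ := h1
    rw [neg_div, neg_div, neg_le_neg_iff]
    rw [div_le_div_iff₀ (by norm_num) (by positivity)]
    linarith [hsq]
  -- ## sum of priors is 1
  have hpri_sum : ∑ k, pri k = 1 := by
    set j0 : Fin N := ⟨0, hN⟩
    have hmeas : ∀ k : Fin L, MeasurableSet {ω | y j0 ω = k} := fun k =>
      (hym j0) (measurableSet_singleton k)
    have hdisj : Set.PairwiseDisjoint ↑(Finset.univ : Finset (Fin L))
        (fun k => {ω | y j0 ω = k}) := by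
      intro k _ l _ hkl
      rw [Function.onFun, Set.disjoint_left]
      intro ω h1 h2
      exact hkl (h1.symm.trans h2)
    have hunion : ⋃ k ∈ (Finset.univ : Finset (Fin L)), {ω | y j0 ω = k} = Set.univ := by
      ext ω; simp
    have := measure_biUnion_finset (μ := μ) hdisj (fun k _ => hmeas k)
    rw [hunion, measure_univ] at this
    have h2 : (1:ENNReal).toReal = (∑ k, μ {ω | y j0 ω = k}).toReal := by rw [this]
    rw [ENNReal.toReal_one, ENNReal.toReal_sum (fun k _ => measure_ne_top μ _)] at h2
    rw [Finset.sum_congr rfl fun k _ => (hprior j0 k)] at h2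
    exact h2.symm
  -- ## the bad event and its probability
  set Bad : Fin L × (Fin M → Fin (L + 1)) → Prop := fun kη => ∃ l : Fin L, l ≠ kη.1 ∧
    (∑ i, f i kη.1 (kη.2 i)) + a kη.1 ≤ (∑ i, f i l (kη.2 i)) + a l with hBadDef
  have hpj : ∀ j : Fin N,
      (μ {ω | Bad (y j ω, fun i => Z i j ω)}).toReal ≤ P0 := by
    intro j
    set Aset : Fin L × (Fin M → Fin (L + 1)) → Set Ω :=
      fun kη => {ω | y j ω = kη.1 ∧ ∀ i, Z i j ω = kη.2 i} with hAsetDef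
    have hAmeas : ∀ kη, MeasurableSet (Aset kη) := by
      intro kη
      have h1 : Aset kη = (y j ⁻¹' {kη.1}) ∩ (⋂ i, Z i j ⁻¹' {kη.2 i}) := by
        ext ω; simp [Aset, Set.mem_iInter]
      rw [h1]
      exact ((hym j) (measurableSet_singleton _)).inter
        (MeasurableSet.iInter fun i => (hZm i j) (measurableSet_singleton _))
    have hBeq : {ω | Bad (y j ω, fun i => Z i j ω)}
        = ⋃ kη ∈ Finset.univ.filter Bad, Aset kη := by
      ext ω
      simp only [Set.mem_setOf_eq, Set.mem_iUnion, Finset.mem_filter, Finset.mem_univ,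
        true_and, exists_prop]
      constructor
      · intro h
        exact ⟨(y j ω, fun i => Z i j ω), h, rfl, fun i => rfl⟩
      · rintro ⟨⟨k, η⟩, hbad, hy, hZ⟩
        have heq : ((y j ω, fun i => Z i j ω) : Fin L × (Fin M → Fin (L + 1))) = (k, η) :=
          Prod.ext hy (funext hZ)
        rw [heq]; exact hbad
    have hdisj : Set.PairwiseDisjoint ↑(Finset.univ.filter Bad) Aset := by
      intro u _ v _ huv
      rw [Function.onFun, Set.disjoint_left]
      intro ω h1 h2
      exact huv (Prod.ext (h1.1.symm.trans h2.1)
        (funext fun i => (h1.2 i).symm.trans (h2.2 i)))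
    have hμsum := measure_biUnion_finset (μ := μ) hdisj (fun kη _ => hAmeas kη)
    rw [hBeq, hμsum, ENNReal.toReal_sum (fun kη _ => measure_ne_top μ _)]
    have hval : ∀ kη : Fin L × (Fin M → Fin (L + 1)),
        (μ (Aset kη)).toReal = pri kη.1 * ∏ i, CrowdDS.condLaw q p i j kη.1 (kη.2 i) :=
      fun kη => hlaw j kη.1 kη.2
    rw [Finset.sum_congr rfl (fun kη _ => hval kη)]
    rw [Finset.sum_filter, Fintype.sum_prod_type]
    have hprodnn : ∀ (k : Fin L) (η : Fin M → Fin (L + 1)),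
        0 ≤ ∏ i, CrowdDS.condLaw q p i j k (η i) := by
      intro k η
      apply Finset.prod_nonneg
      intro i _
      rw [CrowdDS.condLaw]
      split
      · linarith [hq1 i j]
      · exact mul_nonneg (hq0 i j) (hp0 i k _)
    have hperk : ∀ k : Fin L,
        ∑ η : Fin M → Fin (L + 1), (if Bad (k, η) then
          pri k * ∏ i, CrowdDS.condLaw q p i j k (η i) else 0)
        ≤ pri k * (((L:ℝ) - 1) * E0) := by
      intro k
      have hstep : ∀ η : Fin M → Fin (L + 1), (if Bad (k, η) then
          pri k * ∏ i, CrowdDS.condLaw q p i j k (η i) else 0)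
          ≤ pri k * ((∏ i, CrowdDS.condLaw q p i j k (η i)) *
            ∑ l ∈ Finset.univ.erase k,
              (if 0 ≤ (∑ i, (f i l (η i) - f i k (η i))) + (a l - a k) then 1 else 0)) := by
        intro η
        have hinnn : (0:ℝ) ≤ ∑ l ∈ Finset.univ.erase k,
            (if 0 ≤ (∑ i, (f i l (η i) - f i k (η i))) + (a l - a k) then (1:ℝ) else 0) :=
          Finset.sum_nonneg fun l _ => ite_one_zero_nonneg
        split_ifs with hbad
        · obtain ⟨l, hlk, hle⟩ := hbad
          have hl : l ∈ Finset.univ.erase k := Finset.mem_erase.mpr ⟨hlk, Finset.mem_univ l⟩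
          have hone : (1:ℝ) ≤ ∑ l ∈ Finset.univ.erase k,
              (if 0 ≤ (∑ i, (f i l (η i) - f i k (η i))) + (a l - a k) then (1:ℝ) else 0) := by
            have hterm : (if 0 ≤ (∑ i, (f i l (η i) - f i k (η i))) + (a l - a k)
                then (1:ℝ) else 0) = 1 := by
              rw [if_pos]
              rw [Finset.sum_sub_distrib]
              simp only at hle ⊢
              linarith
            refine le_trans (le_of_eq hterm.symm) (Finset.single_le_sum
              (f := fun l => if 0 ≤ (∑ i, (f i l (η i) - f i k (η i))) + (a l - a k)
                then (1:ℝ) else 0) (fun l _ => ite_one_zero_nonneg) hl)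
          calc pri k * ∏ i, CrowdDS.condLaw q p i j k (η i)
              = pri k * ((∏ i, CrowdDS.condLaw q p i j k (η i)) * 1) := by ring
            _ ≤ _ := by
                apply mul_le_mul_of_nonneg_left _ (hpri k)
                exact mul_le_mul_of_nonneg_left hone (hprodnn k η)
        · exact mul_nonneg (hpri k) (mul_nonneg (hprodnn k η) hinnn)
      calc ∑ η : Fin M → Fin (L + 1), (if Bad (k, η) then
            pri k * ∏ i, CrowdDS.condLaw q p i j k (η i) else 0)
          ≤ ∑ η : Fin M → Fin (L + 1), pri k * ((∏ i, CrowdDS.condLaw q p i j k (η i)) *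
            ∑ l ∈ Finset.univ.erase k,
              (if 0 ≤ (∑ i, (f i l (η i) - f i k (η i))) + (a l - a k) then 1 else 0)) :=
            Finset.sum_le_sum fun η _ => hstep η
        _ = pri k * ∑ l ∈ Finset.univ.erase k, ∑ η : Fin M → Fin (L + 1),
            (∏ i, CrowdDS.condLaw q p i j k (η i)) *
              (if 0 ≤ (∑ i, (f i l (η i) - f i k (η i))) + (a l - a k) then 1 else 0) := by
            rw [← Finset.mul_sum]
            congr 1
            rw [Finset.sum_comm]
            refine Finset.sum_congr rfl fun η _ => ?_
            rw [Finset.mul_sum]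
        _ ≤ pri k * ∑ l ∈ Finset.univ.erase k, E0 := by
            apply mul_le_mul_of_nonneg_left _ (hpri k)
            refine Finset.sum_le_sum fun l hl => ?_
            exact hinner j k l (Finset.mem_erase.mp hl).1.symm
        _ = pri k * (((L:ℝ) - 1) * E0) := by
            rw [Finset.sum_const, Finset.card_erase_of_mem (Finset.mem_univ k),
              Finset.card_univ, Fintype.card_fin]
            have : ((L - 1 : ℕ) : ℝ) = (L:ℝ) - 1 := by
              rw [Nat.cast_sub (by omega)]; simp
            rw [nsmul_eq_mul, this]
    calc ∑ k, ∑ η : Fin M → Fin (L + 1), (if Bad (k, η) then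
          pri k * ∏ i, CrowdDS.condLaw q p i j k (η i) else 0)
        ≤ ∑ k, pri k * (((L:ℝ) - 1) * E0) := Finset.sum_le_sum fun k _ => hperk k
      _ = (((L:ℝ) - 1) * E0) := by
          rw [← Finset.sum_mul, hpri_sum, one_mul]
      _ ≤ P0 := hLE
  -- ## indicator variables
  set X : Fin N → Ω → ℝ := fun j ω => if Bad (y j ω, fun i => Z i j ω) then 1 else 0 with hXdef
  have hφm : Measurable (fun kη : Fin L × (Fin M → Fin (L + 1)) =>
      if Bad kη then (1:ℝ) else 0) := measurable_of_countable _
  have hTm : ∀ j : Fin N, Measurable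
      (fun ω => ((y j ω, fun i => Z i j ω) : Fin L × (Fin M → Fin (L + 1)))) :=
    fun j => (hym j).prodMk (measurable_pi_lambda _ fun i => hZm i j)
  have hXm : ∀ j, Measurable (X j) := fun j => hφm.comp (hTm j)
  have hXindep : iIndepFun X μ := by
    have h := hindep.comp (fun _ kη => if Bad kη then (1:ℝ) else 0)
      (fun _ => measurable_of_countable _)
    exact h
  have hBmeas : ∀ j : Fin N, MeasurableSet {ω | Bad (y j ω, fun i => Z i j ω)} := by
    intro j
    have h1 : {ω | Bad (y j ω, fun i => Z i j ω)}
        = (fun ω => ((y j ω, fun i => Z i j ω) : Fin L × (Fin M → Fin (L + 1))))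
          ⁻¹' {kη | Bad kη} := rfl
    rw [h1]
    exact (hTm j) ((Set.to_countable _).measurableSet)
  have hXrep : ∀ (j : Fin N) (t : ℝ), (fun ω => Real.exp (t * X j ω))
      = fun ω => ({ω | Bad (y j ω, fun i => Z i j ω)}.indicator
          (fun _ => Real.exp t - 1) ω + 1) := by
    intro j t
    funext ω
    rw [Set.indicator_apply]
    by_cases hb : ω ∈ {ω | Bad (y j ω, fun i => Z i j ω)}
    · rw [if_pos hb]
      have hb' : Bad (y j ω, fun i => Z i j ω) := hb
      simp only [X, if_pos hb', mul_one]
      ring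
    · rw [if_neg hb]
      have hb' : ¬ Bad (y j ω, fun i => Z i j ω) := hb
      simp only [X, if_neg hb', mul_zero, Real.exp_zero]
      norm_num
  have hXint : ∀ (j : Fin N) (t : ℝ), Integrable (fun ω => Real.exp (t * X j ω)) μ := by
    intro j t
    rw [hXrep j t]
    exact ((integrable_const (Real.exp t - 1)).indicator (hBmeas j)).add (integrable_const 1)
  set pj : Fin N → ℝ := fun j => (μ {ω | Bad (y j ω, fun i => Z i j ω)}).toReal with hpjdef
  have hpjnn : ∀ j, 0 ≤ pj j := fun j => ENNReal.toReal_nonneg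
  have hmgfj : ∀ (j : Fin N) (t : ℝ), mgf (X j) μ t = 1 + (Real.exp t - 1) * pj j := by
    intro j t
    rw [mgf, hXrep j t]
    rw [integral_add ((integrable_const (Real.exp t - 1)).indicator (hBmeas j))
      (integrable_const 1)]
    rw [integral_indicator_const _ (hBmeas j), integral_const]
    simp only [measureReal_def, measure_univ, ENNReal.toReal_one, smul_eq_mul, one_smul, one_mul, pj]
    ring
  -- ## optimal t
  set tst : ℝ := Real.log (ε * (1 - P0) / ((1 - ε) * P0)) with htstdef
  have hargpos : 0 < ε * (1 - P0) / ((1 - ε) * P0) := by positivity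
  have harg1 : 1 ≤ ε * (1 - P0) / ((1 - ε) * P0) := by
    rw [le_div_iff₀ (by positivity)]
    have h1 : 1 * ((1 - ε) * P0) = P0 - ε * P0 := by ring
    have h2 : ε * (1 - P0) = ε - ε * P0 := by ring
    linarith [hP0ε]
  have htst0 : 0 ≤ tst := Real.log_nonneg harg1
  have hexptst : Real.exp tst = ε * (1 - P0) / ((1 - ε) * P0) := Real.exp_log hargpos
  have hexptst1 : 1 ≤ Real.exp tst := Real.one_le_exp htst0
  -- ## Chernoff bound
  have hint : Integrable (fun ω => Real.exp (tst * (∑ j, X j) ω)) μ :=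
    hXindep.integrable_exp_mul_sum hXm (fun j _ => hXint j tst)
  have hchern := measure_ge_le_exp_mul_mgf (μ := μ) (X := ∑ j, X j) ((N:ℝ) * ε) htst0 hint
  have hmgfsum : mgf (∑ j, X j) μ tst = ∏ j, mgf (X j) μ tst :=
    hXindep.mgf_sum hXm Finset.univ
  set R : ℝ := 1 + (Real.exp tst - 1) * P0 with hRdef
  have hprodle : ∏ j, mgf (X j) μ tst ≤ R ^ N := by
    have h1 : ∀ j : Fin N, mgf (X j) μ tst ≤ R := by
      intro j
      rw [hmgfj j tst, hRdef]
      have h2 := mul_le_mul_of_nonneg_left (hpj j) (by linarith : (0:ℝ) ≤ Real.exp tst - 1)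
      linarith
    calc ∏ j, mgf (X j) μ tst ≤ ∏ _j : Fin N, R :=
        Finset.prod_le_prod (fun j _ => by
          rw [hmgfj j tst]
          have h2 := mul_nonneg (by linarith : (0:ℝ) ≤ Real.exp tst - 1) (hpjnn j)
          linarith) (fun j _ => h1 j)
      _ = R ^ N := by rw [Finset.prod_const, Finset.card_univ, Fintype.card_fin]
  have hReq : R = (1 - P0) / (1 - ε) := by
    rw [hRdef, hexptst]
    field_simp
    ring
  have hRpos : 0 < R := by rw [hReq]; positivity
  -- ## final numeric bound
  have hfinal : Real.exp (-tst * ((N:ℝ) * ε)) * R ^ N ≤ δ := by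
    have hRN : R ^ N = Real.exp ((N:ℝ) * Real.log R) := by
      rw [Real.exp_nat_mul, Real.exp_log hRpos]
    rw [hRN, ← Real.exp_add]
    set K : ℝ := ε * (Real.log ε - Real.log P0)
      + (1 - ε) * (Real.log (1 - ε) - Real.log (1 - P0)) with hKdef
    have hlogt : tst = Real.log ε + Real.log (1 - P0)
        - (Real.log (1 - ε) + Real.log P0) := by
      rw [htstdef, Real.log_div (mul_pos hε0 h1P0).ne' (mul_pos h1ε hP00).ne',
        Real.log_mul hε0.ne' h1P0.ne', Real.log_mul h1ε.ne' hP00.ne']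
    have hlogR : Real.log R = Real.log (1 - P0) - Real.log (1 - ε) := by
      rw [hReq, Real.log_div h1P0.ne' h1ε.ne']
    have hexp_eq : -tst * ((N:ℝ) * ε) + (N:ℝ) * Real.log R = (N:ℝ) * (-K) := by
      rw [hlogt, hlogR, hKdef]; ring
    rw [hexp_eq]
    have hlogP0 : Real.log P0 = -Real.log C := by
      rw [hP0def, one_div, Real.log_inv]
    have hlogC : A / ε ≤ Real.log C := by
      have h1 : Real.exp (A / ε) ≤ C := by rw [hCdef]; linarith
      have h2 := Real.log_le_log (Real.exp_pos _) h1
      rwa [Real.log_exp] at h2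
    have hεlogC : A ≤ ε * Real.log C := by
      rw [div_le_iff₀ hε0] at hlogC
      linarith
    have hlog1P0 : Real.log (1 - P0) ≤ 0 := Real.log_nonpos (by linarith) (by linarith)
    have hKge : (N:ℝ)⁻¹ * Real.log (1 / δ) ≤ K := by
      have e2 : (N:ℝ)⁻¹ * Real.log (1 / δ)
          = A + ε * Real.log ε + (1 - ε) * Real.log (1 - ε) := by
        rw [hA]; ring
      rw [hKdef, hlogP0, e2]
      have h3 : 0 ≤ (1 - ε) * (-Real.log (1 - P0)) :=
        mul_nonneg h1ε.le (neg_nonneg.mpr hlog1P0)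
      linarith [hεlogC, h3]
    have hNK : Real.log (1 / δ) ≤ (N:ℝ) * K := by
      calc Real.log (1 / δ) = (N:ℝ) * ((N:ℝ)⁻¹ * Real.log (1 / δ)) := by
            field_simp
        _ ≤ (N:ℝ) * K := mul_le_mul_of_nonneg_left hKge (by positivity)
    have hlogδ : Real.log (1 / δ) = -Real.log δ := by rw [one_div, Real.log_inv]
    have h4 : (N:ℝ) * (-K) ≤ Real.log δ := by
      rw [hlogδ] at hNK; linarith
    calc Real.exp ((N:ℝ) * (-K)) ≤ Real.exp (Real.log δ) := Real.exp_le_exp.mpr h4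
      _ = δ := Real.exp_log hδ0
  -- ## conclusion
  set G : Set Ω := {ω | (N:ℝ) * ε ≤ (∑ j, X j) ω} with hGdef
  have hGmeas : MeasurableSet G := by
    apply measurableSet_le measurable_const
    have h1 : Measurable (fun ω => ∑ j, X j ω) :=
      Finset.measurable_sum Finset.univ (fun j _ => hXm j)
    have h2 : (∑ j, X j) = fun ω => ∑ j, X j ω := by
      funext ω; rw [Finset.sum_apply]
    rw [h2]
    exact h1
  have hGle : (μ G).toReal ≤ δ := by
    refine le_trans hchern ?_
    rw [hmgfsum]
    refine le_trans ?_ hfinal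
    exact mul_le_mul_of_nonneg_left hprodle (Real.exp_pos _).le
  have hsub : {ω | CrowdDS.errRate y yhat ω ≤ ε}ᶜ ⊆ G := by
    intro ω hω
    simp only [Set.mem_compl_iff, Set.mem_setOf_eq, not_le] at hω
    have hle : ∀ j : Fin N, (if yhat j ω ≠ y j ω then (1:ℝ) else 0) ≤ X j ω := by
      intro j
      by_cases hne : yhat j ω ≠ y j ω
      · rw [if_pos hne]
        have hbad : Bad (y j ω, fun i => Z i j ω) :=
          ⟨yhat j ω, hne, hyhat j ω (y j ω)⟩
        simp only [X, if_pos hbad]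
        exact le_refl 1
      · rw [if_neg hne]
        simp only [X]
        exact ite_one_zero_nonneg
    have hsum : ∑ j, (if yhat j ω ≠ y j ω then (1:ℝ) else 0) ≤ ∑ j, X j ω :=
      Finset.sum_le_sum fun j _ => hle j
    rw [CrowdDS.errRate] at hω
    have hNε : (N:ℝ) * ε < ∑ j, (if yhat j ω ≠ y j ω then (1:ℝ) else 0) := by
      have h2 := mul_lt_mul_of_pos_left hω hNpos
      rw [← mul_assoc, mul_inv_cancel₀ hNpos.ne', one_mul] at h2
      exact h2
    show (N:ℝ) * ε ≤ (∑ j, X j) ω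
    rw [Finset.sum_apply]
    linarith
  calc 1 - δ ≤ 1 - (μ G).toReal := by linarith
    _ = (μ Gᶜ).toReal := by
        rw [prob_compl_eq_one_sub hGmeas,
          ENNReal.toReal_sub_of_le prob_le_one ENNReal.one_ne_top, ENNReal.toReal_one]
    _ ≤ (μ {ω | CrowdDS.errRate y yhat ω ≤ ε}).toReal :=
        ENNReal.toReal_mono (measure_ne_top μ _)
          (measure_mono (Set.compl_subset_comm.mp hsub))
end
end

section
/- Under the Dawid–Skene model with a decomposable aggregation rule: for all ε, δ ∈ (0,1), setting A = H(ε) + (1/N)·ln(1/δ) with H(ε) = −ε·ln ε − (1−ε)·ln(1−ε), and G = 1 + exp(A/(1−ε)), if t̃ ≤ −sqrt(2·ln G), then the error rate satisfies E_N ≥ ε with probability at least 1 − δ. -/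
open MeasureTheory ProbabilityTheory Real

noncomputable section

section AuxLemmas
open Real Finset

lemma crowd_hoeff {ι : Type*} [Fintype ι] (w g : ι → ℝ) (D t : ℝ)
    (hw : ∀ h, 0 ≤ w h) (hw1 : ∑ h, w h = 1) (hg : ∀ h, |g h| ≤ D) (ht : 0 ≤ t) :
    ∑ h, w h * Real.exp (t * g h)
      ≤ Real.exp (t * (∑ h, w h * g h) + t ^ 2 * D ^ 2 / 2) := by
  obtain ⟨h₀, -, hh₀⟩ : ∃ h ∈ Finset.univ, (0:ℝ) < w h := by
    apply Finset.exists_lt_of_sum_lt (f := fun _ => (0:ℝ))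
    rw [hw1, Finset.sum_const_zero]; norm_num
  have hD : 0 ≤ D := le_trans (abs_nonneg (g h₀)) (hg h₀)
  set μ : ℝ := ∑ h, w h * g h with hμ
  set W : ℝ → ℝ := fun s => ∑ h, w h * Real.exp (s * g h) with hW
  set W1 : ℝ → ℝ := fun s => ∑ h, w h * g h * Real.exp (s * g h) with hW1
  set W2 : ℝ → ℝ := fun s => ∑ h, w h * g h ^ 2 * Real.exp (s * g h) with hW2
  have hWpos : ∀ s, 0 < W s := by
    intro s
    apply Finset.sum_pos'
    · intro h _; exact mul_nonneg (hw h) (Real.exp_pos _).le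
    · exact ⟨h₀, Finset.mem_univ _, mul_pos hh₀ (Real.exp_pos _)⟩
  have hWd : ∀ s, HasDerivAt W (W1 s) s := by
    intro s
    have : HasDerivAt W (∑ h, w h * (Real.exp (s * g h) * g h)) s := by
      apply HasDerivAt.fun_sum
      intro h _
      exact ((hasDerivAt_mul_const (g h)).exp).const_mul (w h)
    convert this using 1
    simp only [hW1]; apply Finset.sum_congr rfl; intro h _; ring
  have hW1d : ∀ s, HasDerivAt W1 (W2 s) s := by
    intro s
    have : HasDerivAt W1 (∑ h, w h * g h * (Real.exp (s * g h) * g h)) s := by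
      apply HasDerivAt.fun_sum
      intro h _
      exact ((hasDerivAt_mul_const (g h)).exp).const_mul (w h * g h)
    convert this using 1
    simp only [hW2]; apply Finset.sum_congr rfl; intro h _; ring
  have hW2le : ∀ s, W2 s ≤ D ^ 2 * W s := by
    intro s
    rw [hW2, hW, Finset.mul_sum]
    apply Finset.sum_le_sum
    intro h _
    have hg2 : g h ^ 2 ≤ D ^ 2 := by
      have := hg h; nlinarith [abs_nonneg (g h), sq_abs (g h)]
    have he : 0 < Real.exp (s * g h) := Real.exp_pos _
    nlinarith [hw h, mul_le_mul_of_nonneg_left hg2 (hw h)]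
  have hW0 : W 0 = 1 := by
    rw [hW]; simp [hw1]
  have hW10 : W1 0 = μ := by
    rw [hW1, hμ]; simp
  -- Step 1 : W1 s / W s ≤ μ + D^2 * s for s ≥ 0
  set Gf : ℝ → ℝ := fun s => μ + D ^ 2 * s - W1 s / W s with hGf
  have hGd : ∀ s, HasDerivAt Gf
      (D ^ 2 - (W2 s * W s - W1 s * W1 s) / (W s) ^ 2) s := by
    intro s
    have h1 : HasDerivAt (fun s => μ + D ^ 2 * s) (D ^ 2) s := by
      simpa using ((hasDerivAt_id s).const_mul (D ^ 2)).const_add μ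
    exact h1.sub (((hW1d s).div (hWd s) (ne_of_gt (hWpos s))))
  have hGmono : Monotone Gf := by
    apply monotone_of_deriv_nonneg
    · exact fun s => (hGd s).differentiableAt
    · intro s
      rw [(hGd s).deriv]
      have hW2' := hW2le s
      have hWp := hWpos s
      have : (W2 s * W s - W1 s * W1 s) / (W s) ^ 2 ≤ D ^ 2 := by
        rw [div_le_iff₀ (by positivity)]
        nlinarith [sq_nonneg (W1 s), mul_le_mul_of_nonneg_right hW2' (le_of_lt hWp)]
      linarith
  have hG0 : Gf 0 = 0 := by
    rw [hGf]; simp [hW10, hW0]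
  have hstep1 : ∀ s, 0 ≤ s → W1 s / W s ≤ μ + D ^ 2 * s := by
    intro s hs
    have := hGmono hs
    rw [hG0] at this
    simp only [hGf] at this
    linarith
  -- Step 2
  set Ff : ℝ → ℝ := fun s => (s * μ + s ^ 2 * D ^ 2 / 2) - Real.log (W s) with hFf
  have hFd : ∀ s, HasDerivAt Ff (μ + s * D ^ 2 - W1 s / W s) s := by
    intro s
    have h1 : HasDerivAt (fun s => s * μ + s ^ 2 * D ^ 2 / 2)
        (μ + s * D ^ 2) s := by
      have ha : HasDerivAt (fun s : ℝ => s * μ) μ s := hasDerivAt_mul_const μ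
      have hb : HasDerivAt (fun s : ℝ => s ^ 2 * D ^ 2 / 2)
          (2 * s ^ 1 * D ^ 2 / 2) s := ((hasDerivAt_pow 2 s).mul_const (D ^ 2)).div_const 2
      have := ha.add hb
      exact this.congr_deriv (by ring)
    have h2 : HasDerivAt (fun s => Real.log (W s)) (W1 s / W s) s :=
      (hWd s).log (ne_of_gt (hWpos s))
    exact h1.sub h2
  have hFdiff : Differentiable ℝ Ff := fun s => (hFd s).differentiableAt
  have hFmono : MonotoneOn Ff (Set.Ici 0) := by
    apply monotoneOn_of_deriv_nonneg (convex_Ici 0) hFdiff.continuous.continuousOn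
      hFdiff.differentiableOn
    intro s hs
    rw [interior_Ici] at hs
    rw [(hFd s).deriv]
    have := hstep1 s (le_of_lt hs)
    linarith
  have hF0 : Ff 0 = 0 := by
    rw [hFf]; simp [hW0]
  have hFt : 0 ≤ Ff t := by
    have := hFmono (Set.self_mem_Ici) (Set.mem_Ici.mpr ht) ht
    rw [hF0] at this; exact this
  have hlog : Real.log (W t) ≤ t * μ + t ^ 2 * D ^ 2 / 2 := by
    simp only [hFf] at hFt
    nlinarith
  calc W t = Real.exp (Real.log (W t)) := (Real.exp_log (hWpos t)).symm
    _ ≤ Real.exp (t * μ + t ^ 2 * D ^ 2 / 2) := Real.exp_le_exp.mpr hlog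

lemma crowd_cube {M : ℕ} {ι : Type*} [Fintype ι] (w g : Fin M → ι → ℝ)
    (Dv : Fin M → ℝ) (c R : ℝ)
    (hw : ∀ i h, 0 ≤ w i h) (hw1 : ∀ i, ∑ h, w i h = 1)
    (hg : ∀ i h, |g i h| ≤ Dv i) (hR : 0 ≤ R)
    (hD : 0 < ∑ i, Dv i ^ 2)
    (hΔ : (∑ i, ∑ h, w i h * g i h) + c ≤ -(Real.sqrt (∑ i, Dv i ^ 2) * R)) :
    ∑ h ∈ Finset.univ.filter (fun h : Fin M → ι => 0 ≤ (∑ i, g i (h i)) + c),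
      ∏ i, w i (h i) ≤ Real.exp (-(R ^ 2) / 2) := by
  classical
  set nb2 : ℝ := ∑ i, Dv i ^ 2 with hnb2
  set Δ : ℝ := (∑ i, ∑ h, w i h * g i h) + c with hΔdef
  have hnb : Real.sqrt nb2 > 0 := Real.sqrt_pos.mpr hD
  have hΔneg : Δ ≤ 0 := le_trans hΔ (by nlinarith)
  set t : ℝ := -Δ / nb2 with htdef
  have ht : 0 ≤ t := div_nonneg (by linarith) (le_of_lt hD)
  have step1 : ∑ h ∈ Finset.univ.filter
        (fun h : Fin M → ι => 0 ≤ (∑ i, g i (h i)) + c), ∏ i, w i (h i)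
      ≤ ∑ h : Fin M → ι, Real.exp (t * c) * ∏ i, (w i (h i) * Real.exp (t * g i (h i))) := by
    refine le_trans (Finset.sum_le_sum ?_)
      (Finset.sum_le_sum_of_subset_of_nonneg (Finset.filter_subset _ _) ?_)
    · intro h hmem
      rw [Finset.mem_filter] at hmem
      have hexp : Real.exp (t * ((∑ i, g i (h i)) + c))
          = Real.exp (t * c) * ∏ i, Real.exp (t * g i (h i)) := by
        rw [← Real.exp_sum, ← Real.exp_add]
        congr 1
        rw [← Finset.mul_sum]
        ring
      have h1 : (1:ℝ) ≤ Real.exp (t * ((∑ i, g i (h i)) + c)) :=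
        Real.one_le_exp (mul_nonneg ht hmem.2)
      have hpn : 0 ≤ ∏ i, w i (h i) := Finset.prod_nonneg fun i _ => hw i _
      calc ∏ i, w i (h i)
          ≤ (∏ i, w i (h i)) * Real.exp (t * ((∑ i, g i (h i)) + c)) :=
            le_mul_of_one_le_right hpn h1
        _ = Real.exp (t * c) * ∏ i, (w i (h i) * Real.exp (t * g i (h i))) := by
            rw [hexp, Finset.prod_mul_distrib]; ring
    · intro h _ _
      exact mul_nonneg (Real.exp_pos _).le
        (Finset.prod_nonneg fun i _ => mul_nonneg (hw i _) (Real.exp_pos _).le)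
  have step2 : ∑ h : Fin M → ι, Real.exp (t * c) * ∏ i, (w i (h i) * Real.exp (t * g i (h i)))
      = Real.exp (t * c) * ∏ i, ∑ v : ι, w i v * Real.exp (t * g i v) := by
    rw [← Finset.mul_sum, Fintype.prod_sum]
  have step3 : Real.exp (t * c) * ∏ i, ∑ v : ι, w i v * Real.exp (t * g i v)
      ≤ Real.exp (t * c) * ∏ i, Real.exp (t * (∑ v, w i v * g i v) + t ^ 2 * Dv i ^ 2 / 2) := by
    apply mul_le_mul_of_nonneg_left _ (Real.exp_pos _).le
    apply Finset.prod_le_prod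
    · intro i _
      exact Finset.sum_nonneg fun v _ => mul_nonneg (hw i v) (Real.exp_pos _).le
    · intro i _
      exact crowd_hoeff (w i) (g i) (Dv i) t (hw i) (hw1 i) (hg i) ht
  have step4 : Real.exp (t * c) * ∏ i, Real.exp (t * (∑ v, w i v * g i v) + t ^ 2 * Dv i ^ 2 / 2)
      ≤ Real.exp (-(R ^ 2) / 2) := by
    rw [← Real.exp_sum, ← Real.exp_add, Real.exp_le_exp]
    have hsum : t * c + ∑ i, (t * (∑ v, w i v * g i v) + t ^ 2 * Dv i ^ 2 / 2)
        = t * Δ + t ^ 2 * nb2 / 2 := by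
      rw [Finset.sum_add_distrib, ← Finset.mul_sum, ← Finset.sum_div, ← Finset.mul_sum, hΔdef, hnb2]
      ring
    rw [hsum]
    have hsq : nb2 * R ^ 2 ≤ Δ ^ 2 := by
      have h1 : Real.sqrt nb2 * R ≤ -Δ := by linarith
      have h2 : (Real.sqrt nb2 * R) ^ 2 ≤ (-Δ) ^ 2 := by
        apply pow_le_pow_left₀ (mul_nonneg hnb.le hR) h1
      have h3 : Real.sqrt nb2 ^ 2 = nb2 := Real.sq_sqrt hD.le
      nlinarith
    have htval : t * Δ + t ^ 2 * nb2 / 2 = -(Δ ^ 2) / (2 * nb2) := by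
      rw [htdef]
      field_simp
      ring
    rw [htval]
    rw [div_le_div_iff₀ (by linarith) (by norm_num)]
    nlinarith
  linarith [step1, step2 ▸ step1, step3, step4]

lemma crowd_binom (N m : ℕ) (hm : m ≤ N) {ε : ℝ} (hε0 : 0 < ε) (hε1 : ε < 1) :
    (N.choose m : ℝ) * ((1 - ε) ^ m * ε ^ (N - m)) ≤ 1 := by
  have key := add_pow (1 - ε) ε N
  rw [sub_add_cancel, one_pow] at key
  have hmem : m ∈ Finset.range (N + 1) := Finset.mem_range.mpr (Nat.lt_succ_of_le hm)
  have h2 := Finset.single_le_sum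
    (f := fun k => (1 - ε) ^ k * ε ^ (N - k) * (N.choose k : ℝ))
    (fun k _ => by
      have h1 : (0:ℝ) ≤ 1 - ε := by linarith
      exact mul_nonneg (mul_nonneg (pow_nonneg h1 _) (pow_nonneg hε0.le _)) (Nat.cast_nonneg _))
    hmem
  calc (N.choose m : ℝ) * ((1 - ε) ^ m * ε ^ (N - m))
      = (1 - ε) ^ m * ε ^ (N - m) * (N.choose m : ℝ) := by ring
    _ ≤ ∑ k ∈ Finset.range (N + 1), (1 - ε) ^ k * ε ^ (N - k) * (N.choose k : ℝ) := h2
    _ = 1 := key.symm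

lemma crowd_arith (N m : ℕ) (hm : m ≤ N) (hN : 0 < N) {ε δ : ℝ}
    (hε0 : 0 < ε) (hε1 : ε < 1) (hδ0 : 0 < δ) (hδ1 : δ < 1)
    (hmge : (1 - ε) * N ≤ (m : ℝ)) :
    (N.choose m : ℝ) * ((1 + Real.exp (((-ε * Real.log ε - (1 - ε) * Real.log (1 - ε))
        + (N : ℝ)⁻¹ * Real.log (1 / δ)) / (1 - ε)))⁻¹) ^ m ≤ δ := by
  set H : ℝ := -ε * Real.log ε - (1 - ε) * Real.log (1 - ε) with hH
  set c : ℝ := (N : ℝ)⁻¹ * Real.log (1 / δ) with hc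
  set X : ℝ := (H + c) / (1 - ε) with hX
  have h1ε : (0:ℝ) < 1 - ε := by linarith
  have hlε : Real.log ε < 0 := Real.log_neg hε0 hε1
  have hl1ε : Real.log (1 - ε) < 0 := Real.log_neg h1ε (by linarith)
  have hc0 : 0 < c := by
    apply mul_pos (by positivity)
    rw [one_div]
    have : (1:ℝ) < δ⁻¹ := (one_lt_inv₀ hδ0).mpr hδ1
    exact Real.log_pos this
  have hHge : -(1 - ε) * Real.log (1 - ε) ≤ H := by
    have : 0 ≤ -ε * Real.log ε := by nlinarith
    rw [hH]; nlinarith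
  have hXge : -Real.log (1 - ε) ≤ X := by
    rw [hX, le_div_iff₀ h1ε]; nlinarith
  have hXc : (1 - ε) * X = H + c := by
    rw [hX]; field_simp
  have hK : 0 < X + Real.log (1 - ε) - Real.log ε := by nlinarith
  have hθ : (1 + Real.exp X)⁻¹ ≤ Real.exp (-X) := by
    rw [Real.exp_neg]
    apply inv_anti₀ (Real.exp_pos X)
    linarith [Real.exp_pos X]
  have hθ0 : (0:ℝ) ≤ (1 + Real.exp X)⁻¹ := by positivity
  have hcast : ((N - m : ℕ) : ℝ) = (N : ℝ) - (m : ℝ) := by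
    rw [Nat.cast_sub hm]
  -- main log inequality
  have hmain : Real.exp (-X) ^ m ≤ δ * ((1 - ε) ^ m * ε ^ (N - m)) := by
    rw [← Real.exp_nat_mul]
    have hrhs : δ * ((1 - ε) ^ m * ε ^ (N - m))
        = Real.exp (Real.log δ + m * Real.log (1 - ε) + ((N - m : ℕ) : ℝ) * Real.log ε) := by
      rw [Real.exp_add, Real.exp_add, Real.exp_log hδ0, ← Real.log_pow, ← Real.log_pow,
        Real.exp_log (by positivity), Real.exp_log (by positivity), mul_assoc]
    rw [hrhs, Real.exp_le_exp, hcast]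
    have hlogδ : Real.log δ = -((N : ℝ) * c) := by
      rw [hc, one_div, Real.log_inv]
      field_simp
    have hcoef : (1 - ε) * (N:ℝ) * (X + Real.log (1 - ε) - Real.log ε)
        ≤ (m:ℝ) * (X + Real.log (1 - ε) - Real.log ε) :=
      mul_le_mul_of_nonneg_right hmge hK.le
    have hbase : Real.log δ + (1 - ε) * (N:ℝ) * (X + Real.log (1 - ε) - Real.log ε)
        + (N:ℝ) * Real.log ε = 0 := by
      rw [hlogδ]
      linear_combination (N:ℝ) * hXc + (N:ℝ) * hH
    linarith [hcoef, hbase]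
  have hpos : (0:ℝ) < (1 - ε) ^ m * ε ^ (N - m) := by positivity
  have hchoose : (N.choose m : ℝ) ≤ ((1 - ε) ^ m * ε ^ (N - m))⁻¹ := by
    rw [← one_div, le_div_iff₀ hpos]
    exact crowd_binom N m hm hε0 hε1
  calc (N.choose m : ℝ) * ((1 + Real.exp X)⁻¹) ^ m
      ≤ ((1 - ε) ^ m * ε ^ (N - m))⁻¹ * Real.exp (-X) ^ m := by
        apply mul_le_mul hchoose (pow_le_pow_left₀ hθ0 hθ m) (by positivity) (by positivity)
    _ ≤ ((1 - ε) ^ m * ε ^ (N - m))⁻¹ * (δ * ((1 - ε) ^ m * ε ^ (N - m))) := by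
        apply mul_le_mul_of_nonneg_left hmain (by positivity)
    _ = δ := by
        rw [mul_comm δ _, ← mul_assoc, inv_mul_cancel₀ (ne_of_gt hpos), one_mul]

end AuxLemmas

open scoped ENNReal in
/-- Under the general Dawid–Skene model with a decomposable aggregation
rule: for all `ε, δ ∈ (0,1)`, with `A = H(ε) + (1/N)·ln(1/δ)` and `G = 1 + exp(A/(1−ε))`,
if `t̃ ≤ −sqrt(2 ln G)`, then `E_N ≥ ε` with probability at least `1 − δ`. -/
theorem error_rate_lower_bound_prob_delta
    {Ω : Type*} [MeasurableSpace Ω] (μ : Measure Ω) [IsProbabilityMeasure μ]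
    {M N L : ℕ} (hM : 0 < M) (hN : 0 < N) (hL : 2 ≤ L)
    (y : Fin N → Ω → Fin L) (Z : Fin M → Fin N → Ω → Fin (L + 1))
    (hym : ∀ j, Measurable (y j)) (hZm : ∀ i j, Measurable (Z i j))
    (pri : Fin L → ℝ) (q : Fin M → Fin N → ℝ) (p : Fin M → Fin L → Fin L → ℝ)
    (hpri : ∀ k, 0 ≤ pri k) (hq0 : ∀ i j, 0 ≤ q i j) (hq1 : ∀ i j, q i j ≤ 1)
    (hp0 : ∀ i k h, 0 ≤ p i k h) (hp1 : ∀ i k, ∑ h, p i k h = 1)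
    (hprior : ∀ (j : Fin N) (k : Fin L), (μ {ω | y j ω = k}).toReal = pri k)
    (hlaw : ∀ (j : Fin N) (k : Fin L) (h : Fin M → Fin (L + 1)),
      (μ {ω | y j ω = k ∧ ∀ i, Z i j ω = h i}).toReal
        = pri k * ∏ i, CrowdDS.condLaw q p i j k (h i))
    (hindep : iIndepFun (fun j ω => (y j ω, fun i => Z i j ω)) μ)
    (f : Fin M → Fin L → Fin (L + 1) → ℝ) (hf0 : ∀ i k k', f i k 0 = f i k' 0)
    (a : Fin L → ℝ)
    (yhat : Fin N → Ω → Fin L) (hyhatm : ∀ j, Measurable (yhat j))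
    (hyhat : ∀ (j : Fin N) (ω : Ω) (k : Fin L),
      (∑ i, f i k (Z i j ω)) + a k ≤ (∑ i, f i (yhat j ω) (Z i j ω)) + a (yhat j ω))
    {ε δ : ℝ} (hε0 : 0 < ε) (hε1 : ε < 1) (hδ0 : 0 < δ) (hδ1 : δ < 1)
    (ht : CrowdDS.ttil f a q p
      ≤ -Real.sqrt (2 * Real.log
          (1 + Real.exp (((-ε * Real.log ε - (1 - ε) * Real.log (1 - ε))
            + (N : ℝ)⁻¹ * Real.log (1 / δ)) / (1 - ε))))) :
    1 - δ ≤ (μ {ω | ε ≤ CrowdDS.errRate y yhat ω}).toReal := by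
  classical
  have h1ε : (0:ℝ) < 1 - ε := by linarith
  set H : ℝ := -ε * Real.log ε - (1 - ε) * Real.log (1 - ε) with hHdef
  set X : ℝ := (H + (N : ℝ)⁻¹ * Real.log (1 / δ)) / (1 - ε) with hXdef
  set G : ℝ := 1 + Real.exp X with hGdef
  set R : ℝ := Real.sqrt (2 * Real.log G) with hRdef
  -- basic positivity facts
  have hlε : Real.log ε < 0 := Real.log_neg hε0 hε1
  have hl1ε : Real.log (1 - ε) < 0 := Real.log_neg h1ε (by linarith)
  have hc0 : 0 < (N : ℝ)⁻¹ * Real.log (1 / δ) := by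
    apply mul_pos
    · have : (0:ℝ) < N := by exact_mod_cast hN
      positivity
    · rw [one_div]
      exact Real.log_pos ((one_lt_inv₀ hδ0).mpr hδ1)
  have hH0 : 0 < H := by
    rw [hHdef]; nlinarith
  have hX0 : 0 < X := by
    rw [hXdef]; positivity
  have hG1 : (1:ℝ) < G := by
    rw [hGdef]; linarith [Real.exp_pos X]
  have hG0 : (0:ℝ) < G := by linarith
  have hLG0 : 0 < Real.log G := Real.log_pos hG1
  have hR0 : 0 < R := by rw [hRdef]; positivity
  have hR2 : R ^ 2 = 2 * Real.log G := by
    rw [hRdef]; exact Real.sq_sqrt (by linarith)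
  -- two distinct labels
  have hk0 : (0:ℕ) < L := by omega
  have hk1 : (1:ℕ) < L := by omega
  set l0 : Fin L → Fin L := fun k => if k = ⟨0, hk0⟩ then ⟨1, hk1⟩ else ⟨0, hk0⟩ with hl0def
  have hl0 : ∀ k, k ≠ l0 k := by
    intro k
    simp only [hl0def]
    by_cases hk : k = ⟨0, hk0⟩
    · rw [if_pos hk, hk]
      intro hcon
      have := Fin.mk.inj_iff.mp hcon
      omega
    · rw [if_neg hk]
      exact hk
  -- the D quantities
  set D : Fin M → ℝ := fun i => sSup {x : ℝ | ∃ k l h : Fin L, k ≠ l ∧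
    x = |f i k h.succ - f i l h.succ|} with hDdef
  have hSfin : ∀ i, Set.Finite {x : ℝ | ∃ k l h : Fin L, k ≠ l ∧
      x = |f i k h.succ - f i l h.succ|} := by
    intro i
    apply Set.Finite.subset (Set.finite_range
      (fun t : Fin L × Fin L × Fin L => |f i t.1 t.2.2.succ - f i t.2.1 t.2.2.succ|))
    rintro x ⟨k, l, h, -, rfl⟩
    exact ⟨(k, l, h), rfl⟩
  have hne01 : (⟨0, hk0⟩ : Fin L) ≠ ⟨1, hk1⟩ := by
    intro hcon; have := Fin.mk.inj_iff.mp hcon; omega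
  have hSmem : ∀ i, |f i ⟨0, hk0⟩ (⟨0, hk0⟩ : Fin L).succ - f i ⟨1, hk1⟩ (⟨0, hk0⟩ : Fin L).succ|
      ∈ {x : ℝ | ∃ k l h : Fin L, k ≠ l ∧ x = |f i k h.succ - f i l h.succ|} := by
    intro i
    exact ⟨⟨0, hk0⟩, ⟨1, hk1⟩, ⟨0, hk0⟩, hne01, rfl⟩
  have hD0 : ∀ i, 0 ≤ D i := by
    intro i
    exact le_trans (abs_nonneg _) (le_csSup (hSfin i).bddAbove (hSmem i))
  have hDle : ∀ (i : Fin M) (k l : Fin L), k ≠ l → ∀ h : Fin L,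
      |f i k h.succ - f i l h.succ| ≤ D i := by
    intro i k l hkl h
    exact le_csSup (hSfin i).bddAbove ⟨k, l, h, hkl, rfl⟩
  have hgD : ∀ (i : Fin M) (k l : Fin L), k ≠ l → ∀ h : Fin (L+1),
      |f i k h - f i l h| ≤ D i := by
    intro i k l hkl h
    rcases h.eq_zero_or_eq_succ with rfl | ⟨h', rfl⟩
    · rw [hf0 i k l, sub_self, abs_zero]; exact hD0 i
    · exact hDle i k l hkl h'
  have hnb : CrowdDS.nbar f = Real.sqrt (∑ i, D i ^ 2) := rfl
  -- degenerate case: nbar = 0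
  rcases eq_or_lt_of_le (Finset.sum_nonneg (fun i _ => sq_nonneg (D i))) with hdeg | hnbpos
  · exfalso
    have hnb0 : CrowdDS.nbar f = 0 := by
      rw [hnb, ← hdeg, Real.sqrt_zero]
    have htm : ∀ j, CrowdDS.tauMax f a q p j = 0 := by
      intro j
      have hset : {x : ℝ | ∃ k l : Fin L, k ≠ l ∧
          x = CrowdDS.gap f a q p j k l / CrowdDS.nbar f} = {(0:ℝ)} := by
        ext x
        constructor
        · rintro ⟨k, l, hkl, rfl⟩
          rw [hnb0, div_zero]; rfl
        · rintro rfl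
          exact ⟨⟨0, hk0⟩, ⟨1, hk1⟩, hne01, by rw [hnb0, div_zero]⟩
      rw [CrowdDS.tauMax, hset, csSup_singleton]
    have httil : CrowdDS.ttil f a q p = 0 := by
      have hset : {x : ℝ | ∃ j : Fin N, x = CrowdDS.tauMax f a q p j} = {(0:ℝ)} := by
        ext x
        constructor
        · rintro ⟨j, rfl⟩; rw [htm j]; rfl
        · rintro rfl; exact ⟨⟨0, hN⟩, (htm _).symm⟩
      rw [CrowdDS.ttil, hset, csSup_singleton]
    rw [httil] at ht
    linarith
  -- main case
  have hnbarpos : 0 < CrowdDS.nbar f := by rw [hnb]; positivity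
  -- gap bounds
  have hgaple : ∀ (j : Fin N) (k l : Fin L), k ≠ l →
      CrowdDS.gap f a q p j k l / CrowdDS.nbar f ≤ CrowdDS.ttil f a q p := by
    intro j k l hkl
    have h1 : CrowdDS.gap f a q p j k l / CrowdDS.nbar f ≤ CrowdDS.tauMax f a q p j := by
      apply le_csSup
      · apply Set.Finite.bddAbove
        apply Set.Finite.subset (Set.finite_range
          (fun kl : Fin L × Fin L => CrowdDS.gap f a q p j kl.1 kl.2 / CrowdDS.nbar f))
        rintro x ⟨k', l', _, rfl⟩
        exact ⟨(k', l'), rfl⟩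
      · exact ⟨k, l, hkl, rfl⟩
    refine le_trans h1 (le_csSup ?_ ⟨j, rfl⟩)
    apply Set.Finite.bddAbove
    apply Set.Finite.subset (Set.finite_range (fun j' : Fin N => CrowdDS.tauMax f a q p j'))
    rintro x ⟨j', rfl⟩
    exact ⟨j', rfl⟩
  have hgapbound : ∀ (j : Fin N) (k : Fin L),
      CrowdDS.gap f a q p j k (l0 k) ≤ -(Real.sqrt (∑ i, D i ^ 2) * R) := by
    intro j k
    have h2 := le_trans (hgaple j k (l0 k) (hl0 k)) ht
    rw [div_le_iff₀ hnbarpos] at h2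
    calc CrowdDS.gap f a q p j k (l0 k) ≤ -R * CrowdDS.nbar f := h2
      _ = -(Real.sqrt (∑ i, D i ^ 2) * R) := by rw [hnb]; ring
  -- condLaw facts
  have hcl0 : ∀ i j k, CrowdDS.condLaw q p i j k 0 = 1 - q i j := by
    intro i j k; simp [CrowdDS.condLaw]
  have hcls : ∀ i j k (h' : Fin L), CrowdDS.condLaw q p i j k h'.succ = q i j * p i k h' := by
    intro i j k h'
    rw [CrowdDS.condLaw, dif_neg (Fin.succ_ne_zero h'), Fin.pred_succ]
  have hclnn : ∀ i j k (h : Fin (L+1)), 0 ≤ CrowdDS.condLaw q p i j k h := by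
    intro i j k h
    rcases h.eq_zero_or_eq_succ with rfl | ⟨h', rfl⟩
    · rw [hcl0]; linarith [hq1 i j]
    · rw [hcls]; exact mul_nonneg (hq0 i j) (hp0 i k h')
  have hclsum : ∀ i j k, ∑ h : Fin (L+1), CrowdDS.condLaw q p i j k h = 1 := by
    intro i j k
    rw [Fin.sum_univ_succ, hcl0]
    simp_rw [hcls]
    rw [← Finset.mul_sum, hp1 i k]
    ring
  -- stage 1
  have stage1 : ∀ (j : Fin N) (k : Fin L),
      ∑ h ∈ Finset.univ.filter (fun h : Fin M → Fin (L+1) =>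
          0 ≤ (∑ i, (f i k (h i) - f i (l0 k) (h i))) + (a k - a (l0 k))),
        ∏ i, CrowdDS.condLaw q p i j k (h i) ≤ G⁻¹ := by
    intro j k
    have hmean : (∑ i, ∑ h : Fin (L+1), CrowdDS.condLaw q p i j k h * (f i k h - f i (l0 k) h))
        + (a k - a (l0 k)) = CrowdDS.gap f a q p j k (l0 k) := by
      rw [CrowdDS.gap]
      congr 1
      apply Finset.sum_congr rfl
      intro i _
      rw [Fin.sum_univ_succ, hcl0, hf0 i k (l0 k), sub_self, mul_zero, zero_add]
      apply Finset.sum_congr rfl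
      intro h' _
      rw [hcls]
      ring
    have hcc := crowd_cube (M := M) (ι := Fin (L+1))
      (fun i h => CrowdDS.condLaw q p i j k h)
      (fun i h => f i k h - f i (l0 k) h) D (a k - a (l0 k)) R
      (fun i h => hclnn i j k h) (fun i => hclsum i j k)
      (fun i h => hgD i k (l0 k) (hl0 k) h) hR0.le hnbpos
      (by rw [hmean]; exact hgapbound j k)
    refine le_trans hcc (le_of_eq ?_)
    rw [hR2]
    rw [show -(2 * Real.log G) / 2 = -Real.log G by ring]
    rw [Real.exp_neg, Real.exp_log hG0]
  -- sum of priors is 1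
  have hprisum : ∑ k, pri k = 1 := by
    have hU : (Set.univ : Set Ω) = ⋃ k ∈ (Finset.univ : Finset (Fin L)), {ω | y ⟨0, hN⟩ ω = k} := by
      ext ω
      simp
    have hdisj : (↑(Finset.univ : Finset (Fin L)) : Set (Fin L)).PairwiseDisjoint
        (fun k => {ω | y ⟨0, hN⟩ ω = k}) := by
      intro k _ k' _ hne
      apply Set.disjoint_left.mpr
      intro ω h1 h2
      exact hne (h1.symm.trans h2)
    have hMe : ∀ k ∈ (Finset.univ : Finset (Fin L)), MeasurableSet {ω | y ⟨0, hN⟩ ω = k} := by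
      intro k _
      exact (hym _) (measurableSet_singleton k)
    have := measure_biUnion_finset (μ := μ) hdisj hMe
    rw [← hU] at this
    have h2 : (μ Set.univ).toReal = ∑ k, (μ {ω | y ⟨0, hN⟩ ω = k}).toReal := by
      rw [this, ENNReal.toReal_sum (fun k _ => measure_ne_top μ _)]
    rw [measure_univ, ENNReal.toReal_one] at h2
    calc ∑ k, pri k = ∑ k, (μ {ω | y ⟨0, hN⟩ ω = k}).toReal :=
          Finset.sum_congr rfl fun k _ => (hprior ⟨0, hN⟩ k).symm
      _ = 1 := h2.symm
  -- the events B j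
  set Bs : Set (Fin L × (Fin M → Fin (L+1))) := {v | 0 ≤ (∑ i, (f i v.1 (v.2 i) - f i (l0 v.1) (v.2 i)))
      + (a v.1 - a (l0 v.1))} with hBsdef
  have hBsM : MeasurableSet Bs := (Set.toFinite Bs).measurableSet
  set B : Fin N → Set Ω := fun j => (fun ω => (y j ω, fun i => Z i j ω)) ⁻¹' Bs with hBdef
  have cellM : ∀ (j : Fin N) (k : Fin L) (h : Fin M → Fin (L+1)),
      MeasurableSet {ω | y j ω = k ∧ ∀ i, Z i j ω = h i} := by
    intro j k h
    have : {ω | y j ω = k ∧ ∀ i, Z i j ω = h i}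
        = (y j)⁻¹' {k} ∩ ⋂ i, (Z i j)⁻¹' {h i} := by
      ext ω
      simp [Set.mem_iInter]
    rw [this]
    exact ((hym j) (measurableSet_singleton k)).inter
      (MeasurableSet.iInter fun i => (hZm i j) (measurableSet_singleton _))
  -- bound on μ (B j)
  have hBj : ∀ j, (μ (B j)).toReal ≤ G⁻¹ := by
    intro j
    set P : Fin L → Finset (Fin M → Fin (L+1)) := fun k =>
      Finset.univ.filter (fun h : Fin M → Fin (L+1) =>
        0 ≤ (∑ i, (f i k (h i) - f i (l0 k) (h i))) + (a k - a (l0 k))) with hPdef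
    have hBU : B j = ⋃ k ∈ (Finset.univ : Finset (Fin L)), ⋃ h ∈ P k,
        {ω | y j ω = k ∧ ∀ i, Z i j ω = h i} := by
      ext ω
      constructor
      · intro hω
        have hω' : (0:ℝ) ≤ (∑ i, (f i (y j ω) (Z i j ω) - f i (l0 (y j ω)) (Z i j ω)))
            + (a (y j ω) - a (l0 (y j ω))) := hω
        refine Set.mem_biUnion (Finset.mem_univ (y j ω)) ?_
        refine Set.mem_biUnion (show (fun i => Z i j ω) ∈ P (y j ω) from ?_)
          (⟨rfl, fun i => rfl⟩ : ω ∈ {ω' | y j ω' = y j ω ∧ ∀ i, Z i j ω' = Z i j ω})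
        rw [hPdef, Finset.mem_filter]
        exact ⟨Finset.mem_univ _, hω'⟩
      · intro hω
        rcases Set.mem_iUnion₂.mp hω with ⟨k, -, hω2⟩
        rcases Set.mem_iUnion₂.mp hω2 with ⟨h, hhP, hcell⟩
        obtain ⟨hyk, hZh⟩ := hcell
        rw [hPdef, Finset.mem_filter] at hhP
        subst hyk
        show (0:ℝ) ≤ (∑ i, (f i (y j ω) (Z i j ω) - f i (l0 (y j ω)) (Z i j ω)))
            + (a (y j ω) - a (l0 (y j ω)))
        have hcond := hhP.2
        simp only [← hZh] at hcond
        exact hcond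
    have houter : (μ (B j)).toReal = ∑ k, (μ (⋃ h ∈ P k,
        {ω | y j ω = k ∧ ∀ i, Z i j ω = h i})).toReal := by
      rw [hBU, measure_biUnion_finset ?hd ?hm, ENNReal.toReal_sum (fun k _ => measure_ne_top μ _)]
      case hd =>
        intro k _ k' _ hne
        apply Set.disjoint_left.mpr
        intro ω h1 h2
        simp only [Set.mem_iUnion] at h1 h2
        obtain ⟨_, _, hy1, -⟩ := h1
        obtain ⟨_, _, hy2, -⟩ := h2
        exact hne (hy1.symm.trans hy2)
      case hm =>
        intro k _
        exact MeasurableSet.biUnion (Finset.countable_toSet _) (fun h _ => cellM j k h)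
    have hinner : ∀ k, (μ (⋃ h ∈ P k, {ω | y j ω = k ∧ ∀ i, Z i j ω = h i})).toReal
        = pri k * ∑ h ∈ P k, ∏ i, CrowdDS.condLaw q p i j k (h i) := by
      intro k
      rw [measure_biUnion_finset ?hd2 ?hm2, ENNReal.toReal_sum (fun h _ => measure_ne_top μ _)]
      · rw [Finset.mul_sum]
        apply Finset.sum_congr rfl
        intro h _
        exact hlaw j k h
      case hd2 =>
        intro h _ h' _ hne
        apply Set.disjoint_left.mpr
        intro ω h1 h2
        exact hne (funext fun i => (h1.2 i).symm.trans (h2.2 i))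
      case hm2 =>
        intro h _
        exact cellM j k h
    rw [houter]
    calc ∑ k, (μ (⋃ h ∈ P k, {ω | y j ω = k ∧ ∀ i, Z i j ω = h i})).toReal
        = ∑ k, pri k * ∑ h ∈ P k, ∏ i, CrowdDS.condLaw q p i j k (h i) := by
          exact Finset.sum_congr rfl (fun k _ => hinner k)
      _ ≤ ∑ k, pri k * G⁻¹ := by
          apply Finset.sum_le_sum
          intro k _
          exact mul_le_mul_of_nonneg_left (stage1 j k) (hpri k)
      _ = G⁻¹ := by rw [← Finset.sum_mul, hprisum, one_mul]
  -- independence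
  have hindT : ∀ T : Finset (Fin N), μ (⋂ j ∈ T, B j) = ∏ j ∈ T, μ (B j) := by
    intro T
    exact (iIndepFun_iff_measure_inter_preimage_eq_mul.mp hindep) T
      (sets := fun _ => Bs) (fun i _ => hBsM)
  -- the union bound
  set m : ℕ := Nat.floor ((1 - ε) * N) + 1 with hmdef
  have hmgt : (1 - ε) * N < m := by
    rw [hmdef]
    push_cast
    exact Nat.lt_floor_add_one _
  set E : Set Ω := {ω | CrowdDS.errRate y yhat ω < ε} with hEdef
  have hsub : E ⊆ ⋃ T ∈ Finset.powersetCard m (Finset.univ : Finset (Fin N)), ⋂ j ∈ T, B j := by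
    intro ω hω
    set Corr : Finset (Fin N) := Finset.univ.filter (fun j => yhat j ω = y j ω) with hCdef
    have hcard : (1 - ε) * N < Corr.card := by
      have herr : CrowdDS.errRate y yhat ω < ε := hω
      rw [CrowdDS.errRate] at herr
      have hsum : ∑ j, (if yhat j ω ≠ y j ω then (1:ℝ) else 0)
          = ((Finset.univ.filter (fun j => ¬ (yhat j ω = y j ω))).card : ℝ) := by
        rw [Finset.sum_boole]
      have hcc : (Finset.univ.filter (fun j => ¬ (yhat j ω = y j ω))).card
          = N - Corr.card := by
        rw [Finset.filter_not, Finset.card_sdiff_of_subset (Finset.filter_subset _ _),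
          Finset.card_univ, Fintype.card_fin, ← hCdef]
      have hcle : Corr.card ≤ N := by
        rw [hCdef]
        calc Corr.card ≤ (Finset.univ : Finset (Fin N)).card := Finset.card_filter_le _ _
          _ = N := by rw [Finset.card_univ, Fintype.card_fin]
      rw [hsum, hcc] at herr
      have hNpos : (0:ℝ) < N := by exact_mod_cast hN
      rw [Nat.cast_sub hcle] at herr
      have := (inv_mul_lt_iff₀ hNpos).mp herr
      nlinarith
    have hmle : m ≤ Corr.card := by
      rw [hmdef]
      have h1 : (1 - ε) * N < (Corr.card : ℝ) := hcard
      have h2 : (0:ℝ) ≤ (1 - ε) * N := by positivity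
      have := (Nat.floor_lt h2).mpr h1
      omega
    obtain ⟨T, hTsub, hTcard⟩ := Finset.exists_subset_card_eq hmle
    apply Set.mem_biUnion (Finset.mem_powersetCard_univ.mpr hTcard)
    simp only [Set.mem_iInter]
    intro j hj
    have hjC : yhat j ω = y j ω := by
      have := hTsub hj
      rw [hCdef, Finset.mem_filter] at this
      exact this.2
    show (y j ω, fun i => Z i j ω) ∈ Bs
    rw [hBsdef]
    simp only [Set.mem_setOf_eq]
    have hle := hyhat j ω (l0 (y j ω))
    rw [hjC] at hle
    have hss : ∑ i, (f i (y j ω) (Z i j ω) - f i (l0 (y j ω)) (Z i j ω))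
        = (∑ i, f i (y j ω) (Z i j ω)) - ∑ i, f i (l0 (y j ω)) (Z i j ω) :=
      Finset.sum_sub_distrib _ _
    linarith
  -- measure bound
  have hmuE : μ E ≤ ENNReal.ofReal δ := by
    have hθ0 : (0:ℝ) ≤ G⁻¹ := by positivity
    have hBle : ∀ j, μ (B j) ≤ ENNReal.ofReal G⁻¹ := by
      intro j
      rw [← ENNReal.ofReal_toReal (measure_ne_top μ (B j))]
      exact ENNReal.ofReal_le_ofReal (hBj j)
    have step : μ E ≤ ∑ T ∈ Finset.powersetCard m (Finset.univ : Finset (Fin N)),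
        μ (⋂ j ∈ T, B j) :=
      le_trans (measure_mono hsub) (measure_biUnion_finset_le _ _)
    have step2 : ∀ T ∈ Finset.powersetCard m (Finset.univ : Finset (Fin N)),
        μ (⋂ j ∈ T, B j) ≤ ENNReal.ofReal G⁻¹ ^ m := by
      intro T hT
      rw [hindT T]
      have : ∏ j ∈ T, μ (B j) ≤ ∏ _j ∈ T, ENNReal.ofReal G⁻¹ :=
        Finset.prod_le_prod' (fun j _ => hBle j)
      rw [Finset.prod_const, Finset.mem_powersetCard_univ.mp hT] at this
      exact this
    have step3 : μ E ≤ (N.choose m : ℝ≥0∞) * ENNReal.ofReal G⁻¹ ^ m := by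
      refine le_trans step (le_trans (Finset.sum_le_sum step2) ?_)
      rw [Finset.sum_const, Finset.card_powersetCard, Finset.card_univ, Fintype.card_fin,
        nsmul_eq_mul]
    have step4 : (N.choose m : ℝ≥0∞) * ENNReal.ofReal G⁻¹ ^ m
        = ENNReal.ofReal ((N.choose m : ℝ) * G⁻¹ ^ m) := by
      rw [ENNReal.ofReal_mul (by positivity), ← ENNReal.ofReal_pow hθ0,
        ENNReal.ofReal_natCast]
    have step5 : (N.choose m : ℝ) * G⁻¹ ^ m ≤ δ := by
      by_cases hmN : m ≤ N
      · exact crowd_arith N m hmN hN hε0 hε1 hδ0 hδ1 (le_of_lt hmgt)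
      · rw [Nat.choose_eq_zero_of_lt (by omega)]
        push_cast
        rw [zero_mul]
        exact hδ0.le
    calc μ E ≤ ENNReal.ofReal ((N.choose m : ℝ) * G⁻¹ ^ m) := by rw [← step4]; exact step3
      _ ≤ ENNReal.ofReal δ := ENNReal.ofReal_le_ofReal step5
  -- conclude
  have hErm : Measurable (CrowdDS.errRate y yhat) := by
    apply Measurable.const_mul
    apply Finset.measurable_sum
    intro j _
    have hsm : MeasurableSet {ω | yhat j ω ≠ y j ω} := by
      have : {ω | yhat j ω ≠ y j ω}
          = (fun ω => (yhat j ω, y j ω)) ⁻¹' {v : Fin L × Fin L | v.1 ≠ v.2} := rfl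
      rw [this]
      exact ((hyhatm j).prodMk (hym j)) (Set.toFinite _).measurableSet
    exact Measurable.ite hsm measurable_const measurable_const
  have hEm : MeasurableSet E := measurableSet_lt hErm measurable_const
  have hcompl : {ω | ε ≤ CrowdDS.errRate y yhat ω} = Eᶜ := by
    ext ω
    simp only [hEdef, Set.mem_compl_iff, Set.mem_setOf_eq, not_lt]
  rw [hcompl, prob_compl_eq_one_sub hEm]
  have hEle : μ E ≤ 1 := prob_le_one
  rw [ENNReal.toReal_sub_of_le hEle ENNReal.one_ne_top, ENNReal.toReal_one]
  have : (μ E).toReal ≤ δ := ENNReal.toReal_le_of_le_ofReal hδ0.le hmuE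
  linarith
end
end
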